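/- arXiv:1408.5447 — 10 statements merged into one kernel-verified Lean document; each statement's English description precedes it below -/
import Mathlib

section
/- Let f be a Barenblatt profile with exponent α. Then the equation α·f(η) + η·f'(η) = 0 has a solution η > 0 if and only if α > N − 2. -/
set_option maxHeartbeats 1000000

open Set

lemma bp_hasDerivAt_v (α η : ℝ) (f f' : ℝ → ℝ) (hη : 0 < η)
    (hdf : HasDerivAt f (f' η) η) :
    HasDerivAt (fun x => x ^ α * f x) (η ^ (α-1) * (α * f η + η * f' η)) η := by
  have h1 : HasDerivAt (fun x : ℝ => x ^ α) (α * η ^ (α-1)) η :=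
    Real.hasDerivAt_rpow_const (Or.inl hη.ne')
  have h2 := h1.mul hdf
  convert h2 using 1
  · rfl
  · rfl
  · rfl
  have hs : η ^ α = η ^ (α-1) * η := by
    rw [← Real.rpow_add_one hη.ne' (α-1)]; ring_nf
  rw [hs]; ring

lemma bp_hasDerivAt_w (N : ℕ) (α k c η : ℝ) (f f' f'' : ℝ → ℝ)
    (hη : 0 < η) (hc : c = (N:ℝ) - 2 - α)
    (hdf : HasDerivAt f (f' η) η) (hdf' : HasDerivAt f' (f'' η) η)
    (hode : f'' η = -(((N:ℝ) - 1)/η) * f' η - k * (α * f η + η * f' η)) :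
    HasDerivAt (fun x => x ^ c * Real.exp (k*x^2/2) * (α * f x + x * f' x))
      (c * α * η ^ (c-1) * Real.exp (k*η^2/2) * f η) η := by
  have h1 : HasDerivAt (fun x : ℝ => x ^ c) (c * η ^ (c-1)) η :=
    Real.hasDerivAt_rpow_const (Or.inl hη.ne')
  have h2' : HasDerivAt (fun x : ℝ => k*x^2/2) (k*η) η := by
    have := ((hasDerivAt_pow 2 η).const_mul k).div_const 2
    convert this using 1
    · rfl
    · rfl
    simp; ring
  have h2 : HasDerivAt (fun x : ℝ => Real.exp (k*x^2/2)) (Real.exp (k*η^2/2) * (k*η)) η :=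
    h2'.exp
  have h3 : HasDerivAt (fun x : ℝ => α * f x + x * f' x)
      (α * f' η + (1 * f' η + η * f'' η)) η :=
    (hdf.const_mul α).add ((hasDerivAt_id η).mul hdf')
  have h4 := (h1.mul h2).mul h3
  convert h4 using 1
  · rfl
  · rfl
  · rfl
  have hs : η ^ c = η ^ (c-1) * η := by
    rw [← Real.rpow_add_one hη.ne' (c-1)]; ring_nf
  simp only [Pi.mul_apply]
  rw [hs, hode, hc]
  field_simp
  ring

/-- A Barenblatt profile with exponent `α` (dimension `N`, parameter `γ`). -/
def IsBarenblattProfile (N : ℕ) (γ α : ℝ) (f f' f'' : ℝ → ℝ) : Prop :=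
  (∀ η ∈ Set.Ici (0:ℝ), HasDerivWithinAt f (f' η) (Set.Ici 0) η) ∧
  ContinuousOn f' (Set.Ici 0) ∧
  (∀ η ∈ Set.Ioi (0:ℝ), HasDerivWithinAt f' (f'' η) (Set.Ioi 0) η) ∧
  f 0 = 1 ∧ f' 0 = 0 ∧
  (∀ η : ℝ, 0 < η →
    f'' η + (((N : ℝ) - 1) / η) * f' η =
      -(1/2) * (α * f η + η * f' η) + (γ/2) * |α * f η + η * f' η|)

theorem barenblatt_root_iff (N : ℕ) (hN : 1 ≤ N) (γ α : ℝ)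
    (hγ₁ : -1 < γ) (hγ₂ : γ < 1) (hα : 0 < α)
    (f f' f'' : ℝ → ℝ) (hf : IsBarenblattProfile N γ α f f' f'') :
    (∃ η : ℝ, 0 < η ∧ α * f η + η * f' η = 0) ↔ (N : ℝ) - 2 < α := by
  obtain ⟨hd1, hc2, hd3, hf0, hf'0, hode⟩ := hf
  set k : ℝ := (1-γ)/2 with hk_def
  have hk : 0 < k := by rw [hk_def]; linarith
  set F : ℝ → ℝ := fun η => α * f η + η * f' η with hF_def
  have hfc : ContinuousOn f (Set.Ici 0) := fun x hx => (hd1 x hx).continuousWithinAt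
  have hFc : ContinuousOn F (Set.Ici 0) := by
    rw [hF_def]
    exact (continuousOn_const.mul hfc).add (continuousOn_id.mul hc2)
  have hF0 : F 0 = α := by rw [hF_def]; simp [hf0, hf'0]
  have hdfa : ∀ η : ℝ, 0 < η → HasDerivAt f (f' η) η := fun η hη =>
    (hd1 η hη.le).hasDerivAt (Ici_mem_nhds hη)
  have hdf'a : ∀ η : ℝ, 0 < η → HasDerivAt f' (f'' η) η := fun η hη =>
    (hd3 η hη).hasDerivAt (Ioi_mem_nhds hη)
  have hode' : ∀ η : ℝ, 0 < η → 0 < F η →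
      f'' η = -(((N:ℝ)-1)/η) * f' η - k * (α * f η + η * f' η) := by
    intro η hη hFη
    have h := hode η hη
    have hFη' : 0 < α * f η + η * f' η := hFη
    rw [abs_of_pos hFη'] at h
    rw [hk_def]
    linarith
  -- positivity of F from absence of zeros below b
  have hFpos : ∀ b η : ℝ, (∀ x, 0 < x → x < b → F x ≠ 0) → 0 < η → η < b → 0 < F η := by
    intro b η hnz hη hηb
    rcases lt_trichotomy (F η) 0 with h|h|h
    · exfalso
      have hsub : Set.Icc (0:ℝ) η ⊆ Set.Ici 0 := fun x hx => hx.1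
      have hiv := intermediate_value_Ioo' hη.le (hFc.mono hsub)
      have h0mem : (0:ℝ) ∈ Set.Ioo (F η) (F 0) := ⟨h, by rw [hF0]; exact hα⟩
      obtain ⟨x, hx, hfx⟩ := hiv h0mem
      exact hnz x hx.1 (hx.2.trans hηb) hfx
    · exact absurd h (hnz η hη hηb)
    · exact h
  -- positivity of f from positivity of F
  have hfpos : ∀ b : ℝ, 0 < b → (∀ x, 0 < x → x < b → 0 < F x) →
      ∀ η, 0 < η → η < b → 0 < f η := by
    intro b hb hFp η hη hηb
    have hvc : ContinuousOn (fun x : ℝ => x ^ α * f x) (Set.Icc 0 b) :=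
      (continuousOn_id.rpow_const (fun x _ => Or.inr hα.le)).mul (hfc.mono (fun x hx => hx.1))
    have hmono : StrictMonoOn (fun x : ℝ => x ^ α * f x) (Set.Icc 0 b) := by
      apply strictMonoOn_of_deriv_pos (convex_Icc 0 b) hvc
      intro x hx
      rw [interior_Icc] at hx
      rw [(bp_hasDerivAt_v α x f f' hx.1 (hdfa x hx.1)).deriv]
      exact mul_pos (Real.rpow_pos_of_pos hx.1 _) (hFp x hx.1 hx.2)
    have h01 := hmono (Set.mem_Icc.mpr ⟨le_refl 0, hb.le⟩) (Set.mem_Icc.mpr ⟨hη.le, hηb.le⟩) hη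
    simp only [Real.zero_rpow hα.ne'] at h01
    nlinarith [Real.rpow_pos_of_pos hη α]
  constructor
  · -- root implies N - 2 < α
    rintro ⟨η₁, hη₁, hroot⟩
    by_contra hcon
    push_neg at hcon
    set Z : Set ℝ := Set.Icc 0 η₁ ∩ F ⁻¹' {0} with hZdef
    have hZc : IsClosed Z :=
      (hFc.mono (fun x hx => hx.1)).preimage_isClosed_of_isClosed isClosed_Icc isClosed_singleton
    have hZne : Z.Nonempty := ⟨η₁, ⟨⟨hη₁.le, le_refl _⟩, hroot⟩⟩
    have hbdd : BddBelow Z := ⟨0, fun x hx => hx.1.1⟩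
    set η₀ := sInf Z with hη₀def
    have hη₀Z : η₀ ∈ Z := hZc.csInf_mem hZne hbdd
    have hF₀ : F η₀ = 0 := hη₀Z.2
    have hη₀pos : 0 < η₀ := by
      rcases hη₀Z.1.1.lt_or_eq with h|h
      · exact h
      · exfalso; rw [← h, hF0] at hF₀; exact hα.ne' hF₀
    have hnz : ∀ x, 0 < x → x < η₀ → F x ≠ 0 := by
      intro x hx hxη hzero
      have hxZ : x ∈ Z := ⟨⟨hx.le, (hxη.trans_le hη₀Z.1.2).le⟩, hzero⟩
      exact absurd (csInf_le hbdd hxZ) (not_le.mpr hxη)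
    have hFp : ∀ x, 0 < x → x < η₀ → 0 < F x := fun x hx hxb => hFpos η₀ x hnz hx hxb
    set c := (N:ℝ) - 2 - α with hcdef
    have hc0 : 0 ≤ c := by rw [hcdef]; linarith
    set w : ℝ → ℝ := fun x => x ^ c * Real.exp (k*x^2/2) * F x with hwdef
    have ha0 : 0 < η₀/2 := half_pos hη₀pos
    have hwc : ContinuousOn w (Set.Icc (η₀/2) η₀) := by
      rw [hwdef]
      refine ContinuousOn.mul (ContinuousOn.mul ?_ ?_) (hFc.mono (fun x hx => le_trans ha0.le hx.1))
      · exact continuousOn_id.rpow_const (fun x hx => Or.inl (lt_of_lt_of_le ha0 hx.1).ne')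
      · exact (Real.continuous_exp.comp ((continuous_const.mul (continuous_pow 2)).div_const 2)).continuousOn
    have hwm : MonotoneOn w (Set.Icc (η₀/2) η₀) := by
      apply monotoneOn_of_deriv_nonneg (convex_Icc _ _) hwc
      · intro x hx
        rw [interior_Icc] at hx
        have hxpos : 0 < x := lt_trans ha0 hx.1
        exact ((bp_hasDerivAt_w N α k c x f f' f'' hxpos hcdef (hdfa x hxpos) (hdf'a x hxpos)
          (hode' x hxpos (hFp x hxpos hx.2))).differentiableAt).differentiableWithinAt
      · intro x hx
        rw [interior_Icc] at hx
        have hxpos : 0 < x := lt_trans ha0 hx.1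
        rw [(bp_hasDerivAt_w N α k c x f f' f'' hxpos hcdef (hdfa x hxpos) (hdf'a x hxpos)
          (hode' x hxpos (hFp x hxpos hx.2))).deriv]
        have hfp : 0 < f x := hfpos η₀ hη₀pos hFp x hxpos hx.2
        have := Real.rpow_pos_of_pos hxpos (c-1)
        have := Real.exp_pos (k*x^2/2)
        positivity
    have hle := hwm (Set.mem_Icc.mpr ⟨le_refl _, half_le_self hη₀pos.le⟩)
      (Set.mem_Icc.mpr ⟨half_le_self hη₀pos.le, le_refl _⟩) (half_le_self hη₀pos.le)
    have hw0 : w η₀ = 0 := by rw [hwdef]; simp [hF₀]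
    have hwa : 0 < w (η₀/2) := by
      rw [hwdef]
      exact mul_pos (mul_pos (Real.rpow_pos_of_pos ha0 c) (Real.exp_pos _))
        (hFp (η₀/2) ha0 (half_lt_self hη₀pos))
    rw [hw0] at hle
    linarith
  · -- N - 2 < α implies root
    intro hgt
    by_contra hno
    push_neg at hno
    have hFp : ∀ x : ℝ, 0 < x → 0 < F x := fun x hx =>
      hFpos (x+1) x (fun y hy _ => hno y hy) hx (lt_add_one x)
    have hfposa : ∀ x : ℝ, 0 < x → 0 < f x := fun x hx =>
      hfpos (x+1) (by linarith) (fun y hy _ => hFp y hy) x hx (lt_add_one x)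
    set c := (N:ℝ) - 2 - α with hcdef
    have hc0 : c < 0 := by rw [hcdef]; linarith
    have hf1 : 0 < f 1 := hfposa 1 one_pos
    have hvmono : ∀ x : ℝ, 1 ≤ x → f 1 ≤ x ^ α * f x := by
      intro x hx
      have hxpos : (0:ℝ) < x := lt_of_lt_of_le one_pos hx
      have hvc : ContinuousOn (fun y : ℝ => y ^ α * f y) (Set.Icc 0 x) :=
        (continuousOn_id.rpow_const (fun y _ => Or.inr hα.le)).mul (hfc.mono (fun y hy => hy.1))
      have hmono : MonotoneOn (fun y : ℝ => y ^ α * f y) (Set.Icc 0 x) := by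
        apply monotoneOn_of_deriv_nonneg (convex_Icc 0 x) hvc
        · intro y hy
          rw [interior_Icc] at hy
          exact (bp_hasDerivAt_v α y f f' hy.1 (hdfa y hy.1)).differentiableAt.differentiableWithinAt
        · intro y hy
          rw [interior_Icc] at hy
          rw [(bp_hasDerivAt_v α y f f' hy.1 (hdfa y hy.1)).deriv]
          exact le_of_lt (mul_pos (Real.rpow_pos_of_pos hy.1 _) (hFp y hy.1))
      have := hmono (Set.mem_Icc.mpr ⟨zero_le_one, hx⟩) (Set.mem_Icc.mpr ⟨hxpos.le, le_refl x⟩) hx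
      simpa [Real.one_rpow] using this
    set m := c - 1 - α with hmdef
    set R := max 1 (2*|m|/k) with hRdef
    have hR1 : (1:ℝ) ≤ R := le_max_left _ _
    have hgrow : ∀ x : ℝ, R ≤ x → 1 ≤ x ^ m * Real.exp (k*x^2/2) := by
      intro x hx
      have hx1 : (1:ℝ) ≤ x := le_trans hR1 hx
      have hxpos : (0:ℝ) < x := lt_of_lt_of_le one_pos hx1
      rw [Real.rpow_def_of_pos hxpos, ← Real.exp_add]
      apply Real.one_le_exp
      have hlog0 : 0 ≤ Real.log x := Real.log_nonneg hx1
      have hlogx : Real.log x ≤ x := (Real.log_le_sub_one_of_pos hxpos).trans (by linarith)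
      have h1 : -(|m| * x) ≤ Real.log x * m := by
        have hm : -|m| ≤ m := neg_abs_le m
        nlinarith [abs_nonneg m]
      have h2 : 2*|m|/k ≤ x := le_trans (le_max_right _ _) hx
      have h3 : 2*|m| ≤ k * x := by rw [div_le_iff₀ hk] at h2; linarith
      nlinarith
    set δ := -(c * α * f 1) with hδdef
    have hδpos : 0 < δ := by
      rw [hδdef]
      have := mul_neg_of_neg_of_pos (mul_neg_of_neg_of_pos hc0 hα) hf1
      linarith
    set w : ℝ → ℝ := fun x => x ^ c * Real.exp (k*x^2/2) * F x with hwdef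
    set W : ℝ → ℝ := fun x => w x + δ * x with hWdef
    set X := max R ((w R + δ*R)/δ + 1) with hXdef
    have hRX : R ≤ X := le_max_left _ _
    have hXpos : 0 < X := lt_of_lt_of_le (lt_of_lt_of_le one_pos hR1) hRX
    have hderivW : ∀ x : ℝ, 0 < x → HasDerivAt W
        (c * α * x ^ (c-1) * Real.exp (k*x^2/2) * f x + δ) x := by
      intro x hx
      have h1 := bp_hasDerivAt_w N α k c x f f' f'' hx hcdef (hdfa x hx) (hdf'a x hx)
        (hode' x hx (hFp x hx))
      have h2 : HasDerivAt (fun y : ℝ => δ * y) δ x := by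
        simpa using (hasDerivAt_id x).const_mul δ
      rw [hWdef, hwdef]
      exact h1.add h2
    have hanti : AntitoneOn W (Set.Icc R X) := by
      apply antitoneOn_of_deriv_nonpos (convex_Icc _ _)
      · intro x hx
        have hxpos : 0 < x := lt_of_lt_of_le (lt_of_lt_of_le one_pos hR1) hx.1
        exact (hderivW x hxpos).continuousAt.continuousWithinAt
      · intro x hx
        rw [interior_Icc] at hx
        have hxpos : 0 < x := lt_of_lt_of_le (lt_of_lt_of_le one_pos hR1) hx.1.le
        exact (hderivW x hxpos).differentiableAt.differentiableWithinAt
      · intro x hx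
        rw [interior_Icc] at hx
        have hx1 : (1:ℝ) ≤ x := le_trans hR1 hx.1.le
        have hxpos : (0:ℝ) < x := lt_of_lt_of_le one_pos hx1
        rw [(hderivW x hxpos).deriv]
        have hE : 0 < Real.exp (k*x^2/2) := Real.exp_pos _
        have hP : 0 < x ^ (c-1) := Real.rpow_pos_of_pos hxpos _
        have hfx : f 1 * x ^ (-α) ≤ f x := by
          have h := hvmono x hx1
          have hxa : x ^ (-α) * x ^ α = 1 := by
            rw [← Real.rpow_add hxpos]; simp
          have hPa : 0 < x ^ (-α) := Real.rpow_pos_of_pos hxpos _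
          have h2 := mul_le_mul_of_nonneg_left h hPa.le
          calc f 1 * x ^ (-α) = x ^ (-α) * f 1 := by ring
            _ ≤ x ^ (-α) * (x ^ α * f x) := h2
            _ = (x ^ (-α) * x ^ α) * f x := by ring
            _ = f x := by rw [hxa]; ring
        have hneg : c * α * x ^ (c-1) * Real.exp (k*x^2/2) < 0 := by
          have : c * α * x ^ (c-1) * Real.exp (k*x^2/2)
              = (c * α) * (x ^ (c-1) * Real.exp (k*x^2/2)) := by ring
          rw [this]
          exact mul_neg_of_neg_of_pos (mul_neg_of_neg_of_pos hc0 hα) (mul_pos hP hE)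
        have step1 : c * α * x ^ (c-1) * Real.exp (k*x^2/2) * f x ≤
            c * α * x ^ (c-1) * Real.exp (k*x^2/2) * (f 1 * x ^ (-α)) :=
          mul_le_mul_of_nonpos_left hfx hneg.le
        have hxm : x ^ (c-1) * x ^ (-α) = x ^ m := by
          rw [← Real.rpow_add hxpos, hmdef]; ring_nf
        have step2 : c * α * x ^ (c-1) * Real.exp (k*x^2/2) * (f 1 * x ^ (-α)) =
            c * α * f 1 * (x ^ m * Real.exp (k*x^2/2)) := by
          rw [← hxm]; ring
        have step3 : c * α * f 1 * (x ^ m * Real.exp (k*x^2/2)) ≤ c * α * f 1 := by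
          have hg := hgrow x hx.1.le
          have ha : c * α * f 1 < 0 := mul_neg_of_neg_of_pos (mul_neg_of_neg_of_pos hc0 hα) hf1
          have h := mul_le_mul_of_nonpos_left hg ha.le
          linarith
        have : c * α * x ^ (c-1) * Real.exp (k*x^2/2) * f x ≤ -δ := by
          rw [hδdef]; rw [step2] at step1; linarith
        linarith
    have hle := hanti (Set.mem_Icc.mpr ⟨le_refl _, hRX⟩) (Set.mem_Icc.mpr ⟨hRX, le_refl _⟩) hRX
    have hwXpos : 0 < w X := by
      rw [hwdef]
      exact mul_pos (mul_pos (Real.rpow_pos_of_pos hXpos c) (Real.exp_pos _)) (hFp X hXpos)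
    have hX2 : (w R + δ*R)/δ + 1 ≤ X := le_max_right _ _
    have hX3 : w R + δ*R ≤ δ*(X - 1) := by
      have h' : (w R + δ*R)/δ ≤ X - 1 := by linarith
      have h2 := (div_le_iff₀ hδpos).mp h'
      linarith
    have hWX : W X ≤ W R := hle
    rw [hWdef] at hWX
    simp only at hWX
    linarith
end

section
/- Let N ≥ 1 be an integer, −1 < γ < 1, α > 0, and let f : (0,∞) → ℝ be twice differentiable with f''(η) + ((N−1)/η)·f'(η) = −(1/2)·(α·f(η) + η·f'(η)) + (γ/2)·|α·f(η) + η·f'(η)| for all η > 0. Define u : ℝ^N × (0,∞) → ℝ by u(x,t) = t^{−α/2}·f(‖x‖/√t). Then for every t > 0 and every x ∈ ℝ^N with x ≠ 0, u is differentiable in t and twice differentiable in x at (x,t), and ∂u/∂t(x,t) + γ·|∂u/∂t(x,t)| = Δu(x,t), where Δu denotes the Laplacian in the space variable x, i.e. the sum of the N second partial derivatives ∑_{i=1}^N ∂²u/∂x_i². -/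
open Real Filter
variable {F : Type*} [NormedAddCommGroup F] [InnerProductSpace ℝ F]

lemma aux_hasFDerivAt_norm (y : F) (hy : y ≠ 0) :
    HasFDerivAt (fun z : F => ‖z‖) (‖y‖⁻¹ • innerSL ℝ y) y := by
  have hn : (0:ℝ) < ‖y‖ := norm_pos_iff.mpr hy
  have h1 : HasFDerivAt (fun z : F => ‖z‖ ^ 2) (2 • innerSL ℝ y) y :=
    (hasStrictFDerivAt_norm_sq y).hasFDerivAt
  have h2 : HasDerivAt Real.sqrt (1 / (2 * Real.sqrt (‖y‖ ^ 2))) (‖y‖ ^ 2) :=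
    Real.hasDerivAt_sqrt (by positivity)
  have h3 := h2.comp_hasFDerivAt y h1
  have hfun : (Real.sqrt ∘ fun z : F => ‖z‖ ^ 2) = fun z : F => ‖z‖ := by
    funext z; simp [Function.comp, Real.sqrt_sq (norm_nonneg z)]
  rw [hfun] at h3
  refine h3.congr_fderiv ?_
  rw [Real.sqrt_sq (norm_nonneg y)]
  ext w
  simp [smul_smul]
  field_simp

lemma aux_hasFDerivAt_g (f : ℝ → ℝ) (c b : ℝ) (y : F) (hy : y ≠ 0)
    (hd : DifferentiableAt ℝ f (b * ‖y‖)) :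
    HasFDerivAt (fun z : F => c * f (b * ‖z‖))
      ((c * deriv f (b * ‖y‖) * b * ‖y‖⁻¹) • innerSL ℝ y) y := by
  have h1 := (aux_hasFDerivAt_norm y hy).const_mul b
  have h2 := (hd.hasDerivAt.comp_hasFDerivAt y h1).const_mul c
  refine h2.congr_fderiv ?_
  ext w
  simp [smul_smul]
  exact Or.inl (by ring)

lemma aux_key1 (f : ℝ → ℝ)
    (h1 : ∀ η : ℝ, 0 < η → DifferentiableAt ℝ f η)
    (h2 : ∀ η : ℝ, 0 < η → DifferentiableAt ℝ (deriv f) η)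
    (c b A B : ℝ) (hb : 0 < b) (hA : 0 < A) :
    iteratedDeriv 2 (fun s : ℝ => c * f (b * Real.sqrt (A + B * s + s ^ 2))) 0 =
      c * (deriv (deriv f) (b * Real.sqrt A) * (b ^ 2 * B ^ 2 / (4 * A))
        + deriv f (b * Real.sqrt A) * (b / Real.sqrt A - b * B ^ 2 / (4 * A * Real.sqrt A))) := by
  set p : ℝ → ℝ := fun s => A + B * s + s ^ 2 with hp
  have hpd : ∀ s : ℝ, HasDerivAt p (B + 2 * s) s := by
    intro s
    have : HasDerivAt (fun s : ℝ => A + B * s + s ^ 2) (0 + B * 1 + 2 * s ^ 1) s :=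
      (((hasDerivAt_const s A).add ((hasDerivAt_id s).const_mul B)).add (hasDerivAt_pow 2 s))
    simpa using this
  have hsA : (0:ℝ) < Real.sqrt A := Real.sqrt_pos.mpr hA
  -- derivative of h on {p > 0}
  set G : ℝ → ℝ := fun s => c * (deriv f (b * Real.sqrt (p s)) * (b * ((B + 2 * s) / (2 * Real.sqrt (p s))))) with hG
  have hwpos : ∀ s : ℝ, 0 < p s → 0 < b * Real.sqrt (p s) := fun s hs =>
    mul_pos hb (Real.sqrt_pos.mpr hs)
  have hw : ∀ s : ℝ, 0 < p s →
      HasDerivAt (fun s => b * Real.sqrt (p s)) (b * ((B + 2 * s) / (2 * Real.sqrt (p s)))) s := by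
    intro s hs
    have hsq : HasDerivAt Real.sqrt (1 / (2 * Real.sqrt (p s))) (p s) := Real.hasDerivAt_sqrt hs.ne'
    have := (hsq.comp s (hpd s)).const_mul b
    refine this.congr_deriv ?_
    ring
  have hGd : ∀ s : ℝ, 0 < p s →
      HasDerivAt (fun s => c * f (b * Real.sqrt (p s))) (G s) s := by
    intro s hs
    exact (((h1 _ (hwpos s hs)).hasDerivAt.comp s (hw s hs)).const_mul c)
  have hp0 : p 0 = A := by simp [hp]
  have hev : ∀ᶠ s in nhds (0:ℝ), 0 < p s := by
    have hc : ContinuousAt p 0 := (hpd 0).continuousAt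
    have := hc.eventually_mem (isOpen_Ioi.mem_nhds (by rw [hp0]; exact hA))
    simpa using this
  have hdev : deriv (fun s => c * f (b * Real.sqrt (p s))) =ᶠ[nhds (0:ℝ)] G :=
    hev.mono fun s hs => (hGd s hs).deriv
  -- now compute deriv G 0
  have hA0 : 0 < p 0 := by rw [hp0]; exact hA
  have hw0 : HasDerivAt (fun s => b * Real.sqrt (p s)) (b * (B / (2 * Real.sqrt A))) 0 := by
    have := hw 0 hA0
    simpa [hp0] using this
  have hfw : HasDerivAt (fun s => deriv f (b * Real.sqrt (p s)))
      (deriv (deriv f) (b * Real.sqrt A) * (b * (B / (2 * Real.sqrt A)))) 0 := by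
    have := (h2 _ (hwpos 0 hA0)).hasDerivAt.comp 0 hw0
    rw [hp0] at this
    exact this
  have hr : HasDerivAt (fun s => b * ((B + 2 * s) / (2 * Real.sqrt (p s))))
      (b * ((2 * (2 * Real.sqrt A) - (B + 2 * 0) * (2 * (B / (2 * Real.sqrt A)))) / (2 * Real.sqrt A) ^ 2)) 0 := by
    have hn : HasDerivAt (fun s : ℝ => B + 2 * s) 2 0 := by
      exact (((hasDerivAt_id (0:ℝ)).const_mul 2).const_add B).congr_deriv (by ring)
    have hd : HasDerivAt (fun s => 2 * Real.sqrt (p s)) (2 * (B / (2 * Real.sqrt A))) 0 := by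
      have hsq : HasDerivAt Real.sqrt (1 / (2 * Real.sqrt (p 0))) (p 0) := Real.hasDerivAt_sqrt hA0.ne'
      have := ((hsq.comp 0 (hpd 0)).const_mul 2)
      refine this.congr_deriv ?_
      simp [hp0]; ring
    have hden : 2 * Real.sqrt (p 0) ≠ 0 := by rw [hp0]; positivity
    have := (hn.div hd hden).const_mul b
    simpa [hp0] using this
  have hG0 : HasDerivAt G
      (c * (deriv (deriv f) (b * Real.sqrt A) * (b * (B / (2 * Real.sqrt A))) * (b * ((B + 2 * 0) / (2 * Real.sqrt (p 0))))
        + deriv f (b * Real.sqrt (p 0)) * (b * ((2 * (2 * Real.sqrt A) - (B + 2 * 0) * (2 * (B / (2 * Real.sqrt A)))) / (2 * Real.sqrt A) ^ 2)))) 0 :=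
    (hfw.mul hr).const_mul c
  have hiter : iteratedDeriv 2 (fun s : ℝ => c * f (b * Real.sqrt (A + B * s + s ^ 2))) 0
      = deriv G 0 := by
    rw [show (2:ℕ) = 1 + 1 from rfl, iteratedDeriv_succ, iteratedDeriv_one]
    exact hdev.deriv_eq
  rw [hiter, hG0.deriv, hp0]
  set S := Real.sqrt A with hS
  have hA' : A = S ^ 2 := (Real.sq_sqrt hA.le).symm
  have hS0 : S ≠ 0 := hsA.ne'
  rw [hA']
  field_simp
  ring

lemma aux_time (f : ℝ → ℝ) (α R t : ℝ) (ht : 0 < t) (hR : 0 < R)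
    (hd : DifferentiableAt ℝ f (R / Real.sqrt t)) :
    HasDerivAt (fun s : ℝ => s ^ (-α/2 : ℝ) * f (R / Real.sqrt s))
      (t ^ (-α/2-1 : ℝ) * (-(1/2) * (α * f (R / Real.sqrt t)
        + (R / Real.sqrt t) * deriv f (R / Real.sqrt t)))) t := by
  have hst : (0:ℝ) < Real.sqrt t := Real.sqrt_pos.mpr ht
  have h1 : HasDerivAt (fun s : ℝ => s ^ (-α/2 : ℝ)) ((-α/2) * t ^ (-α/2-1 : ℝ)) t :=
    Real.hasDerivAt_rpow_const (Or.inl ht.ne')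
  have hsq : HasDerivAt Real.sqrt (1 / (2 * Real.sqrt t)) t := Real.hasDerivAt_sqrt ht.ne'
  have h2 : HasDerivAt (fun s : ℝ => R / Real.sqrt s)
      ((0 * Real.sqrt t - R * (1 / (2 * Real.sqrt t))) / Real.sqrt t ^ 2) t :=
    (hasDerivAt_const t R).div hsq hst.ne'
  have h3 := hd.hasDerivAt.comp t h2
  have htot := h1.mul h3
  refine htot.congr_deriv ?_
  have htt : Real.sqrt t ^ 2 = t := Real.sq_sqrt ht.le
  have hT : t ^ (-α/2 : ℝ) = t ^ (-α/2-1 : ℝ) * t := by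
    have h := Real.rpow_add ht (-α/2-1) 1
    rw [Real.rpow_one] at h
    rw [← h]
    norm_num
  rw [hT, htt]
  field_simp
  rw [Function.comp_apply]
  ring




/-- Substituting the self-similar ansatz `u(x,t) = t^(-α/2) f(‖x‖/√t)` into the
Barenblatt equation `u_t + γ|u_t| = Δu`: if the profile `f` is twice differentiable on
`(0,∞)` and satisfies the profile ODE, then for every `t > 0` and `x ≠ 0` the function
`u` is differentiable in `t`, twice differentiable in `x`, and solves the equation,
the Laplacian being the sum of the `N` second partial derivatives. -/
theorem barenblatt_selfsimilar_solves (N : ℕ) (hN : 1 ≤ N) (γ α : ℝ)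
    (hγ₁ : -1 < γ) (hγ₂ : γ < 1) (hα : 0 < α)
    (f : ℝ → ℝ)
    (hf : ∀ η : ℝ, 0 < η → DifferentiableAt ℝ f η ∧ DifferentiableAt ℝ (deriv f) η)
    (hode : ∀ η : ℝ, 0 < η →
      deriv (deriv f) η + (((N : ℝ) - 1) / η) * deriv f η =
        -(1/2) * (α * f η + η * deriv f η) + (γ/2) * |α * f η + η * deriv f η|)
    (u : EuclideanSpace ℝ (Fin N) → ℝ → ℝ)
    (hu : ∀ (y : EuclideanSpace ℝ (Fin N)) (s : ℝ),
      u y s = s ^ (-α/2 : ℝ) * f (‖y‖ / Real.sqrt s)) :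
    ∀ (x : EuclideanSpace ℝ (Fin N)) (t : ℝ), 0 < t → x ≠ 0 →
      DifferentiableAt ℝ (fun s : ℝ => u x s) t ∧
      DifferentiableAt ℝ (fun y => u y t) x ∧
      DifferentiableAt ℝ (fun y => fderiv ℝ (fun z => u z t) y) x ∧
      deriv (fun s : ℝ => u x s) t + γ * |deriv (fun s : ℝ => u x s) t| =
        ∑ i : Fin N, iteratedDeriv 2
          (fun s : ℝ => u (x + s • EuclideanSpace.single i (1 : ℝ)) t) 0 := by
  intro x t ht hx
  have hst : (0:ℝ) < Real.sqrt t := Real.sqrt_pos.mpr ht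
  set b : ℝ := (Real.sqrt t)⁻¹ with hbdef
  have hb : 0 < b := inv_pos.mpr hst
  set c : ℝ := t ^ (-α/2 : ℝ) with hcdef
  set R : ℝ := ‖x‖ with hRdef
  have hR : 0 < R := norm_pos_iff.mpr hx
  have hηpos : 0 < b * R := mul_pos hb hR
  have hdiv : ∀ r : ℝ, r / Real.sqrt t = b * r := fun r => div_eq_inv_mul r _
  have hηeq : ‖x‖ / Real.sqrt t = b * R := hdiv _
  -- time part
  have htfun : (fun s : ℝ => u x s) = fun s : ℝ => s ^ (-α/2 : ℝ) * f (‖x‖ / Real.sqrt s) :=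
    funext fun s => hu x s
  have hdη : DifferentiableAt ℝ f (‖x‖ / Real.sqrt t) := by rw [hηeq]; exact (hf _ hηpos).1
  have hdtime := aux_time f α ‖x‖ t ht hR hdη
  -- spatial function
  have hgeq : (fun z => u z t) = fun z => c * f (b * ‖z‖) := by
    funext z
    rw [hu, hdiv]
  have hdspace : DifferentiableAt ℝ (fun y => u y t) x := by
    rw [hgeq]
    exact (aux_hasFDerivAt_g f c b x hx ((hf _ hηpos).1)).differentiableAt
  refine ⟨htfun ▸ hdtime.differentiableAt, hdspace, ?_, ?_⟩
  · -- differentiability of the fderiv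
    have hevF : (fun y => fderiv ℝ (fun z => u z t) y) =ᶠ[nhds x]
        (fun y => (c * deriv f (b * ‖y‖) * b * ‖y‖⁻¹) • innerSL ℝ y) := by
      filter_upwards [isOpen_ne.mem_nhds hx] with y hy
      rw [hgeq]
      exact (aux_hasFDerivAt_g f c b y hy
        ((hf _ (mul_pos hb (norm_pos_iff.mpr hy))).1)).fderiv
    have hnorm : DifferentiableAt ℝ (fun y : EuclideanSpace ℝ (Fin N) => ‖y‖) x :=
      differentiableAt_id.norm ℝ hx
    have h1 : DifferentiableAt ℝ (fun y : EuclideanSpace ℝ (Fin N) => b * ‖y‖) x :=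
      hnorm.const_mul b
    have h2 : DifferentiableAt ℝ
        (fun y : EuclideanSpace ℝ (Fin N) => deriv f (b * ‖y‖)) x :=
      DifferentiableAt.comp (g := deriv f) x ((hf _ hηpos).2) h1
    have h3 : DifferentiableAt ℝ (fun y : EuclideanSpace ℝ (Fin N) => ‖y‖⁻¹) x :=
      hnorm.inv (norm_ne_zero_iff.mpr hx)
    have hscal : DifferentiableAt ℝ
        (fun y : EuclideanSpace ℝ (Fin N) => c * deriv f (b * ‖y‖) * b * ‖y‖⁻¹) x :=
      ((h2.const_mul c).mul_const b).mul h3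
    have hF : DifferentiableAt ℝ
        (fun y : EuclideanSpace ℝ (Fin N) =>
          (c * deriv f (b * ‖y‖) * b * ‖y‖⁻¹) • innerSL ℝ y) x :=
      hscal.smul (innerSL ℝ).differentiableAt
    exact hevF.differentiableAt_iff.mpr hF
  · -- the equation
    set D1 : ℝ := deriv f (b * R) with hD1
    set D2 : ℝ := deriv (deriv f) (b * R) with hD2
    set X : ℝ := α * f (b * R) + (b * R) * D1 with hX
    have hRR : Real.sqrt (R ^ 2) = R := Real.sqrt_sq hR.le
    have hA2 : (0:ℝ) < R ^ 2 := by positivity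
    have hsummand : ∀ i : Fin N,
        iteratedDeriv 2 (fun s : ℝ => u (x + s • EuclideanSpace.single i (1:ℝ)) t) 0
          = c * (D2 * (b ^ 2 * (2 * x i) ^ 2 / (4 * R ^ 2))
            + D1 * (b / R - b * (2 * x i) ^ 2 / (4 * R ^ 2 * R))) := by
      intro i
      have hfun : (fun s : ℝ => u (x + s • EuclideanSpace.single i (1:ℝ)) t)
          = fun s : ℝ => c * f (b * Real.sqrt (R ^ 2 + (2 * x i) * s + s ^ 2)) := by
        funext s
        rw [hu]
        have hnv : ‖x + s • EuclideanSpace.single i (1:ℝ)‖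
            = Real.sqrt (R ^ 2 + (2 * x i) * s + s ^ 2) := by
          rw [← Real.sqrt_sq (norm_nonneg (x + s • EuclideanSpace.single i (1:ℝ)))]
          congr 1
          rw [norm_add_sq_real, real_inner_smul_right, norm_smul]
          simp [EuclideanSpace.inner_single_right, EuclideanSpace.norm_single]
          ring
        rw [hnv, hdiv]
      rw [hfun, aux_key1 f (fun η hη => (hf η hη).1) (fun η hη => (hf η hη).2)
        c b (R ^ 2) (2 * x i) hb hA2, hRR]
    have hsumsq : ∑ i : Fin N, (x i) ^ 2 = R ^ 2 := by
      rw [hRdef, EuclideanSpace.norm_eq, Real.sq_sqrt (by positivity)]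
      simp [sq_abs]
    set K1 : ℝ := c * (D2 * b ^ 2 / R ^ 2 - D1 * b / R ^ 3) with hK1
    set K2 : ℝ := c * D1 * b / R with hK2
    have hterm : ∀ i : Fin N,
        c * (D2 * (b ^ 2 * (2 * x i) ^ 2 / (4 * R ^ 2))
          + D1 * (b / R - b * (2 * x i) ^ 2 / (4 * R ^ 2 * R)))
        = K1 * (x i) ^ 2 + K2 := by
      intro i
      rw [hK1, hK2]
      field_simp
      ring
    have hRHS : (∑ i : Fin N, iteratedDeriv 2
        (fun s : ℝ => u (x + s • EuclideanSpace.single i (1:ℝ)) t) 0)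
        = K1 * R ^ 2 + (N : ℝ) * K2 := by
      rw [Finset.sum_congr rfl fun i _ => (hsummand i).trans (hterm i)]
      rw [Finset.sum_add_distrib, ← Finset.mul_sum, hsumsq, Finset.sum_const,
        Finset.card_univ, Fintype.card_fin, nsmul_eq_mul]
    -- value of the time derivative
    have hdval : deriv (fun s : ℝ => u x s) t
        = t ^ (-α/2-1 : ℝ) * (-(1/2) * X) := by
      rw [htfun, hdtime.deriv, hηeq, hX, hD1]
    set T : ℝ := t ^ (-α/2-1 : ℝ) with hT
    have hTpos : 0 < T := Real.rpow_pos_of_pos ht _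
    have hTcb : T = c * b ^ 2 := by
      have hb2 : b ^ 2 = t⁻¹ := by
        rw [hbdef, inv_pow, Real.sq_sqrt ht.le]
      rw [hT, hcdef, show (-α/2-1:ℝ) = (-α/2) + (-1) by ring, Real.rpow_add ht,
        Real.rpow_neg_one, hb2]
    have habs : |T * (-(1/2) * X)| = T * ((1/2) * |X|) := by
      rw [abs_mul, abs_of_pos hTpos, abs_mul]
      norm_num
    rw [hdval, hRHS, habs]
    have hode' := hode (b * R) hηpos
    rw [← hD1, ← hD2, ← hX] at hode'
    have hfinal : K1 * R ^ 2 + (N : ℝ) * K2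
        = c * b ^ 2 * (D2 + (((N:ℝ) - 1) / (b * R)) * D1) := by
      rw [hK1, hK2]
      field_simp
      ring
    rw [hfinal, hode', ← hTcb]
    ring
end

section
/- Let N ≥ 1 be an integer, α ∈ ℝ, and κ > 0. Define f : [0,∞) → ℝ by f(η) = M(α/2, N/2; −κη²/2). Then f(0) = 1, f'(0) = 0, and for every η > 0: f''(η) + ((N−1)/η)·f'(η) = −κ·(α·f(η) + η·f'(η)). (Taking κ = (1−γ)/2 this exhibits the Kummer-series representation f₁(η) = M(α/2, N/2; −(1−γ)η²/4) of the solution of the first linear Cauchy problem arising from the Barenblatt profile equation.) -/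
open scoped Nat

namespace KummerAux



/-- coefficient of `η^(2k)` in `M(a,b; -κ η²/2)` -/
noncomputable def c (a b κ : ℝ) (k : ℕ) : ℝ :=
  (ascPochhammer ℝ k).eval a / (ascPochhammer ℝ k).eval b * (-κ/2)^k / (Nat.factorial k)

lemma poch_abs_le (a : ℝ) : ∀ k : ℕ, |(ascPochhammer ℝ k).eval a| ≤ (1+|a|)^k * (k ! : ℝ) := by
  intro k
  induction k with
  | zero => simp
  | succ k ih =>
    rw [ascPochhammer_succ_eval, abs_mul]
    have h1 : |a + (k:ℝ)| ≤ (1+|a|) * ((k:ℝ)+1) := by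
      have := abs_add_le a (k:ℝ)
      have hk : |(k:ℝ)| = (k:ℝ) := abs_of_nonneg (Nat.cast_nonneg k)
      have ha : 0 ≤ |a| := abs_nonneg a
      nlinarith [Nat.cast_nonneg (α := ℝ) k]
    calc |(ascPochhammer ℝ k).eval a| * |a + (k:ℝ)|
        ≤ ((1+|a|)^k * (k ! : ℝ)) * ((1+|a|) * ((k:ℝ)+1)) := by
          apply mul_le_mul ih h1 (abs_nonneg _)
          positivity
      _ = (1+|a|)^(k+1) * ((k+1)! : ℝ) := by
          rw [Nat.factorial_succ, pow_succ]; push_cast; ring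

lemma poch_ge (b : ℝ) (hb : 0 < b) :
    ∀ k : ℕ, (min 1 b)^k * (k ! : ℝ) ≤ (ascPochhammer ℝ k).eval b := by
  intro k
  have hm : 0 < min 1 b := lt_min one_pos hb
  have hm1 : min 1 b ≤ 1 := min_le_left _ _
  have hmb : min 1 b ≤ b := min_le_right _ _
  induction k with
  | zero => simp
  | succ k ih =>
    rw [ascPochhammer_succ_eval]
    have h2 : (min 1 b) * ((k:ℝ)+1) ≤ b + (k:ℝ) := by
      nlinarith [Nat.cast_nonneg (α := ℝ) k]
    calc (min 1 b)^(k+1) * ((k+1)! : ℝ)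
        = ((min 1 b)^k * (k ! : ℝ)) * ((min 1 b) * ((k:ℝ)+1)) := by
          rw [Nat.factorial_succ, pow_succ]; push_cast; ring
      _ ≤ (ascPochhammer ℝ k).eval b * (b + (k:ℝ)) := by
          exact mul_le_mul ih h2 (by positivity) (ascPochhammer_pos k b hb).le

lemma c_abs_le (a b κ : ℝ) (hb : 0 < b) (hκ : 0 < κ) (k : ℕ) :
    |c a b κ k| ≤ ((1+|a|)*(κ/2)/(min 1 b))^k / (k ! : ℝ) := by
  have hm : 0 < min 1 b := lt_min one_pos hb
  have hPb : 0 < (ascPochhammer ℝ k).eval b := ascPochhammer_pos k b hb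
  have hfac : 0 < (k ! : ℝ) := by positivity
  have hneg : |(-κ/2 : ℝ)| = κ/2 := by rw [abs_of_nonpos (by linarith)]; ring
  have h : |c a b κ k| = |(ascPochhammer ℝ k).eval a| / (ascPochhammer ℝ k).eval b
      * (κ/2)^k / (k ! : ℝ) := by
    rw [c, abs_div, abs_mul, abs_pow, hneg, abs_div, abs_of_pos hPb, abs_of_pos hfac]
  rw [h]
  have h1 := poch_abs_le a k
  have h2 := poch_ge b hb k
  calc |(ascPochhammer ℝ k).eval a| / (ascPochhammer ℝ k).eval b * (κ/2)^k / (k ! : ℝ)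
      ≤ ((1+|a|)^k * (k ! : ℝ)) / ((min 1 b)^k * (k ! : ℝ)) * (κ/2)^k / (k ! : ℝ) := by
        gcongr <;> positivity
    _ = ((1+|a|)*(κ/2)/(min 1 b))^k / (k ! : ℝ) := by
        rw [show ((1+|a|)*(κ/2)/(min 1 b))^k = (1+|a|)^k*(κ/2)^k/(min 1 b)^k from by
          rw [div_pow, mul_pow]]
        field_simp

lemma summable_master (a b κ : ℝ) (hb : 0 < b) (hκ : 0 < κ) (r : ℝ) (hr : 0 ≤ r) :
    Summable (fun k : ℕ => ((k:ℝ)+1)*((k:ℝ)+2)*|c a b κ k| * r^k) := by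
  have hm : 0 < min 1 b := lt_min one_pos hb
  obtain ⟨q, hq0, hcq⟩ : ∃ q : ℝ, 0 ≤ q ∧ ∀ k, |c a b κ k| ≤ q^k/(k ! : ℝ) := by
    refine ⟨(1+|a|)*(κ/2)/(min 1 b), ?_, c_abs_le a b κ hb hκ⟩
    apply div_nonneg _ hm.le
    have : 0 ≤ κ/2 := by linarith
    positivity
  apply Summable.of_nonneg_of_le (f := fun k => 8 * ((2*2*(q*r))^k / (k ! : ℝ)))
  · intro k; positivity
  · intro k
    have hck := hcq k
    have e1 : ((k:ℝ)+1) ≤ 2^(k+1) := by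
      exact_mod_cast (Nat.lt_two_pow_self (n := k+1)).le
    have e2 : ((k:ℝ)+2) ≤ 2^(k+2) := by
      calc ((k:ℝ)+2) = ((k+1:ℕ):ℝ)+1 := by push_cast; ring
        _ ≤ 2^(k+2) := by exact_mod_cast (Nat.lt_two_pow_self (n := k+2)).le
    calc ((k:ℝ)+1)*((k:ℝ)+2)*|c a b κ k| * r^k
        ≤ ((k:ℝ)+1)*((k:ℝ)+2)*(q^k / (k ! : ℝ)) * r^k := by gcongr <;> positivity
      _ ≤ (2:ℝ)^(k+1)*(2:ℝ)^(k+2)*(q^k / (k ! : ℝ)) * r^k := by gcongr <;> positivity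
      _ = 8 * ((2*2*(q*r))^k / (k ! : ℝ)) := by
          rw [show ((2:ℝ)*2*(q*r))^k = 2^k*(2^k*(q^k*r^k)) from by
            rw [mul_pow, mul_pow, mul_pow]; ring]
          ring
  · exact (Real.summable_pow_div_factorial (2*2*(q*r))).mul_left 8



/-- the dominating sequence -/
noncomputable def u (a b κ R : ℝ) (k : ℕ) : ℝ :=
  4*((k:ℝ)+1)*((k:ℝ)+2) * |c a b κ k| * (R^2)^k

lemma summable_u (a b κ : ℝ) (hb : 0 < b) (hκ : 0 < κ) (R : ℝ) :
    Summable (u a b κ R) :=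
  ((summable_master a b κ hb hκ (R^2) (sq_nonneg R)).mul_left 4).congr fun k => by
    unfold u; ring

lemma norm_term_le (a b κ : ℝ) {k : ℕ} {W η R : ℝ} {e : ℕ}
    (hW : |W| ≤ 4*((k:ℝ)+1)*((k:ℝ)+2)) (he : e ≤ 2*k) (hηR : |η| ≤ R) (hR : 1 ≤ R) :
    |c a b κ k * (W * η^e)| ≤ u a b κ R k := by
  have hR0 : (0:ℝ) ≤ R := le_trans zero_le_one hR
  have h1 : |η|^e ≤ R^(2*k) :=
    le_trans (pow_le_pow_left₀ (abs_nonneg _) hηR e) (pow_le_pow_right₀ hR he)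
  rw [abs_mul, abs_mul, abs_pow]
  calc |c a b κ k| * (|W| * |η|^e)
      ≤ |c a b κ k| * ((4*((k:ℝ)+1)*((k:ℝ)+2)) * R^(2*k)) := by gcongr
    _ = u a b κ R k := by unfold u; rw [← pow_mul]; ring

lemma cast_bound_1 (k : ℕ) : |(1:ℝ)| ≤ 4*((k:ℝ)+1)*((k:ℝ)+2) := by
  rw [abs_one]; nlinarith [Nat.cast_nonneg (α := ℝ) k]

lemma cast_bound_2 (k : ℕ) : |((2*k:ℕ):ℝ)| ≤ 4*((k:ℝ)+1)*((k:ℝ)+2) := by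
  rw [abs_of_nonneg (Nat.cast_nonneg _)]; push_cast; nlinarith [Nat.cast_nonneg (α := ℝ) k]

lemma cast_bound_3 (k : ℕ) : |((2*k:ℕ):ℝ) * ((2*k-1:ℕ):ℝ)| ≤ 4*((k:ℝ)+1)*((k:ℝ)+2) := by
  rw [abs_of_nonneg (by positivity)]
  have h1 : ((2*k-1:ℕ):ℝ) ≤ ((2*k:ℕ):ℝ) := by exact_mod_cast Nat.sub_le (2*k) 1
  have h2 : ((2*k:ℕ):ℝ) = 2*(k:ℝ) := by push_cast; ring
  nlinarith [Nat.cast_nonneg (α := ℝ) k, Nat.cast_nonneg (α := ℝ) (2*k-1)]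

lemma summable_t0 (a b κ : ℝ) (hb : 0 < b) (hκ : 0 < κ) (x : ℝ) :
    Summable fun k : ℕ => c a b κ k * x^(2*k) := by
  apply Summable.of_norm_bounded (summable_u a b κ hb hκ (|x|+1))
  intro k
  have := norm_term_le a b κ (cast_bound_1 k) (le_refl (2*k))
    (le_of_lt (lt_add_one |x|)) (le_add_of_nonneg_left (abs_nonneg x))
  calc ‖c a b κ k * x^(2*k)‖ = |c a b κ k * (1 * x^(2*k))| := by
        rw [Real.norm_eq_abs]; congr 1; ring
    _ ≤ u a b κ (|x|+1) k := this

lemma summable_d1 (a b κ : ℝ) (hb : 0 < b) (hκ : 0 < κ) (x : ℝ) :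
    Summable fun k : ℕ => c a b κ k * (((2*k:ℕ):ℝ) * x^(2*k-1)) := by
  apply Summable.of_norm_bounded (summable_u a b κ hb hκ (|x|+1))
  intro k
  exact norm_term_le a b κ (cast_bound_2 k) (Nat.sub_le (2*k) 1)
    (le_of_lt (lt_add_one |x|)) (le_add_of_nonneg_left (abs_nonneg x))

lemma summable_d2 (a b κ : ℝ) (hb : 0 < b) (hκ : 0 < κ) (x : ℝ) :
    Summable fun k : ℕ => c a b κ k * (((2*k:ℕ):ℝ) * (((2*k-1:ℕ):ℝ) * x^(2*k-1-1))) := by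
  apply Summable.of_norm_bounded (summable_u a b κ hb hκ (|x|+1))
  intro k
  have := norm_term_le a b κ (cast_bound_3 k) (le_trans (Nat.sub_le _ 1) (Nat.sub_le (2*k) 1))
    (le_of_lt (lt_add_one |x|)) (le_add_of_nonneg_left (abs_nonneg x))
  calc ‖c a b κ k * (((2*k:ℕ):ℝ) * (((2*k-1:ℕ):ℝ) * x^(2*k-1-1)))‖
      = |c a b κ k * (((2*k:ℕ):ℝ) * ((2*k-1:ℕ):ℝ) * x^(2*k-1-1))| := by
        rw [Real.norm_eq_abs]; congr 1; ring
    _ ≤ u a b κ (|x|+1) k := this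

lemma hasDerivAt_F (a b κ : ℝ) (hb : 0 < b) (hκ : 0 < κ) (x : ℝ) :
    HasDerivAt (fun y => ∑' k : ℕ, c a b κ k * y^(2*k))
      (∑' k : ℕ, c a b κ k * (((2*k:ℕ):ℝ) * x^(2*k-1))) x := by
  have hR : (1:ℝ) ≤ |x|+1 := le_add_of_nonneg_left (abs_nonneg x)
  apply hasDerivAt_tsum_of_isPreconnected (summable_u a b κ hb hκ (|x|+1))
    (Metric.isOpen_ball) (convex_ball (0:ℝ) (|x|+1)).isPreconnected
    (y₀ := x) (y := x)
  · intro k y _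
    exact (hasDerivAt_pow (2*k) y).const_mul (c a b κ k)
  · intro k y hy
    rw [mem_ball_zero_iff, Real.norm_eq_abs] at hy
    exact norm_term_le a b κ (cast_bound_2 k) (Nat.sub_le (2*k) 1) hy.le hR
  · rw [mem_ball_zero_iff, Real.norm_eq_abs]; linarith
  · exact summable_t0 a b κ hb hκ x
  · rw [mem_ball_zero_iff, Real.norm_eq_abs]; linarith

lemma hasDerivAt_G (a b κ : ℝ) (hb : 0 < b) (hκ : 0 < κ) (x : ℝ) :
    HasDerivAt (fun y => ∑' k : ℕ, c a b κ k * (((2*k:ℕ):ℝ) * y^(2*k-1)))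
      (∑' k : ℕ, c a b κ k * (((2*k:ℕ):ℝ) * (((2*k-1:ℕ):ℝ) * x^(2*k-1-1)))) x := by
  have hR : (1:ℝ) ≤ |x|+1 := le_add_of_nonneg_left (abs_nonneg x)
  apply hasDerivAt_tsum_of_isPreconnected (summable_u a b κ hb hκ (|x|+1))
    (Metric.isOpen_ball) (convex_ball (0:ℝ) (|x|+1)).isPreconnected
    (y₀ := x) (y := x)
  · intro k y _
    have := (hasDerivAt_pow (2*k-1) y).const_mul (c a b κ k * ((2*k:ℕ):ℝ))
    simpa [mul_assoc] using this
  · intro k y hy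
    rw [mem_ball_zero_iff, Real.norm_eq_abs] at hy
    have := norm_term_le a b κ (cast_bound_3 k)
      (le_trans (Nat.sub_le _ 1) (Nat.sub_le (2*k) 1)) hy.le hR
    calc ‖c a b κ k * (((2*k:ℕ):ℝ) * (((2*k-1:ℕ):ℝ) * y^(2*k-1-1)))‖
        = |c a b κ k * (((2*k:ℕ):ℝ) * ((2*k-1:ℕ):ℝ) * y^(2*k-1-1))| := by
          rw [Real.norm_eq_abs]; congr 1; ring
      _ ≤ u a b κ (|x|+1) k := this
  · rw [mem_ball_zero_iff, Real.norm_eq_abs]; linarith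
  · exact summable_d1 a b κ hb hκ x
  · rw [mem_ball_zero_iff, Real.norm_eq_abs]; linarith


lemma c_zero (a b κ : ℝ) : c a b κ 0 = 1 := by
  simp [c]

lemma rel (a b κ : ℝ) (hb : 0 < b) (k : ℕ) :
    (b + (k:ℝ)) * ((k:ℝ)+1) * c a b κ (k+1) = (a + (k:ℝ)) * (-κ/2) * c a b κ k := by
  have hPb : (ascPochhammer ℝ k).eval b ≠ 0 := (ascPochhammer_pos k b hb).ne'
  have hbk : b + (k:ℝ) ≠ 0 := by positivity
  have hfac : ((k ! : ℕ):ℝ) ≠ 0 := by positivity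
  unfold c
  rw [ascPochhammer_succ_eval, ascPochhammer_succ_eval, pow_succ, Nat.factorial_succ]
  push_cast
  field_simp

lemma key (a b κ η A B1 : ℝ) (hb : 0 < b) (hη : η ≠ 0) (hA : A = 2*a) (hB : B1 = 2*b-1)
    (k : ℕ) :
    c a b κ (k+1) * (((2*(k+1):ℕ):ℝ) * (((2*(k+1)-1:ℕ):ℝ) * η^(2*(k+1)-1-1)))
      + (B1/η) * (c a b κ (k+1) * (((2*(k+1):ℕ):ℝ) * η^(2*(k+1)-1)))
    = -κ * (A * (c a b κ k * η^(2*k)) + η * (c a b κ k * (((2*k:ℕ):ℝ) * η^(2*k-1)))) := by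
  subst hA hB
  have hrel := rel a b κ hb k
  obtain _ | j := k
  · norm_num at hrel ⊢
    field_simp
    linear_combination 2 * hrel
  · have e1 : 2*(j+1+1) = 2*j+4 := by omega
    have e2 : 2*(j+1+1)-1 = 2*j+3 := by omega
    have e3 : 2*(j+1+1)-1-1 = 2*j+2 := by omega
    have e4 : 2*(j+1) = 2*j+2 := by omega
    have e5 : 2*(j+1)-1 = 2*j+1 := by omega
    rw [e3, e2, e1, e5, e4]
    push_cast
    push_cast at hrel
    field_simp
    linear_combination (4*η^(2*j+3)) * hrel

end KummerAux

/-- The Kummer confluent hypergeometric function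
`M(a, b; z) = ∑_{k} ((a)_k / (b)_k) z^k / k!` (real parameters, real variable),
where `(x)_k` is the rising factorial (Pochhammer symbol). -/
noncomputable def kummerM (a b z : ℝ) : ℝ :=
  ∑' k : ℕ, ((ascPochhammer ℝ k).eval a / (ascPochhammer ℝ k).eval b) *
    z ^ k / (Nat.factorial k)

open KummerAux in
/-- The function `f(η) = M(α/2, N/2; -κη²/2)` solves the linear Cauchy problem
`f'' + ((N-1)/η) f' = -κ (α f + η f')`, `f(0) = 1`, `f'(0) = 0`. -/
theorem kummer_solves_linear_profile (N : ℕ) (hN : 1 ≤ N) (α κ : ℝ) (hκ : 0 < κ)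
    (f : ℝ → ℝ)
    (hf : ∀ η : ℝ, f η = kummerM (α/2) ((N : ℝ)/2) (-κ * η ^ 2 / 2)) :
    f 0 = 1 ∧ deriv f 0 = 0 ∧
    ∀ η : ℝ, 0 < η →
      deriv (deriv f) η + (((N : ℝ) - 1) / η) * deriv f η =
        -κ * (α * f η + η * deriv f η) := by
  have hN1 : (1:ℝ) ≤ (N:ℝ) := by exact_mod_cast hN
  have hb : 0 < (N:ℝ)/2 := by linarith
  have hfe : f = fun x => ∑' k : ℕ, c (α/2) ((N:ℝ)/2) κ k * x^(2*k) := by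
    funext x
    rw [hf x]
    unfold kummerM c
    apply tsum_congr
    intro k
    rw [show -κ * x^2/2 = (-κ/2) * x^2 from by ring, mul_pow, ← pow_mul]
    ring
  have h1 : deriv f = fun x => ∑' k : ℕ,
      c (α/2) ((N:ℝ)/2) κ k * (((2*k:ℕ):ℝ) * x^(2*k-1)) := by
    funext x
    rw [hfe]
    exact (hasDerivAt_F (α/2) ((N:ℝ)/2) κ hb hκ x).deriv
  refine ⟨?_, ?_, ?_⟩
  · rw [hfe]
    have : ∀ k : ℕ, k ≠ 0 → c (α/2) ((N:ℝ)/2) κ k * (0:ℝ)^(2*k) = 0 := by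
      intro k hk
      rw [zero_pow (by omega : 2*k ≠ 0), mul_zero]
    show (∑' k : ℕ, c (α/2) ((N:ℝ)/2) κ k * (0:ℝ)^(2*k)) = 1
    rw [tsum_eq_single 0 this]
    simp [c_zero]
  · rw [h1]
    have : ∀ k : ℕ, c (α/2) ((N:ℝ)/2) κ k * (((2*k:ℕ):ℝ) * (0:ℝ)^(2*k-1)) = 0 := by
      intro k
      obtain _ | k := k
      · norm_num
      · rw [zero_pow (by omega : 2*(k+1)-1 ≠ 0)]
        ring
    calc (∑' k : ℕ, c (α/2) ((N:ℝ)/2) κ k * (((2*k:ℕ):ℝ) * (0:ℝ)^(2*k-1)))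
        = ∑' _ : ℕ, (0:ℝ) := tsum_congr this
      _ = 0 := tsum_zero
  · intro η hη
    have hη' : η ≠ 0 := hη.ne'
    have h2 : deriv (deriv f) η = ∑' k : ℕ,
        c (α/2) ((N:ℝ)/2) κ k * (((2*k:ℕ):ℝ) * (((2*k-1:ℕ):ℝ) * η^(2*k-1-1))) := by
      rw [h1]
      exact (hasDerivAt_G (α/2) ((N:ℝ)/2) κ hb hκ η).deriv
    have h1η : deriv f η = ∑' k : ℕ,
        c (α/2) ((N:ℝ)/2) κ k * (((2*k:ℕ):ℝ) * η^(2*k-1)) := by rw [h1]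
    have hfη : f η = ∑' k : ℕ, c (α/2) ((N:ℝ)/2) κ k * η^(2*k) := by rw [hfe]
    rw [h2, h1η, hfη]
    have S0 := summable_t0 (α/2) ((N:ℝ)/2) κ hb hκ η
    have S1 := summable_d1 (α/2) ((N:ℝ)/2) κ hb hκ η
    have S2 := summable_d2 (α/2) ((N:ℝ)/2) κ hb hκ η
    calc (∑' k : ℕ, c (α/2) ((N:ℝ)/2) κ k * (((2*k:ℕ):ℝ) * (((2*k-1:ℕ):ℝ) * η^(2*k-1-1))))
          + (((N:ℝ)-1)/η) * ∑' k : ℕ, c (α/2) ((N:ℝ)/2) κ k * (((2*k:ℕ):ℝ) * η^(2*k-1))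
        = (∑' k : ℕ, c (α/2) ((N:ℝ)/2) κ k * (((2*k:ℕ):ℝ) * (((2*k-1:ℕ):ℝ) * η^(2*k-1-1))))
          + ∑' k : ℕ, (((N:ℝ)-1)/η) *
            (c (α/2) ((N:ℝ)/2) κ k * (((2*k:ℕ):ℝ) * η^(2*k-1))) := by
          rw [tsum_mul_left]
      _ = ∑' k : ℕ, (c (α/2) ((N:ℝ)/2) κ k * (((2*k:ℕ):ℝ) * (((2*k-1:ℕ):ℝ) * η^(2*k-1-1)))
            + (((N:ℝ)-1)/η) * (c (α/2) ((N:ℝ)/2) κ k * (((2*k:ℕ):ℝ) * η^(2*k-1)))) :=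
          (Summable.tsum_add S2 (S1.mul_left _)).symm
      _ = ∑' k : ℕ, (c (α/2) ((N:ℝ)/2) κ (k+1) * (((2*(k+1):ℕ):ℝ) *
              (((2*(k+1)-1:ℕ):ℝ) * η^(2*(k+1)-1-1)))
            + (((N:ℝ)-1)/η) * (c (α/2) ((N:ℝ)/2) κ (k+1) *
              (((2*(k+1):ℕ):ℝ) * η^(2*(k+1)-1)))) := by
          rw [Summable.tsum_eq_zero_add (S2.add (S1.mul_left _))]
          norm_num
      _ = ∑' k : ℕ, -κ * (α * (c (α/2) ((N:ℝ)/2) κ k * η^(2*k))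
            + η * (c (α/2) ((N:ℝ)/2) κ k * (((2*k:ℕ):ℝ) * η^(2*k-1)))) :=
          tsum_congr (key (α/2) ((N:ℝ)/2) κ η α ((N:ℝ)-1) hb hη' (by ring) (by ring))
      _ = -κ * ∑' k : ℕ, (α * (c (α/2) ((N:ℝ)/2) κ k * η^(2*k))
            + η * (c (α/2) ((N:ℝ)/2) κ k * (((2*k:ℕ):ℝ) * η^(2*k-1)))) := tsum_mul_left
      _ = -κ * (α * (∑' k : ℕ, c (α/2) ((N:ℝ)/2) κ k * η^(2*k))
            + η * ∑' k : ℕ, c (α/2) ((N:ℝ)/2) κ k * (((2*k:ℕ):ℝ) * η^(2*k-1))) := by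
          rw [Summable.tsum_add (S0.mul_left α) (S1.mul_left η), tsum_mul_left, tsum_mul_left]
end

section
/- Let N ≥ 1 be an integer, α ∈ ℝ, κ > 0, and define f₁(η) = M(α/2, N/2; −κη²/2). Then for every η ≥ 0: α·f₁(η) + η·f₁'(η) = α·e^{−κη²/2}·M(N/2 − α/2 − 1, N/2; κη²/2). In particular, if α > 0, then η > 0 satisfies α·f₁(η) + η·f₁'(η) = 0 if and only if M(N/2 − α/2 − 1, N/2; κη²/2) = 0. -/
open Finset Polynomial Filter

/-- abbreviation for the rising factorial. -/
noncomputable def kpoch (x : ℝ) (k : ℕ) : ℝ := (ascPochhammer ℝ k).eval x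

lemma kpoch_zero (x : ℝ) : kpoch x 0 = 1 := by simp [kpoch]

lemma kpoch_succ (x : ℝ) (k : ℕ) : kpoch x (k+1) = kpoch x k * (x + k) := by
  simp [kpoch, ascPochhammer_succ_eval]

lemma kpoch_succ_left (x : ℝ) (k : ℕ) : kpoch x (k+1) = x * kpoch (x+1) k := by
  simp [kpoch, ascPochhammer_succ_left, eval_comp]

lemma kpoch_pos {b : ℝ} (hb : 0 < b) (k : ℕ) : 0 < kpoch b k := by
  induction k with
  | zero => simp [kpoch_zero]
  | succ k ih => rw [kpoch_succ]; positivity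

lemma kpoch_abs_le (a : ℝ) (k : ℕ) : |kpoch a k| ≤ kpoch (1 + |a|) k := by
  induction k with
  | zero => simp [kpoch_zero]
  | succ k ih =>
      rw [kpoch_succ, kpoch_succ, abs_mul]
      have h1 : |a + (k:ℝ)| ≤ 1 + |a| + k := by
        calc |a + (k:ℝ)| ≤ |a| + k := by
              refine (abs_add_le _ _).trans ?_; simp
          _ ≤ 1 + |a| + k := by linarith
      have h2 : (0:ℝ) ≤ 1 + |a| + k := by positivity
      exact mul_le_mul ih h1 (abs_nonneg _) ((kpoch_pos (by positivity) k).le)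

/-- the positive majorant series is summable -/
lemma summable_kaux (x b z : ℝ) (hb : 0 < b) :
    Summable (fun k : ℕ => kpoch (1 + |x|) k / kpoch b k * (1 + |z|) ^ k / (Nat.factorial k : ℝ)) := by
  set t : ℕ → ℝ := fun k => kpoch (1 + |x|) k / kpoch b k * (1 + |z|) ^ k / (Nat.factorial k : ℝ) with ht
  have hx1 : (0:ℝ) < 1 + |x| := by positivity
  have hz1 : (0:ℝ) < 1 + |z| := by positivity
  have htpos : ∀ k, 0 < t k := by
    intro k
    have := kpoch_pos hx1 k; have := kpoch_pos hb k
    have : (0:ℝ) < (Nat.factorial k : ℝ) := by positivity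
    rw [ht]; positivity
  apply summable_of_ratio_test_tendsto_lt_one (l := 0) one_pos
  · exact Eventually.of_forall fun k => (htpos k).ne'
  · have hratio : ∀ k : ℕ, ‖t (k+1)‖ / ‖t k‖ =
        ((1 + |x| + k) / ((k:ℝ) + 1)) * ((1 + |z|) / (b + k)) := by
      intro k
      have h1 := kpoch_pos hx1 k
      have h2 := kpoch_pos hb k
      have h3 : (0:ℝ) < (Nat.factorial k : ℝ) := by positivity
      have hbk : (0:ℝ) < b + k := by positivity
      have hxk : (0:ℝ) < 1 + |x| + k := by positivity
      rw [Real.norm_eq_abs, Real.norm_eq_abs, abs_of_pos (htpos _), abs_of_pos (htpos _), ht]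
      simp only [kpoch_succ, Nat.factorial_succ, pow_succ, Nat.cast_mul, Nat.cast_add,
        Nat.cast_one]
      field_simp
    simp only [hratio]
    have hA : Tendsto (fun k : ℕ => (1 + |x| + (k:ℝ)) / ((k:ℝ) + 1)) atTop (nhds 1) := by
      have : (fun k : ℕ => (1 + |x| + (k:ℝ)) / ((k:ℝ) + 1))
          = fun k : ℕ => 1 + |x| / ((k:ℝ) + 1) := by
        funext k
        have : ((k:ℝ) + 1) ≠ 0 := by positivity
        field_simp
        ring
      rw [this]
      have h0 : Tendsto (fun k : ℕ => |x| / ((k:ℝ) + 1)) atTop (nhds 0) := by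
        apply Tendsto.div_atTop tendsto_const_nhds
        exact tendsto_atTop_add_const_right _ 1 tendsto_natCast_atTop_atTop
      simpa using (tendsto_const_nhds (x := (1:ℝ))).add h0
    have hB : Tendsto (fun k : ℕ => (1 + |z|) / (b + (k:ℝ))) atTop (nhds 0) := by
      apply Tendsto.div_atTop tendsto_const_nhds
      exact tendsto_atTop_add_const_left _ b tendsto_natCast_atTop_atTop
    simpa using hA.mul hB

/-- norm-summability of the Kummer series terms -/
lemma summable_norm_kterm (a b z : ℝ) (hb : 0 < b) :
    Summable (fun k : ℕ => ‖kpoch a k / kpoch b k * z ^ k / (Nat.factorial k : ℝ)‖) := by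
  apply Summable.of_nonneg_of_le (fun k => norm_nonneg _) _ (summable_kaux a b z hb)
  intro k
  have h1 := kpoch_pos hb k
  have h2 : (0:ℝ) < (Nat.factorial k : ℝ) := by positivity
  rw [Real.norm_eq_abs, abs_div, abs_mul, abs_div, abs_pow, abs_of_pos h1,
    abs_of_nonneg (le_of_lt h2)]
  have hz : |z| ^ k ≤ (1 + |z|) ^ k := by
    apply pow_le_pow_left₀ (abs_nonneg z); linarith
  have := kpoch_abs_le a k
  have hnum : |kpoch a k| * |z| ^ k ≤ kpoch (1 + |a|) k * (1 + |z|) ^ k := by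
    apply mul_le_mul this hz (by positivity)
    exact (abs_nonneg _).trans this
  calc |kpoch a k| / kpoch b k * |z| ^ k / (Nat.factorial k : ℝ)
      = (|kpoch a k| * |z| ^ k) / kpoch b k / (Nat.factorial k : ℝ) := by ring
    _ ≤ (kpoch (1 + |a|) k * (1 + |z|) ^ k) / kpoch b k / (Nat.factorial k : ℝ) := by
        gcongr
    _ = kpoch (1 + |a|) k / kpoch b k * (1 + |z|) ^ k / (Nat.factorial k : ℝ) := by ring

lemma summable_kterm (a b z : ℝ) (hb : 0 < b) :
    Summable (fun k : ℕ => kpoch a k / kpoch b k * z ^ k / (Nat.factorial k : ℝ)) :=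
  (summable_norm_kterm a b z hb).of_norm

/-- Chu–Vandermonde: `∑ (-1)^k C(n,k) (c)_k/(b)_k = (b-c)_n/(b)_n`. -/
lemma chu_vandermonde : ∀ (n : ℕ) (b c : ℝ), 0 < b →
    ∑ k ∈ range (n+1), (-1:ℝ)^k * (n.choose k) * kpoch c k / kpoch b k
      = kpoch (b - c) n / kpoch b n := by
  intro n
  induction n with
  | zero => intro b c hb; simp [kpoch_zero]
  | succ n ih =>
      intro b c hb
      have hb1 : (0:ℝ) < b + 1 := by linarith
      set f : ℕ → ℝ := fun k => (-1:ℝ)^k * ((n+1).choose k) * kpoch c k / kpoch b k with hf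
      set g : ℕ → ℝ := fun k => (-1:ℝ)^k * (n.choose k) * kpoch c k / kpoch b k with hg
      have key : ∀ k, f (k+1) = g (k+1) +
          (-1:ℝ)^(k+1) * (n.choose k) * kpoch c (k+1) / kpoch b (k+1) := by
        intro k
        rw [hf, hg]
        simp only [Nat.choose_succ_succ, Nat.cast_add]
        ring
      have step1 : ∑ k ∈ range (n+2), f k
          = (∑ k ∈ range (n+1), g k)
            + ∑ k ∈ range (n+1), (-1:ℝ)^(k+1) * (n.choose k) * kpoch c (k+1) / kpoch b (k+1) := by
        rw [Finset.sum_range_succ' f (n+1)]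
        simp only [key]
        rw [Finset.sum_add_distrib]
        have hf0g0 : f 0 = g 0 := by simp [hf, hg]
        have hgtop : g (n+1) = 0 := by simp [hg, Nat.choose_succ_self]
        have : (∑ k ∈ range (n+1), g (k+1)) + f 0 = ∑ k ∈ range (n+1), g k := by
          rw [hf0g0, ← Finset.sum_range_succ' g (n+1), Finset.sum_range_succ g (n+1), hgtop,
            add_zero]
        linarith [this]
      have step2 : ∑ k ∈ range (n+1), (-1:ℝ)^(k+1) * (n.choose k) * kpoch c (k+1) / kpoch b (k+1)
          = -(c/b) * ∑ k ∈ range (n+1), (-1:ℝ)^k * (n.choose k) * kpoch (c+1) k / kpoch (b+1) k := by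
        rw [Finset.mul_sum]
        apply Finset.sum_congr rfl
        intro k _
        rw [kpoch_succ_left c k, kpoch_succ_left b k]
        have h1 := (kpoch_pos hb1 k).ne'
        have hbne : b ≠ 0 := hb.ne'
        field_simp
        ring
      rw [step1, step2, ih b c hb, ih (b+1) (c+1) hb1]
      have e1 : b + 1 - (c + 1) = b - c := by ring
      rw [e1]
      have h2 := (kpoch_pos hb n).ne'
      have h3 := (kpoch_pos hb1 n).ne'
      have h4 : kpoch b (n+1) = b * kpoch (b+1) n := kpoch_succ_left b n
      have h5 : kpoch b (n+1) = kpoch b n * (b + n) := kpoch_succ b n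
      have h6 : kpoch (b-c) (n+1) = kpoch (b-c) n * (b - c + n) := kpoch_succ (b-c) n
      have hbn : (0:ℝ) < b + n := by positivity
      rw [h6]
      have h7 : kpoch b (n+1) ≠ 0 := (kpoch_pos hb (n+1)).ne'
      field_simp
      rw [h4]
      have h45 : b * kpoch (b+1) n = kpoch b n * (b + n) := by
        rw [← kpoch_succ_left, kpoch_succ]
      linear_combination (b * kpoch (b+1) n * kpoch (b-c) n) * h45

lemma kummerM_eq (a b z : ℝ) :
    kummerM a b z = ∑' k : ℕ, kpoch a k / kpoch b k * z ^ k / (Nat.factorial k : ℝ) := rfl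

/-- Kummer's transformation `M(c,b,w) = e^w M(b-c, b, -w)`. -/
lemma kummer_transform (c b w : ℝ) (hb : 0 < b) :
    kummerM c b w = Real.exp w * kummerM (b - c) b (-w) := by
  have hexp : Real.exp w = ∑' n : ℕ, w ^ n / (Nat.factorial n : ℝ) := by
    rw [Real.exp_eq_exp_ℝ, NormedSpace.exp_eq_tsum_div]
  have hexp_norm : Summable (fun n : ℕ => ‖w ^ n / (Nat.factorial n : ℝ)‖) := by
    have := Real.summable_pow_div_factorial |w|
    apply this.congr
    intro n
    rw [Real.norm_eq_abs, abs_div, abs_pow, abs_of_nonneg (by positivity : (0:ℝ) ≤ (Nat.factorial n : ℝ))]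
  rw [kummerM_eq, kummerM_eq, hexp,
    tsum_mul_tsum_eq_tsum_sum_antidiagonal_of_summable_norm hexp_norm
      (summable_norm_kterm (b - c) b (-w) hb)]
  apply tsum_congr
  intro n
  rw [Finset.Nat.sum_antidiagonal_eq_sum_range_succ
    (fun i j => w ^ i / (Nat.factorial i : ℝ) *
      (kpoch (b-c) j / kpoch b j * (-w) ^ j / (Nat.factorial j : ℝ))) n]
  have key := chu_vandermonde n b (b - c) hb
  have e1 : b - (b - c) = c := by ring
  rw [e1] at key
  have expand : ∀ k ∈ range (n+1),
      w ^ k / (Nat.factorial k : ℝ) *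
        (kpoch (b-c) (n-k) / kpoch b (n-k) * (-w) ^ (n-k) / (Nat.factorial (n-k) : ℝ))
      = ((-1:ℝ)^(n-k) * (n.choose (n-k)) * kpoch (b-c) (n-k) / kpoch b (n-k)) *
          w ^ n / (Nat.factorial n : ℝ) := by
    intro k hk
    have hkn : k ≤ n := Nat.lt_succ_iff.mp (mem_range.mp hk)
    have hchoose : (n.choose (n-k) : ℝ) * (Nat.factorial (n-k)) * (Nat.factorial k) = (Nat.factorial n : ℝ) := by
      have := Nat.choose_mul_factorial_mul_factorial (Nat.sub_le n k)
      have h2 : n - (n - k) = k := Nat.sub_sub_self hkn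
      rw [h2] at this
      exact_mod_cast this
    have hw : (-w) ^ (n-k) = (-1:ℝ)^(n-k) * w^(n-k) := by
      rw [neg_pow]
    have hwn : w ^ k * w ^ (n-k) = w ^ n := by
      rw [← pow_add]; congr 1; omega
    have hfk : (Nat.factorial k : ℝ) ≠ 0 := by positivity
    have hfnk : (Nat.factorial (n-k) : ℝ) ≠ 0 := by positivity
    have hfn : (Nat.factorial n : ℝ) ≠ 0 := by positivity
    have hinv : (1:ℝ)/((Nat.factorial k : ℝ) * ((Nat.factorial (n-k)) : ℝ))
        = ((n.choose (n-k)) : ℝ)/(Nat.factorial n : ℝ) := by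
      rw [div_eq_div_iff (by positivity) (by positivity)]
      linear_combination (-1 : ℝ) * hchoose
    calc w ^ k / (Nat.factorial k : ℝ) *
          (kpoch (b-c) (n-k) / kpoch b (n-k) * (-w) ^ (n-k) / (Nat.factorial (n-k) : ℝ))
        = ((-1:ℝ)^(n-k) * kpoch (b-c) (n-k) / kpoch b (n-k)) * (w^k * w^(n-k)) *
            ((1:ℝ)/((Nat.factorial k : ℝ) * ((Nat.factorial (n-k)) : ℝ))) := by
          rw [hw]; ring
      _ = ((-1:ℝ)^(n-k) * kpoch (b-c) (n-k) / kpoch b (n-k)) * w^n *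
            (((n.choose (n-k)) : ℝ)/(Nat.factorial n : ℝ)) := by rw [hwn, hinv]
      _ = ((-1:ℝ)^(n-k) * (n.choose (n-k)) * kpoch (b-c) (n-k) / kpoch b (n-k)) *
          w ^ n / (Nat.factorial n : ℝ) := by ring
  rw [Finset.sum_congr rfl expand]
  rw [← Finset.sum_div, ← Finset.sum_mul]
  have : ∑ k ∈ range (n+1), (-1:ℝ)^(n-k) * (n.choose (n-k)) * kpoch (b-c) (n-k) / kpoch b (n-k)
      = ∑ k ∈ range (n+1), (-1:ℝ)^k * (n.choose k) * kpoch (b-c) k / kpoch b k := by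
    apply Finset.sum_nbij' (fun k => n - k) (fun k => n - k) <;>
      intro k hk <;> simp only [mem_range] at hk ⊢ <;> omega
  rw [this, key]

/-- the k-th term of `η ↦ M(a,b,-κη²/2)` -/
noncomputable def kg (a b κ : ℝ) (k : ℕ) (t : ℝ) : ℝ :=
  kpoch a k / kpoch b k * (-κ * t ^ 2 / 2) ^ k / (Nat.factorial k : ℝ)

/-- its derivative -/
noncomputable def kg' (a b κ : ℝ) (k : ℕ) (t : ℝ) : ℝ :=
  kpoch a k / kpoch b k * ((k : ℝ) * (-κ * t ^ 2 / 2) ^ (k - 1) * (-κ * t)) / (Nat.factorial k : ℝ)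

lemma kg_hasDerivAt (a b κ : ℝ) (k : ℕ) (y : ℝ) : HasDerivAt (kg a b κ k) (kg' a b κ k y) y := by
  have h0 : HasDerivAt (fun t : ℝ => -κ * t ^ 2 / 2) (-κ * y) y := by
    have h := (hasDerivAt_pow 2 y).const_mul (-κ / 2)
    norm_num at h
    have hfun : (fun t : ℝ => -κ / 2 * t ^ 2) = fun t : ℝ => -κ * t ^ 2 / 2 := by
      funext t; ring
    rw [hfun] at h
    exact h.congr_deriv (by ring)
  have hz := h0.pow k
  exact (hz.const_mul (kpoch a k / kpoch b k)).div_const _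

lemma kg_bound (a b κ : ℝ) (hb : 0 < b) (hκ : 0 < κ) (R : ℝ) (hR : 0 < R) (k : ℕ) (y : ℝ)
    (hy : |y| ≤ R) :
    ‖kg' a b κ k y‖ ≤
      κ * R * (kpoch (1 + |a|) k / kpoch b k * (k : ℝ) * (1 + κ * R ^ 2 / 2) ^ (k - 1) /
        (Nat.factorial k : ℝ)) := by
  have hbk := kpoch_pos hb k
  have hfk : (0:ℝ) < (Nat.factorial k : ℝ) := by positivity
  have habs : ‖kg' a b κ k y‖ =
      |kpoch a k| / kpoch b k * ((k : ℝ) * (κ * y ^ 2 / 2) ^ (k - 1) * (κ * |y|)) /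
        (Nat.factorial k : ℝ) := by
    rw [kg', Real.norm_eq_abs, abs_div, abs_mul, abs_div, abs_mul, abs_mul, abs_mul,
      abs_of_pos hbk, abs_of_pos hfk, abs_pow]
    have h1 : |(-κ * y ^ 2 / 2)| = κ * y ^ 2 / 2 := by
      rw [abs_of_nonpos (by nlinarith [sq_nonneg y] : -κ * y ^ 2 / 2 ≤ 0)]; ring
    have h2 : |(k:ℝ)| = (k:ℝ) := abs_of_nonneg (Nat.cast_nonneg k)
    have h3 : |(-κ)| = κ := by rw [abs_neg, abs_of_pos hκ]
    rw [h1, h2, h3]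
  rw [habs]
  have hy2 : κ * y ^ 2 / 2 ≤ 1 + κ * R ^ 2 / 2 := by
    have : y ^ 2 ≤ R ^ 2 := by
      rw [← sq_abs y]; exact pow_le_pow_left₀ (abs_nonneg y) hy 2
    nlinarith
  have hpow : (κ * y ^ 2 / 2) ^ (k - 1) ≤ (1 + κ * R ^ 2 / 2) ^ (k - 1) :=
    pow_le_pow_left₀ (by positivity) hy2 _
  calc |kpoch a k| / kpoch b k * ((k : ℝ) * (κ * y ^ 2 / 2) ^ (k - 1) * (κ * |y|)) /
        (Nat.factorial k : ℝ)
      ≤ kpoch (1 + |a|) k / kpoch b k * ((k : ℝ) * (1 + κ * R ^ 2 / 2) ^ (k - 1) * (κ * R)) /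
        (Nat.factorial k : ℝ) := by
        gcongr <;>
          first
            | exact (div_pos (kpoch_pos (by positivity) k) hbk).le
            | positivity
            | exact kpoch_abs_le a k
            | exact hpow
            | exact hy
    _ = κ * R * (kpoch (1 + |a|) k / kpoch b k * (k : ℝ) * (1 + κ * R ^ 2 / 2) ^ (k - 1) /
        (Nat.factorial k : ℝ)) := by ring

lemma summable_kbound (a b κ : ℝ) (hb : 0 < b) (hκ : 0 < κ) (R : ℝ) (hR : 0 < R) :
    Summable (fun k : ℕ => κ * R * (kpoch (1 + |a|) k / kpoch b k * (k : ℝ)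
      * (1 + κ * R ^ 2 / 2) ^ (k - 1) / (Nat.factorial k : ℝ))) := by
  set u : ℕ → ℝ := fun k => κ * R * (kpoch (1 + |a|) k / kpoch b k * (k : ℝ)
      * (1 + κ * R ^ 2 / 2) ^ (k - 1) / (Nat.factorial k : ℝ)) with hu
  have hb1 : (0:ℝ) < b + 1 := by linarith
  have hs := (summable_kaux (1 + |a|) (b + 1) (κ * R ^ 2 / 2) hb1).mul_left
    (κ * R * (1 + |a|) / b)
  rw [← summable_nat_add_iff 1]
  apply hs.congr
  intro k
  have e1 : 1 + abs (1 + abs a) = 2 + abs a := by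
    rw [abs_of_pos (by positivity)]; ring
  have e2 : 1 + abs (κ * R ^ 2 / 2) = 1 + κ * R ^ 2 / 2 := by
    rw [abs_of_nonneg (by positivity)]
  rw [hu]
  simp only [e1, e2]
  have e3 : kpoch (1 + |a|) (k+1) = (1 + |a|) * kpoch (2 + |a|) k := by
    have := kpoch_succ_left (1 + |a|) k
    rw [this]; ring_nf
  have e4 : kpoch b (k+1) = b * kpoch (b+1) k := kpoch_succ_left b k
  rw [e3, e4]
  have h5 : ((k+1 : ℕ) : ℝ) = (k:ℝ) + 1 := by push_cast; ring
  rw [Nat.factorial_succ]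
  push_cast
  have hbne : b ≠ 0 := hb.ne'
  have hpk := (kpoch_pos hb1 k).ne'
  have hfk : ((Nat.factorial k : ℝ)) ≠ 0 := by positivity
  field_simp

lemma summable_kg' (a b κ : ℝ) (hb : 0 < b) (hκ : 0 < κ) (η : ℝ) :
    Summable (fun k : ℕ => kg' a b κ k η) := by
  have hR : (0:ℝ) < |η| + 1 := by positivity
  exact Summable.of_norm_bounded (summable_kbound a b κ hb hκ _ hR)
    (fun k => kg_bound a b κ hb hκ _ hR k η (by linarith))

lemma kummer_comp_hasDerivAt (a b κ : ℝ) (hb : 0 < b) (hκ : 0 < κ) (η : ℝ) :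
    HasDerivAt (fun t => kummerM a b (-κ * t ^ 2 / 2)) (∑' k : ℕ, kg' a b κ k η) η := by
  have hR : (0:ℝ) < |η| + 1 := by positivity
  have key : HasDerivAt (fun t => ∑' k : ℕ, kg a b κ k t) (∑' k : ℕ, kg' a b κ k η) η := by
    apply hasDerivAt_tsum_of_isPreconnected (summable_kbound a b κ hb hκ _ hR)
      Metric.isOpen_ball (convex_ball (0:ℝ) (|η|+1)).isPreconnected
      (fun k y _ => kg_hasDerivAt a b κ k y)
      (g := kg a b κ) (y₀ := 0)
    · intro k y hy
      rw [Metric.mem_ball, Real.dist_eq, sub_zero] at hy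
      exact kg_bound a b κ hb hκ _ hR k y hy.le
    · rw [Metric.mem_ball, Real.dist_eq, sub_zero]; simp; positivity
    · exact summable_kterm a b (-κ * 0 ^ 2 / 2) hb
    · rw [Metric.mem_ball, Real.dist_eq, sub_zero]; linarith [abs_nonneg η]
  exact key

lemma main_identity (α b κ : ℝ) (hb : 0 < b) (hκ : 0 < κ) (η : ℝ) :
    α * kummerM (α/2) b (-κ * η ^ 2 / 2)
      + η * deriv (fun t => kummerM (α/2) b (-κ * t ^ 2 / 2)) η
    = α * kummerM (α/2 + 1) b (-κ * η ^ 2 / 2) := by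
  have hd := kummer_comp_hasDerivAt (α/2) b κ hb hκ η
  rw [hd.deriv]
  have hsum1 : Summable (fun k : ℕ => kg (α/2) b κ k η) :=
    summable_kterm (α/2) b (-κ * η ^ 2 / 2) hb
  have hsum2 := summable_kg' (α/2) b κ hb hκ η
  have lhs1 : kummerM (α/2) b (-κ * η ^ 2 / 2) = ∑' k : ℕ, kg (α/2) b κ k η := rfl
  rw [lhs1, ← tsum_mul_left, ← tsum_mul_left,
    ← Summable.tsum_add (hsum1.mul_left α) (hsum2.mul_left η)]
  rw [kummerM_eq, ← tsum_mul_left]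
  apply tsum_congr
  intro k
  cases k with
  | zero => simp [kg, kg', kpoch_zero]
  | succ k =>
      have h1 : kpoch (α/2) (k+2) = kpoch (α/2) (k+1) * (α/2 + ((k:ℝ)+1)) := by
        have := kpoch_succ (α/2) (k+1); push_cast at this; convert this using 2
      have h2 : kpoch (α/2) (k+2) = (α/2) * kpoch (α/2+1) (k+1) := kpoch_succ_left _ _
      have e : (α + 2*((k:ℝ)+1)) * kpoch (α/2) (k+1) = α * kpoch (α/2+1) (k+1) := by
        linear_combination 2 * h1.symm + 2 * h2
      simp only [kg, kg', Nat.succ_sub_one]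
      push_cast
      linear_combination ((-κ*η^2/2)^k * (-κ*η^2/2) /
        (kpoch b (k+1) * ((Nat.factorial (k+1) : ℕ) : ℝ))) * e

/-- For `f₁(η) = M(α/2, N/2; -κη²/2)` one has
`α f₁ + η f₁' = α e^{-κη²/2} M(N/2 - α/2 - 1, N/2; κη²/2)`, so for `α > 0` the
positive roots of `α f₁ + η f₁' = 0` are exactly the points where
`M(N/2 - α/2 - 1, N/2; κη²/2) = 0`. -/
theorem kummer_root_identity (N : ℕ) (hN : 1 ≤ N) (α κ : ℝ) (hκ : 0 < κ)
    (f₁ : ℝ → ℝ)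
    (hf₁ : ∀ η : ℝ, f₁ η = kummerM (α/2) ((N : ℝ)/2) (-κ * η ^ 2 / 2)) :
    (∀ η : ℝ, 0 ≤ η →
      α * f₁ η + η * deriv f₁ η =
        α * Real.exp (-κ * η ^ 2 / 2) *
          kummerM ((N : ℝ)/2 - α/2 - 1) ((N : ℝ)/2) (κ * η ^ 2 / 2)) ∧
    (0 < α → ∀ η : ℝ, 0 < η →
      (α * f₁ η + η * deriv f₁ η = 0 ↔
        kummerM ((N : ℝ)/2 - α/2 - 1) ((N : ℝ)/2) (κ * η ^ 2 / 2) = 0)) := by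
  have hb : (0:ℝ) < (N : ℝ)/2 := by
    have : (1:ℝ) ≤ (N:ℝ) := by exact_mod_cast hN
    linarith
  have hfe : f₁ = fun t => kummerM (α/2) ((N : ℝ)/2) (-κ * t ^ 2 / 2) := funext hf₁
  have hid : ∀ η : ℝ,
      α * f₁ η + η * deriv f₁ η =
        α * Real.exp (-κ * η ^ 2 / 2) *
          kummerM ((N : ℝ)/2 - α/2 - 1) ((N : ℝ)/2) (κ * η ^ 2 / 2) := by
    intro η
    rw [hfe]
    rw [main_identity α ((N : ℝ)/2) κ hb hκ η]
    rw [kummer_transform (α/2 + 1) ((N : ℝ)/2) (-κ * η ^ 2 / 2) hb]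
    rw [show ((N : ℝ)/2 - (α/2 + 1)) = (N : ℝ)/2 - α/2 - 1 from by ring,
      show -(-κ * η ^ 2 / 2) = κ * η ^ 2 / 2 from by ring]
    ring
  refine ⟨fun η _ => hid η, fun hα η hη => ?_⟩
  rw [hid η]
  have hne : α * Real.exp (-κ * η ^ 2 / 2) ≠ 0 :=
    (mul_pos hα (Real.exp_pos _)).ne'
  constructor
  · intro h
    rcases mul_eq_zero.mp h with h' | h'
    · exact absurd h' hne
    · exact h'
  · intro h
    rw [h, mul_zero]
end

section
/- Let N ≥ 3 be an integer, −1 < γ < 1, and 0 < α ≤ N − 2. Then every Barenblatt profile f with exponent α satisfies f(η) = M(α/2, N/2; −(1−γ)η²/4) for all η ≥ 0; moreover α·f(η) + η·f'(η) > 0 for every η > 0, and f(η) > 0 for every η ≥ 0. -/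
open Polynomial Filter Set Topology

/-- coefficient of the Kummer series -/
noncomputable def kc (a b : ℝ) (k : ℕ) : ℝ :=
  (ascPochhammer ℝ k).eval a / ((ascPochhammer ℝ k).eval b * (Nat.factorial k))


lemma kummerM_eq_tsum_kc (a b z : ℝ) :
    kummerM a b z = ∑' k : ℕ, kc a b k * z ^ k := by
  unfold kummerM kc
  refine tsum_congr fun k => ?_
  ring

lemma poch_pos {b : ℝ} (hb : 0 < b) (k : ℕ) : 0 < (ascPochhammer ℝ k).eval b :=
  ascPochhammer_pos k b hb

lemma poch_succ_eval (x : ℝ) (k : ℕ) :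
    (ascPochhammer ℝ (k+1)).eval x = (ascPochhammer ℝ k).eval x * (x + k) :=
  ascPochhammer_succ_eval k x

lemma poch_succ_left (x : ℝ) (k : ℕ) :
    (ascPochhammer ℝ (k+1)).eval x = x * (ascPochhammer ℝ k).eval (x + 1) := by
  rw [ascPochhammer_succ_left, eval_mul, eval_X, eval_comp, eval_add, eval_X, eval_one]

lemma kc_zero (a b : ℝ) : kc a b 0 = 1 := by
  simp [kc]

lemma kc_succ' (a b : ℝ) (k : ℕ) :
    kc a b (k+1) = (a * (ascPochhammer ℝ k).eval (a+1)) /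
      ((b * (ascPochhammer ℝ k).eval (b+1)) * ((k+1) * (Nat.factorial k))) := by
  rw [kc, poch_succ_left, poch_succ_left]
  push_cast [Nat.factorial_succ]
  ring_nf

lemma kc_shift {a b : ℝ} (hb : 0 < b) (k : ℕ) :
    ((k:ℝ)+1) * kc a b (k+1) = (a / b) * kc (a+1) (b+1) k := by
  have h1 := poch_pos (by linarith : (0:ℝ) < b + 1) k
  have h2 : ((Nat.factorial k : ℝ)) ≠ 0 := Nat.cast_ne_zero.2 (Nat.factorial_ne_zero k)
  rw [kc_succ', kc]
  field_simp

lemma kc_rec {a b : ℝ} (hb : 0 < b) (k : ℕ) :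
    kc a b (k+1) * (((b + k) * ((k:ℝ)+1))) = kc a b k * (a + k) := by
  have h1 := poch_pos hb k
  have h2 : ((Nat.factorial k : ℝ)) ≠ 0 := Nat.cast_ne_zero.2 (Nat.factorial_ne_zero k)
  have e1 : (ascPochhammer ℝ (k+1)).eval a = (ascPochhammer ℝ k).eval a * (a + k) :=
    poch_succ_eval a k
  have e2 : (ascPochhammer ℝ (k+1)).eval b = (ascPochhammer ℝ k).eval b * (b + k) :=
    poch_succ_eval b k
  have hbk : (0:ℝ) < b + k := by positivity
  rw [kc, kc, e1, e2]
  push_cast [Nat.factorial_succ]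
  field_simp

lemma summable_kc {a b : ℝ} (hb : 0 < b) (z : ℝ) :
    Summable (fun k => ‖kc a b k * z ^ k‖) := by
  refine summable_of_ratio_norm_eventually_le (r := 1/2) (by norm_num) ?_
  obtain ⟨K, hK⟩ := exists_nat_ge (2 * (|a| + 1) * |z|)
  filter_upwards [eventually_ge_atTop (max K 1)] with k hk
  have hk1 : (1:ℕ) ≤ k := le_trans (le_max_right _ _) hk
  have hkK : (K:ℝ) ≤ k := Nat.cast_le.2 (le_trans (le_max_left _ _) hk)
  have hbk : (0:ℝ) < b + k := by positivity
  have hkk : (0:ℝ) < (k:ℝ) + 1 := by positivity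
  have hrec := kc_rec (a := a) hb k
  have hc1 : kc a b (k+1) = kc a b k * (a + k) / ((b + k) * ((k:ℝ)+1)) := by
    field_simp at hrec ⊢; linarith [hrec]
  rw [norm_norm, norm_norm, pow_succ, hc1]
  have h1 : ‖kc a b k * (a + k) / ((b + k) * ((k:ℝ)+1)) * (z ^ k * z)‖
      = ‖kc a b k * z ^ k‖ * (|a + k| * |z| / ((b + k) * ((k:ℝ)+1))) := by
    rw [Real.norm_eq_abs, Real.norm_eq_abs, abs_mul, abs_div, abs_mul, abs_mul, abs_mul,
      abs_mul, abs_of_pos hbk, abs_of_pos hkk]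
    ring
  rw [h1]
  have hbound : |a + k| * |z| / ((b + k) * ((k:ℝ)+1)) ≤ 1/2 := by
    rw [div_le_iff₀ (by positivity)]
    have h2 : |a + k| ≤ (|a| + 1) * k := by
      have : |a + k| ≤ |a| + k := abs_add_le _ _ |>.trans (by rw [abs_of_nonneg (by positivity : (0:ℝ) ≤ (k:ℝ))])
      have hk1' : (1:ℝ) ≤ k := by exact_mod_cast hk1
      nlinarith [abs_nonneg a]
    have h3 : (|a| + 1) * k * |z| ≤ 1/2 * (k * ((k:ℝ)+1)) := by
      have : 2 * (|a| + 1) * |z| ≤ (k:ℝ) + 1 := by linarith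
      nlinarith [abs_nonneg z, Nat.cast_nonneg (α := ℝ) k, abs_nonneg a]
    have h4 : (1:ℝ)/2 * (k * ((k:ℝ)+1)) ≤ 1/2 * ((b + k) * ((k:ℝ)+1)) := by nlinarith
    calc |a + k| * |z| ≤ (|a| + 1) * k * |z| := by
          apply mul_le_mul_of_nonneg_right h2 (abs_nonneg z)
      _ ≤ 1/2 * ((b + k) * ((k:ℝ)+1)) := h3.trans h4
  calc ‖kc a b k * z ^ k‖ * (|a + k| * |z| / ((b + k) * ((k:ℝ)+1)))
      ≤ ‖kc a b k * z ^ k‖ * (1/2) := by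
        apply mul_le_mul_of_nonneg_left hbound (norm_nonneg _)
    _ = 1/2 * ‖kc a b k * z ^ k‖ := by ring

lemma hasSum_kummerM {a b : ℝ} (hb : 0 < b) (z : ℝ) :
    HasSum (fun k => kc a b k * z ^ k) (kummerM a b z) := by
  rw [kummerM_eq_tsum_kc]
  exact ((summable_kc hb z).of_norm).hasSum

lemma kummerM_zero {a b : ℝ} (hb : 0 < b) : kummerM a b 0 = 1 := by
  rw [kummerM_eq_tsum_kc]
  rw [tsum_eq_single 0 (fun k hk => ?_)]
  · simp [kc_zero]
  · obtain ⟨j, rfl⟩ := Nat.exists_eq_succ_of_ne_zero hk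
    simp [pow_succ]

/-- series for the derivative -/
lemma hasSum_kummerM_deriv {a b : ℝ} (hb : 0 < b) (z : ℝ) :
    HasSum (fun k : ℕ => (((k:ℝ)+1) * kc a b (k+1)) * z ^ k)
      (a / b * kummerM (a+1) (b+1) z) := by
  have h := (hasSum_kummerM (a := a+1) (b := b+1) (by linarith) z).mul_left (a / b)
  refine h.congr_fun fun k => ?_
  rw [kc_shift hb k]; ring

lemma hasDerivAt_kummerM {a b : ℝ} (hb : 0 < b) (x : ℝ) :
    HasDerivAt (kummerM a b) (a / b * kummerM (a+1) (b+1) x) x := by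
  have hfun : kummerM a b = fun y => ∑' k : ℕ, kc a b k * y ^ k := by
    funext y; exact kummerM_eq_tsum_kc a b y
  rw [hfun]
  set t : ℝ := |x| + 1 with ht
  have hxt : x ∈ Set.Ioo (-t) t := by
    constructor <;> [skip; skip] <;> cases abs_cases x <;> simp [ht] <;> linarith [abs_nonneg x, neg_abs_le x, le_abs_self x]
  have hder : HasDerivAt (fun y => ∑' k : ℕ, kc a b k * y ^ k)
      (∑' k : ℕ, kc a b k * ((k:ℝ) * x ^ (k-1))) x := by
    refine hasDerivAt_tsum_of_isPreconnected
      (u := fun k => |kc a b k| * ((k:ℝ) * t ^ (k-1)))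
      (g := fun k y => kc a b k * y ^ k)
      (g' := fun k y => kc a b k * ((k:ℝ) * y ^ (k-1)))
      ?_ isOpen_Ioo (convex_Ioo _ _).isPreconnected
      (fun k y _ => (hasDerivAt_pow k y).const_mul _) ?_ hxt ?_ hxt
    · -- summability of the bound
      rw [← summable_nat_add_iff 1]
      have hs := (summable_kc (a := a+1) (b := b+1) (by linarith) t).mul_left |a / b|
      refine hs.congr fun k => ?_
      have h1 : (0:ℝ) < t := by positivity
      have : |kc a b (k+1)| * (((k:ℝ)+1) * t ^ k) = |(((k:ℝ)+1) * kc a b (k+1)) * t ^ k| := by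
        rw [abs_mul, abs_mul, abs_of_pos (by positivity : (0:ℝ) < (k:ℝ)+1),
          abs_of_pos (pow_pos h1 k)]
        ring
      simp only [Nat.add_sub_cancel, Nat.cast_add, Nat.cast_one]
      have h6 : ((k:ℝ)+1) * |kc a b (k+1)| = |a/b| * |kc (a+1) (b+1) k| := by
        rw [← abs_of_pos (by positivity : (0:ℝ) < (k:ℝ)+1), ← abs_mul, kc_shift hb k, abs_mul]
      rw [Real.norm_eq_abs, abs_mul, abs_of_pos (pow_pos h1 k),
        show |kc a b (k+1)| * (((k:ℝ)+1) * t ^ k) = (((k:ℝ)+1) * |kc a b (k+1)|) * t ^ k from by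
          ring, h6]
      ring
    · intro k y hy
      have h1 : |y| ≤ t := by
        rcases hy with ⟨h2, h3⟩; rw [abs_le]; constructor <;> linarith
      rw [Real.norm_eq_abs, abs_mul, abs_mul, abs_pow,
        abs_of_nonneg (by positivity : (0:ℝ) ≤ (k:ℝ))]
      have h7 : |y| ^ (k-1) ≤ t ^ (k-1) := pow_le_pow_left₀ (abs_nonneg y) h1 _
      have h8 : (0:ℝ) ≤ (k:ℝ) := by positivity
      have h9 : (0:ℝ) ≤ |y| ^ (k-1) := by positivity
      show |kc a b k| * ((k:ℝ) * |y| ^ (k-1)) ≤ |kc a b k| * ((k:ℝ) * t ^ (k-1))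
      exact mul_le_mul_of_nonneg_left (mul_le_mul_of_nonneg_left h7 h8) (abs_nonneg (kc a b k))
    · exact ((summable_kc hb x).of_norm)
  convert hder using 1
  have h2 : HasSum (fun k => kc a b k * ((k:ℝ) * x ^ (k-1))) (a / b * kummerM (a+1) (b+1) x) := by
    have h3 := hasSum_kummerM_deriv (a := a) hb x
    have h4 : HasSum (fun k : ℕ => kc a b (k+1) * (((k:ℝ)+1) * x ^ k))
        (a / b * kummerM (a+1) (b+1) x) := h3.congr_fun fun k => by ring
    have h5 : HasSum (fun n : ℕ => kc a b (n+1) * ((↑(n+1):ℝ) * x ^ (n+1-1)))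
        (a / b * kummerM (a+1) (b+1) x - ∑ i ∈ Finset.range 1, kc a b i * ((i:ℝ) * x ^ (i-1))) := by
      simpa using h4
    exact (hasSum_nat_add_iff' 1).1 h5
  exact (h2.tsum_eq).symm

lemma hasSum_succ_of_zero {f : ℕ → ℝ} {S : ℝ} (h0 : f 0 = 0)
    (h : HasSum (fun k => f (k+1)) S) : HasSum f S := by
  have h' : HasSum (fun k => f (k+1)) (S - ∑ i ∈ Finset.range 1, f i) := by
    simpa [h0] using h
  exact (hasSum_nat_add_iff' 1).1 h'

lemma kummer_ode {a b : ℝ} (hb : 0 < b) (z : ℝ) :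
    z * (a/b * ((a+1)/(b+1) * kummerM (a+2) (b+2) z))
      + (b - z) * (a/b * kummerM (a+1) (b+1) z) = a * kummerM a b z := by
  have hb1 : (0:ℝ) < b + 1 := by linarith
  have hS1 := hasSum_kummerM_deriv (a := a) hb z
  -- second derivative series
  have hS2' := (hasSum_kummerM_deriv (a := a+1) (b := b+1) hb1 z).mul_left (a/b)
  have hS2 : HasSum (fun k : ℕ => ((((k:ℝ)+1) * (((k:ℝ)+2) * kc a b (k+2))) * z ^ k))
      (a/b * ((a+1)/(b+1) * kummerM (a+1+1) (b+1+1) z)) := by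
    refine hS2'.congr_fun fun k => ?_
    have h1 : ((↑(k+1):ℝ)+1) * kc a b ((k+1)+1) = (a / b) * kc (a+1) (b+1) (k+1) :=
      kc_shift hb (k+1)
    push_cast at h1
    have : (a/b) * ((((k:ℝ)+1) * kc (a+1) (b+1) (k+1)) * z ^ k)
        = (((k:ℝ)+1) * ((a/b) * kc (a+1) (b+1) (k+1))) * z ^ k := by ring
    rw [this, ← h1]; ring
  -- z * S2 with shifted index
  have hzS2 : HasSum (fun k : ℕ => ((k:ℝ) * (((k:ℝ)+1) * kc a b (k+1))) * z ^ k)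
      (z * (a/b * ((a+1)/(b+1) * kummerM (a+1+1) (b+1+1) z))) := by
    refine hasSum_succ_of_zero (by simp) ?_
    refine (hS2.mul_left z).congr_fun fun k => ?_
    push_cast
    ring
  -- z * S1 with shifted index
  have hzS1 : HasSum (fun k : ℕ => ((k:ℝ) * kc a b k) * z ^ k)
      (z * (a/b * kummerM (a+1) (b+1) z)) := by
    refine hasSum_succ_of_zero (by simp) ?_
    refine (hS1.mul_left z).congr_fun fun k => ?_
    push_cast
    ring
  have hbS1 := hS1.mul_left b
  have hM := (hasSum_kummerM (a := a) hb z).mul_left a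
  have hcomb := ((hzS2.add hbS1).sub hzS1).sub hM
  have hzero : ∀ k : ℕ, (0:ℝ) =
      ((k:ℝ) * (((k:ℝ)+1) * kc a b (k+1))) * z ^ k + b * ((((k:ℝ)+1) * kc a b (k+1)) * z ^ k)
        - ((k:ℝ) * kc a b k) * z ^ k - a * (kc a b k * z ^ k) := by
    intro k
    have h := kc_rec (a := a) hb k
    linear_combination (- z ^ k) * h
  have h0 := (hcomb.congr_fun hzero).unique hasSum_zero
  have h2 : (a+1+1) = a + 2 := by ring
  have h3 : (b+1+1) = b + 2 := by ring
  rw [h2, h3] at h0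
  linarith [h0]

lemma kummerM_contig {a b : ℝ} (hb : 0 < b) (z : ℝ) :
    kummerM (a+1) b z = kummerM a b z + (z/b) * kummerM (a+1) (b+1) z := by
  have hb1 : (0:ℝ) < b + 1 := by linarith
  have hM := hasSum_kummerM (a := a) hb z
  have hM1 := (hasSum_kummerM (a := a+1) (b := b+1) hb1 z).mul_left (z/b)
  -- shifted version of (z/b) * M1
  have hsh : HasSum (fun k : ℕ =>
      (match k with | 0 => (0:ℝ) | (j+1) => (1/b) * kc (a+1) (b+1) j * z^(j+1)))
      ((z/b) * kummerM (a+1) (b+1) z) := by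
    refine hasSum_succ_of_zero rfl ?_
    refine hM1.congr_fun fun k => ?_
    show (match k + 1 with | 0 => (0:ℝ) | (j+1) => (1/b) * kc (a+1) (b+1) j * z^(j+1))
        = z/b * (kc (a+1) (b+1) k * z ^ k)
    show (1/b) * kc (a+1) (b+1) k * z^(k+1) = z/b * (kc (a+1) (b+1) k * z ^ k)
    ring
  have hcomb := hM.add hsh
  have hkey : ∀ k : ℕ,
      kc (a+1) b k * z ^ k =
      kc a b k * z ^ k +
        (match k with | 0 => (0:ℝ) | (j+1) => (1/b) * kc (a+1) (b+1) j * z^(j+1)) := by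
    intro k
    cases k with
    | zero => simp [kc_zero]
    | succ j =>
      show kc (a+1) b (j+1) * z ^ (j+1)
          = kc a b (j+1) * z ^ (j+1) + (1/b) * kc (a+1) (b+1) j * z^(j+1)
      have hident : kc a b (j+1) + (1/b) * kc (a+1) (b+1) j = kc (a+1) b (j+1) := by
        have e1 : (ascPochhammer ℝ (j+1)).eval a = a * (ascPochhammer ℝ j).eval (a+1) :=
          poch_succ_left a j
        have e2 : (ascPochhammer ℝ (j+1)).eval b = b * (ascPochhammer ℝ j).eval (b+1) :=
          poch_succ_left b j
        have e3 : (ascPochhammer ℝ (j+1)).eval (a+1) =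
            (ascPochhammer ℝ j).eval (a+1) * ((a+1) + j) := poch_succ_eval (a+1) j
        have hp1 := poch_pos hb1 j
        have hf : ((Nat.factorial (j+1) : ℝ)) = ((j:ℝ)+1) * (Nat.factorial j) := by
          push_cast [Nat.factorial_succ]; ring
        have hfne : ((Nat.factorial j : ℝ)) ≠ 0 := Nat.cast_ne_zero.2 (Nat.factorial_ne_zero j)
        unfold kc
        rw [e1, e2, e3, hf]
        field_simp
        ring
      have this : kc a b (j+1) * z ^ (j+1) + (1/b) * kc (a+1) (b+1) j * z^(j+1)
          = kc (a+1) b (j+1) * z ^ (j+1) := by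
        calc kc a b (j+1) * z ^ (j+1) + (1/b) * kc (a+1) (b+1) j * z^(j+1)
          = (kc a b (j+1) + (1/b) * kc (a+1) (b+1) j) * z ^ (j+1) := by ring
        _ = kc (a+1) b (j+1) * z ^ (j+1) := by rw [hident]
      linarith [this]
  exact ((hcomb.congr_fun hkey).unique (hasSum_kummerM (a := a+1) hb z)).symm

lemma kummerM_neg_pos {c b : ℝ} (hc : 0 < c) (hcb : c ≤ b) {x : ℝ} (hx : 0 ≤ x) :
    0 < kummerM c b (-x) := by
  have hb : 0 < b := lt_of_lt_of_le hc hcb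
  have hb1 : (0:ℝ) < b + 1 := by linarith
  set y : ℝ → ℝ := fun s => kummerM c b (-s) with hy_def
  set Y1 : ℝ → ℝ := fun s => -(c / b * kummerM (c+1) (b+1) (-s)) with hY1_def
  set Y2 : ℝ → ℝ := fun s => c/b * ((c+1)/(b+1) * kummerM (c+2) (b+2) (-s)) with hY2_def
  have hyd : ∀ s : ℝ, HasDerivAt y (Y1 s) s := by
    intro s
    have h1 := (hasDerivAt_kummerM (a := c) hb (-s)).comp s (hasDerivAt_neg s)
    simp [hY1_def, mul_comm] at h1 ⊢; exact h1
  have hY1d : ∀ s : ℝ, HasDerivAt Y1 (Y2 s) s := by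
    intro s
    have h1 := ((hasDerivAt_kummerM (a := c+1) (b := b+1) hb1 (-s)).comp s
      (hasDerivAt_neg s)).const_mul (c/b)
    have h2 := h1.neg
    convert h2 using 1
    · rfl
    · rfl
    · rfl
    simp only [hY2_def]
    ring
  have hode : ∀ s : ℝ, s * Y2 s + (b + s) * Y1 s + c * y s = 0 := by
    intro s
    have h := kummer_ode (a := c) hb (-s)
    simp only [hy_def, hY1_def, hY2_def]
    ring_nf
    ring_nf at h
    linarith
  have hy0 : y 0 = 1 := by simp [hy_def, kummerM_zero hb]
  have hycont : Continuous y := by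
    have : Differentiable ℝ y := fun s => (hyd s).differentiableAt
    exact this.continuous
  -- main contradiction argument
  by_contra hcon
  push_neg at hcon
  have hxpos : 0 < x := by
    rcases eq_or_lt_of_le hx with h | h
    · exfalso
      rw [← h] at hcon
      have h2 : y 0 ≤ 0 := by simpa [hy_def] using hcon
      rw [hy0] at h2; norm_num at h2
    · exact h
  set A : Set ℝ := {s | 0 ≤ s ∧ s ≤ x ∧ y s ≤ 0} with hA_def
  have hAne : A.Nonempty := ⟨x, hx, le_refl x, hcon⟩
  have hAbdd : BddBelow A := ⟨0, fun s hs => hs.1⟩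
  have hAclosed : IsClosed A := by
    have h1 : A = Icc 0 x ∩ y ⁻¹' (Iic 0) := by
      ext s; simp [hA_def, and_assoc]
    rw [h1]
    exact isClosed_Icc.inter (IsClosed.preimage hycont isClosed_Iic)
  set τ := sInf A with hτ_def
  have hτA : τ ∈ A := hAclosed.csInf_mem hAne hAbdd
  have hyτ : y τ ≤ 0 := hτA.2.2
  have hτpos : 0 < τ := by
    rcases lt_or_ge 0 τ with h | h
    · exact h
    · exfalso
      have : τ = 0 := le_antisymm h hτA.1
      rw [this, hy0] at hyτ; norm_num at hyτ
  have hypos : ∀ s, 0 ≤ s → s < τ → 0 < y s := by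
    intro s hs0 hsτ
    by_contra hys
    push_neg at hys
    have hsA : s ∈ A := ⟨hs0, le_trans hsτ.le hτA.2.1, hys⟩
    exact absurd (csInf_le hAbdd hsA) (not_le.2 hsτ)
  -- q s = s^b * (y s + Y1 s), q' = (b - c) s^(b-1) y ≥ 0 on (0,τ)
  set q : ℝ → ℝ := fun s => s ^ (b:ℝ) * (y s + Y1 s) with hq_def
  have hqd : ∀ s ∈ Ioo (0:ℝ) τ, HasDerivAt q ((b - c) * s ^ (b - 1) * y s) s := by
    intro s hs
    have hs0 : s ≠ 0 := ne_of_gt hs.1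
    have h1 : HasDerivAt (fun u : ℝ => u ^ (b:ℝ)) (b * s ^ (b - 1)) s :=
      Real.hasDerivAt_rpow_const (Or.inl hs0)
    have h2 := h1.mul ((hyd s).add (hY1d s))
    have hode' := hode s
    convert h2 using 1
    · rfl
    · rfl
    · rfl
    have hsb : s * s ^ (b - 1) = s ^ (b:ℝ) := by
      rw [Real.rpow_sub hs.1, Real.rpow_one]
      field_simp
    rw [Pi.add_apply]
    linear_combination (-(s ^ (b-1))) * hode' + (Y1 s + Y2 s) * hsb
  have hY1cont : Continuous Y1 := by
    have : Differentiable ℝ Y1 := fun s => (hY1d s).differentiableAt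
    exact this.continuous
  have hqcont : Continuous q := by
    refine Continuous.mul ?_ (hycont.add hY1cont)
    exact continuous_iff_continuousAt.2 fun s => Real.continuousAt_rpow_const s b (Or.inr hb.le)
  have hqmono : MonotoneOn q (Icc 0 τ) := by
    refine monotoneOn_of_deriv_nonneg (convex_Icc 0 τ) hqcont.continuousOn
      (fun s hs => ?_) (fun s hs => ?_)
    · rw [interior_Icc] at hs
      exact ((hqd s hs).differentiableAt).differentiableWithinAt
    · rw [interior_Icc] at hs
      rw [(hqd s hs).deriv]
      have h1 : 0 ≤ b - c := by linarith
      have h2 : (0:ℝ) ≤ s ^ (b - 1) := Real.rpow_nonneg hs.1.le _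
      have h3 : 0 < y s := hypos s hs.1.le hs.2
      positivity
  have hq0 : q 0 = 0 := by
    simp only [hq_def]
    rw [Real.zero_rpow (ne_of_gt hb)]
    ring
  have hsum_nonneg : ∀ s ∈ Ioo (0:ℝ) τ, 0 ≤ y s + Y1 s := by
    intro s hs
    have h1 : q 0 ≤ q s := hqmono ⟨le_refl 0, hτpos.le⟩ ⟨hs.1.le, hs.2.le⟩ hs.1.le
    rw [hq0] at h1
    have h2 : (0:ℝ) < s ^ (b:ℝ) := Real.rpow_pos_of_pos hs.1 _
    have h3 : q s = s ^ (b:ℝ) * (y s + Y1 s) := rfl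
    rw [h3] at h1
    by_contra hneg
    push_neg at hneg
    nlinarith
  set v : ℝ → ℝ := fun s => Real.exp s * y s with hv_def
  have hvd : ∀ s : ℝ, HasDerivAt v (Real.exp s * y s + Real.exp s * Y1 s) s := by
    intro s
    exact (Real.hasDerivAt_exp s).mul (hyd s)
  have hvmono : MonotoneOn v (Icc 0 τ) := by
    refine monotoneOn_of_deriv_nonneg (convex_Icc 0 τ)
      ((Real.continuous_exp.mul hycont).continuousOn)
      (fun s hs => ((hvd s).differentiableAt).differentiableWithinAt)
      (fun s hs => ?_)
    rw [interior_Icc] at hs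
    rw [(hvd s).deriv]
    have h1 := hsum_nonneg s hs
    have h2 := Real.exp_pos s
    nlinarith
  have hv01 : v 0 ≤ v τ := hvmono ⟨le_refl 0, hτpos.le⟩ ⟨hτpos.le, le_refl τ⟩ hτpos.le
  have hv0 : v 0 = 1 := by simp [hv_def, hy0]
  rw [hv0] at hv01
  have : v τ = Real.exp τ * y τ := rfl
  nlinarith [Real.exp_pos τ]

/-- For `N ≥ 3` and `0 < α ≤ N - 2` the Barenblatt profile is globally given by a
single Kummer function, `α f + η f' > 0` for all `η > 0`, and `f > 0`. -/
theorem barenblatt_profile_small_alpha (N : ℕ) (hN : 3 ≤ N) (γ α : ℝ)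
    (hγ₁ : -1 < γ) (hγ₂ : γ < 1) (hα : 0 < α) (hα2 : α ≤ (N : ℝ) - 2)
    (f f' f'' : ℝ → ℝ) (hf : IsBarenblattProfile N γ α f f' f'') :
    (∀ η : ℝ, 0 ≤ η → f η = kummerM (α/2) ((N : ℝ)/2) (-(1 - γ) * η ^ 2 / 4)) ∧
    (∀ η : ℝ, 0 < η → 0 < α * f η + η * f' η) ∧
    (∀ η : ℝ, 0 ≤ η → 0 < f η) := by
  obtain ⟨hfd, hf'c, hf''d, hf0, hf'0, hODE⟩ := hf
  set a : ℝ := α/2 with ha_def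
  set b : ℝ := (N:ℝ)/2 with hb_def
  have hN3 : (3:ℝ) ≤ (N:ℝ) := by exact_mod_cast hN
  have ha : 0 < a := by simp only [ha_def]; linarith
  have hb : 0 < b := by simp only [hb_def]; linarith
  have hb1 : (0:ℝ) < b + 1 := by linarith
  have hab1 : a + 1 ≤ b := by simp only [ha_def, hb_def]; linarith
  have hab : a ≤ b := by linarith
  have hγ : (0:ℝ) < 1 - γ := by linarith
  -- the candidate solution and its derivatives
  set F : ℝ → ℝ := fun η => kummerM a b (-(1 - γ) * η ^ 2 / 4) with hF_def
  set F1 : ℝ → ℝ := fun η =>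
    a/b * kummerM (a+1) (b+1) (-(1 - γ) * η ^ 2 / 4) * (-(1-γ)*η/2) with hF1_def
  set F2 : ℝ → ℝ := fun η =>
    a/b * ((a+1)/(b+1) * kummerM (a+2) (b+2) (-(1 - γ) * η ^ 2 / 4)) * ((1-γ)*η/2)^2
      + a/b * kummerM (a+1) (b+1) (-(1 - γ) * η ^ 2 / 4) * (-(1-γ)/2) with hF2_def
  have hzd : ∀ η : ℝ, HasDerivAt (fun η : ℝ => -(1 - γ) * η ^ 2 / 4) (-(1-γ)*η/2) η := by
    intro η
    have h := (hasDerivAt_pow 2 η).const_mul (-(1-γ)/4)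
    convert h using 1
    · rfl
    · rfl
    · funext t; ring
    · push_cast; ring
  have hFd : ∀ η : ℝ, HasDerivAt F (F1 η) η := by
    intro η
    exact ((hasDerivAt_kummerM (a := a) hb _).comp η (hzd η))
  have hF1d : ∀ η : ℝ, HasDerivAt F1 (F2 η) η := by
    intro η
    have h1 : HasDerivAt (fun η : ℝ => a/b * kummerM (a+1) (b+1) (-(1 - γ) * η ^ 2 / 4))
        (a/b * ((a+1)/(b+1) * kummerM (a+2) (b+2) (-(1 - γ) * η ^ 2 / 4)) * (-(1-γ)*η/2)) η := by
      have := (((hasDerivAt_kummerM (a := a+1) (b := b+1) hb1 _).comp η (hzd η))).const_mul (a/b)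
      convert this using 1
      · rfl
      · rfl
      · rfl
      ring
    have h2 : HasDerivAt (fun η : ℝ => -(1-γ)*η/2) (-(1-γ)/2) η := by
      have := (hasDerivAt_id η).const_mul (-(1-γ)/2)
      convert this using 1
      · rfl
      · rfl
      · funext t; simp only [id_eq]; ring
      · simp only [id_eq, mul_one]
    have h3 := h1.mul h2
    convert h3 using 1
    · rfl
    · rfl
    · rfl
    simp only [hF2_def]
    ring
  have hFcont : Continuous F := by
    have : Differentiable ℝ F := fun η => (hFd η).differentiableAt
    exact this.continuous
  have hF1cont : Continuous F1 := by
    have : Differentiable ℝ F1 := fun η => (hF1d η).differentiableAt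
    exact this.continuous
  -- ODE for F (multiplied by η)
  have hFode : ∀ η : ℝ,
      η * F2 η + ((N:ℝ) - 1) * F1 η + ((1-γ)/2) * η * (α * F η + η * F1 η) = 0 := by
    intro η
    have h := kummer_ode (a := a) hb (-(1 - γ) * η ^ 2 / 4)
    have hN2b : (N:ℝ) = 2 * b := by simp only [hb_def]; ring
    have hα2a : α = 2 * a := by simp only [ha_def]; ring
    rw [hN2b, hα2a]
    simp only [hF_def, hF1_def, hF2_def]
    linear_combination (-(1-γ)*η) * h
  have hF0 : F 0 = 1 := by
    have : -(1 - γ) * (0:ℝ) ^ 2 / 4 = 0 := by ring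
    simp only [hF_def, this]
    exact kummerM_zero hb
  have hFpos : ∀ η : ℝ, 0 < F η := by
    intro η
    have h1 : (0:ℝ) ≤ (1 - γ) * η ^ 2 / 4 := by positivity
    have h2 := kummerM_neg_pos ha hab h1
    have h3 : -((1 - γ) * η ^ 2 / 4) = -(1 - γ) * η ^ 2 / 4 := by ring
    rw [h3] at h2
    exact h2
  have hGF : ∀ η : ℝ, α * F η + η * F1 η
      = α * kummerM (a+1) b (-(1 - γ) * η ^ 2 / 4) := by
    intro η
    have h := kummerM_contig (a := a) hb (-(1 - γ) * η ^ 2 / 4)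
    have hα2a : α = 2 * a := by simp only [ha_def]; ring
    rw [hα2a]
    simp only [hF_def, hF1_def]
    linear_combination (-2*a) * h
  have hGFpos : ∀ η : ℝ, 0 < α * F η + η * F1 η := by
    intro η
    rw [hGF η]
    have h1 : (0:ℝ) ≤ (1 - γ) * η ^ 2 / 4 := by positivity
    have h2 := kummerM_neg_pos (by linarith : (0:ℝ) < a + 1) hab1 h1
    have h3 : -((1 - γ) * η ^ 2 / 4) = -(1 - γ) * η ^ 2 / 4 := by ring
    rw [h3] at h2
    positivity
  have hfc : ContinuousOn f (Ici 0) := fun η hη => (hfd η hη).continuousWithinAt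
  -- key lemma: if α f + η f' > 0 on (0,θ) then f = F on [0,θ] and f' = F1 on (0,θ)
  have key : ∀ θ : ℝ, 0 < θ → (∀ t, 0 < t → t < θ → 0 < α * f t + t * f' t) →
      (∀ t, 0 ≤ t → t ≤ θ → f t = F t) ∧ (∀ t, 0 < t → t < θ → f' t = F1 t) := by
    intro θ hθ hgpos
    have hODE' : ∀ t, 0 < t → t < θ →
        t * f'' t + ((N:ℝ) - 1) * f' t + ((1-γ)/2) * t * (α * f t + t * f' t) = 0 := by
      intro t ht htθ
      have h := hODE t ht
      rw [abs_of_pos (hgpos t ht htθ)] at h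
      have ht0 : t ≠ 0 := ne_of_gt ht
      have hdiv : ((N:ℝ)-1)/t * f' t * t = ((N:ℝ)-1) * f' t := by field_simp
      linear_combination t * h - hdiv
    set W : ℝ → ℝ := fun t => t^(N-1) * (f t * F1 t - F t * f' t) with hW_def
    have hWd : ∀ t, 0 < t → t < θ → HasDerivAt W (-((1-γ)/2) * t * W t) t := by
      intro t ht htθ
      have hfdt : HasDerivAt f (f' t) t := (hfd t ht.le).hasDerivAt (Ici_mem_nhds ht)
      have hf'dt : HasDerivAt f' (f'' t) t := (hf''d t ht).hasDerivAt (Ioi_mem_nhds ht)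
      have hpow : HasDerivAt (fun s : ℝ => s^(N-1)) (((N-1 : ℕ):ℝ) * t^(N-2)) t := by
        have h := hasDerivAt_pow (N-1) t
        convert h using 2
        · rfl
        · rfl
      have hinner : HasDerivAt (fun s => f s * F1 s - F s * f' s)
          (f' t * F1 t + f t * F2 t - (F1 t * f' t + F t * f'' t)) t :=
        (hfdt.mul (hF1d t)).sub ((hFd t).mul hf'dt)
      have h := hpow.mul hinner
      have hcast : ((N-1:ℕ):ℝ) = (N:ℝ) - 1 := by
        have h1 : (1:ℕ) ≤ N := by omega
        rw [Nat.cast_sub h1, Nat.cast_one]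
      have hpows : t^(N-1) = t^(N-2) * t := by
        rw [← pow_succ]
        congr 1
        omega
      convert h using 1
      · rfl
      · rfl
      · rfl
      simp only [hW_def]
      rw [hcast]
      simp only [hpows]
      have e1 := hODE' t ht htθ
      have e2 := hFode t
      linear_combination (t^(N-2) * F t) * e1 - (t^(N-2) * f t) * e2
    set V : ℝ → ℝ := fun t => W t * Real.exp ((1-γ)/4 * t^2) with hV_def
    have hVd : ∀ t, 0 < t → t < θ → HasDerivAt V 0 t := by
      intro t ht htθ
      have h1 : HasDerivAt (fun s : ℝ => (1-γ)/4 * s^2) ((1-γ)/2 * t) t := by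
        have h2 := (hasDerivAt_pow 2 t).const_mul ((1-γ)/4)
        convert h2 using 1
        · rfl
        · rfl
        push_cast
        ring
      have hexp : HasDerivAt (fun s : ℝ => Real.exp ((1-γ)/4 * s^2))
          (Real.exp ((1-γ)/4 * t^2) * ((1-γ)/2 * t)) t :=
        (Real.hasDerivAt_exp _).comp t h1
      have h := (hWd t ht htθ).mul hexp
      convert h using 1
      · rfl
      · rfl
      · rfl
      ring
    have hWcont : ContinuousOn W (Icc 0 θ) := by
      simp only [hW_def]
      have hsub : Icc (0:ℝ) θ ⊆ Ici 0 := Icc_subset_Ici_self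
      exact (continuous_pow (N-1)).continuousOn.mul
        (((hfc.mono hsub).mul hF1cont.continuousOn).sub
          (hFcont.continuousOn.mul (hf'c.mono hsub)))
    have hVcont : ContinuousOn V (Icc 0 θ) := by
      simp only [hV_def]
      exact hWcont.mul
        ((Real.continuous_exp.comp (continuous_const.mul (continuous_pow 2))).continuousOn)
    have hVconst : ∀ t ∈ Icc 0 θ, V t = V 0 := by
      have hconv : Convex ℝ (Icc (0:ℝ) θ) := convex_Icc 0 θ
      have hdiff : ∀ t ∈ interior (Icc (0:ℝ) θ), HasDerivAt V 0 t := by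
        intro t ht
        rw [interior_Icc] at ht
        exact hVd t ht.1 ht.2
      have hmono : MonotoneOn V (Icc 0 θ) := by
        refine monotoneOn_of_deriv_nonneg hconv hVcont
          (fun t ht => (hdiff t ht).differentiableAt.differentiableWithinAt)
          (fun t ht => ?_)
        rw [(hdiff t ht).deriv]
      have hanti : AntitoneOn V (Icc 0 θ) := by
        refine antitoneOn_of_deriv_nonpos hconv hVcont
          (fun t ht => (hdiff t ht).differentiableAt.differentiableWithinAt)
          (fun t ht => ?_)
        rw [(hdiff t ht).deriv]
      intro t ht
      have h0 : (0:ℝ) ∈ Icc (0:ℝ) θ := ⟨le_refl 0, hθ.le⟩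
      exact le_antisymm (hanti h0 ht ht.1) (hmono h0 ht ht.1)
    have hV0 : V 0 = 0 := by
      have hNz : N - 1 ≠ 0 := by omega
      simp [hV_def, hW_def, zero_pow hNz]
    have hWzero : ∀ t, 0 < t → t < θ → f t * F1 t - F t * f' t = 0 := by
      intro t ht htθ
      have h1 : V t = 0 := (hVconst t ⟨ht.le, htθ.le⟩).trans hV0
      have h2 : W t * Real.exp ((1-γ)/4 * t^2) = 0 := h1
      have h3 : W t = 0 := by
        rcases mul_eq_zero.1 h2 with h | h
        · exact h
        · exact absurd h (ne_of_gt (Real.exp_pos _))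
      have h4 : t^(N-1) * (f t * F1 t - F t * f' t) = 0 := h3
      rcases mul_eq_zero.1 h4 with h | h
      · exact absurd h (ne_of_gt (pow_pos ht _))
      · exact h
    have hfeq : ∀ t, 0 ≤ t → t ≤ θ → f t = F t := by
      set R : ℝ → ℝ := fun t => f t / F t with hR_def
      have hRd : ∀ t, 0 < t → t < θ → HasDerivAt R 0 t := by
        intro t ht htθ
        have hfdt : HasDerivAt f (f' t) t := (hfd t ht.le).hasDerivAt (Ici_mem_nhds ht)
        have h := hfdt.div (hFd t) (ne_of_gt (hFpos t))
        convert h using 1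
        · rfl
        · rfl
        · rfl
        symm
        rw [_root_.div_eq_zero_iff]
        left
        have h3 := hWzero t ht htθ
        linarith
      have hRcont : ContinuousOn R (Icc 0 θ) := by
        simp only [hR_def]
        exact (hfc.mono Icc_subset_Ici_self).div hFcont.continuousOn
          (fun t _ => ne_of_gt (hFpos t))
      have hRconst : ∀ t ∈ Icc 0 θ, R t = R 0 := by
        have hconv : Convex ℝ (Icc (0:ℝ) θ) := convex_Icc 0 θ
        have hdiff : ∀ t ∈ interior (Icc (0:ℝ) θ), HasDerivAt R 0 t := by
          intro t ht
          rw [interior_Icc] at ht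
          exact hRd t ht.1 ht.2
        have hmono : MonotoneOn R (Icc 0 θ) := by
          refine monotoneOn_of_deriv_nonneg hconv hRcont
            (fun t ht => (hdiff t ht).differentiableAt.differentiableWithinAt)
            (fun t ht => ?_)
          rw [(hdiff t ht).deriv]
        have hanti : AntitoneOn R (Icc 0 θ) := by
          refine antitoneOn_of_deriv_nonpos hconv hRcont
            (fun t ht => (hdiff t ht).differentiableAt.differentiableWithinAt)
            (fun t ht => ?_)
          rw [(hdiff t ht).deriv]
        intro t ht
        have h0 : (0:ℝ) ∈ Icc (0:ℝ) θ := ⟨le_refl 0, hθ.le⟩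
        exact le_antisymm (hanti h0 ht ht.1) (hmono h0 ht ht.1)
      intro t ht htθ
      have h1 : R t = R 0 := hRconst t ⟨ht, htθ⟩
      have h2 : R 0 = 1 := by
        show f 0 / F 0 = 1
        rw [hf0, hF0]
        norm_num
      have h3 : f t / F t = 1 := by rw [← h2]; exact h1
      exact (div_eq_one_iff_eq (ne_of_gt (hFpos t))).1 h3
    refine ⟨hfeq, fun t ht htθ => ?_⟩
    have h3 := hWzero t ht htθ
    rw [hfeq t ht.le htθ.le] at h3
    have h5 : F t * (F1 t - f' t) = 0 := by linarith
    rcases mul_eq_zero.1 h5 with h | h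
    · exact absurd h (ne_of_gt (hFpos t))
    · linarith
  -- positivity of α f + η f' everywhere
  have hgpos_all : ∀ η : ℝ, 0 < η → 0 < α * f η + η * f' η := by
    by_contra hcon
    push_neg at hcon
    obtain ⟨η₀, hη₀pos, hη₀⟩ := hcon
    -- small interval where positive
    have hg0 : α * f 0 + 0 * f' 0 = α := by rw [hf0, hf'0]; ring
    have hgcont : ContinuousOn (fun t => α * f t + t * f' t) (Ici 0) :=
      (continuousOn_const.mul hfc).add (continuousOn_id.mul hf'c)
    have hev : ∀ᶠ t in 𝓝[Ici 0] (0:ℝ), 0 < α * f t + t * f' t := by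
      have h1 : ContinuousWithinAt (fun t => α * f t + t * f' t) (Ici 0) 0 :=
        hgcont 0 (self_mem_Ici)
      have h2 : Tendsto (fun t => α * f t + t * f' t) (𝓝[Ici 0] 0)
          (𝓝 (α * f 0 + 0 * f' 0)) := h1
      rw [hg0] at h2
      exact h2.eventually (eventually_gt_nhds hα)
    obtain ⟨U, hU, hU0, hUsub⟩ := mem_nhdsWithin.1 hev
    obtain ⟨ε, hε, hball⟩ := Metric.isOpen_iff.1 hU 0 hU0
    have hpos_small : ∀ t, 0 ≤ t → t ≤ ε/2 → 0 < α * f t + t * f' t := by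
      intro t ht htε
      refine hUsub ⟨hball ?_, ht⟩
      rw [Metric.mem_ball, Real.dist_eq, sub_zero, abs_of_nonneg ht]
      linarith
    have hε2 : 0 < ε/2 := by linarith
    set A : Set ℝ := Icc (ε/2) η₀ ∩ (fun t => α * f t + t * f' t) ⁻¹' (Iic 0) with hA_def
    have hη₀ε : ε/2 < η₀ := by
      by_contra h
      push_neg at h
      have := hpos_small η₀ hη₀pos.le h
      linarith
    have hAne : A.Nonempty := ⟨η₀, ⟨hη₀ε.le, le_refl _⟩, hη₀⟩
    have hAbdd : BddBelow A := ⟨ε/2, fun s hs => hs.1.1⟩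
    have hAclosed : IsClosed A :=
      (hgcont.mono (Icc_subset_Ici_self.trans (Ici_subset_Ici.2 hε2.le))).preimage_isClosed_of_isClosed
        isClosed_Icc isClosed_Iic
    set τ := sInf A with hτ_def
    have hτA : τ ∈ A := hAclosed.csInf_mem hAne hAbdd
    have hτpos : 0 < τ := lt_of_lt_of_le hε2 hτA.1.1
    have hgpos_below : ∀ t, 0 < t → t < τ → 0 < α * f t + t * f' t := by
      intro t ht htτ
      rcases le_or_gt t (ε/2) with h | h
      · exact hpos_small t ht.le h
      · by_contra hneg
        push_neg at hneg
        have htA : t ∈ A := ⟨⟨h.le, le_trans htτ.le hτA.1.2⟩, hneg⟩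
        exact absurd (csInf_le hAbdd htA) (not_le.2 htτ)
    obtain ⟨hfeq, hf'eq⟩ := key τ hτpos hgpos_below
    -- f' τ = F1 τ by continuity
    have hne : (𝓝[Ioo (0:ℝ) τ] τ).NeBot := right_nhdsWithin_Ioo_neBot hτpos
    have h1 : Tendsto f' (𝓝[Ioo (0:ℝ) τ] τ) (𝓝 (f' τ)) :=
      (hf'c τ hτpos.le).mono_left (nhdsWithin_mono τ (fun s hs => hs.1.le))
    have h2 : Tendsto F1 (𝓝[Ioo (0:ℝ) τ] τ) (𝓝 (F1 τ)) :=
      (hF1cont.continuousAt).continuousWithinAt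
    have h3 : f' =ᶠ[𝓝[Ioo (0:ℝ) τ] τ] F1 :=
      eventually_of_mem self_mem_nhdsWithin (fun s hs => hf'eq s hs.1 hs.2)
    have hf'τ : f' τ = F1 τ := tendsto_nhds_unique (h1.congr' h3) h2
    have hfτ : f τ = F τ := hfeq τ hτpos.le (le_refl τ)
    have hgτ : α * f τ + τ * f' τ ≤ 0 := hτA.2
    rw [hfτ, hf'τ] at hgτ
    exact absurd (hGFpos τ) (not_lt.2 hgτ)
  refine ⟨?_, hgpos_all, ?_⟩
  · intro η hη
    have h := (key (η + 1) (by linarith) (fun t ht _ => hgpos_all t ht)).1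
    exact h η hη (by linarith)
  · intro η hη
    have h := (key (η + 1) (by linarith) (fun t ht _ => hgpos_all t ht)).1
    rw [h η hη (by linarith)]
    exact hFpos η
end

section
/- Let f be a Barenblatt profile with exponent α. If η₀ > 0 satisfies α·f(η₀) + η₀·f'(η₀) = 0, then f(η₀) ≠ 0. (Equivalently: if f(η₀) = 0 and f'(η₀) = 0 at some η₀ > 0, then by uniqueness for the profile ODE f would vanish identically, contradicting f(0) = 1.) -/
/-- The vector field for the first-order system associated to the Barenblatt ODE,
with the time variable clamped to `[a, b]`. -/
noncomputable def bbV (N γ α a b : ℝ) (t : ℝ) (p : ℝ × ℝ) : ℝ × ℝ :=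
  (p.2, -((N - 1)/(max a (min t b))) * p.2
    - (1/2) * (α * p.1 + (max a (min t b)) * p.2)
    + (γ/2) * |α * p.1 + (max a (min t b)) * p.2|)

lemma bbV_lipschitz (N γ α a b : ℝ) (hN : 1 ≤ N) (ha : 0 < a) (hab : a ≤ b)
    (hα : 0 ≤ α) (hγ : |γ| ≤ 1) (t : ℝ) :
    LipschitzWith (((N - 1)/a + α + b + 1).toNNReal) (bbV N γ α a b t) := by
  have hC0 : (0:ℝ) ≤ (N - 1)/a + α + b + 1 := by
    have h1 : (0:ℝ) ≤ (N - 1)/a := div_nonneg (by linarith) ha.le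
    linarith
  apply LipschitzWith.of_dist_le_mul
  intro p q
  rw [Real.coe_toNNReal _ hC0]
  set τ : ℝ := max a (min t b) with hτdef
  have hτa : a ≤ τ := le_max_left _ _
  have hτb : τ ≤ b := max_le hab (min_le_right _ _)
  have hτ0 : 0 < τ := lt_of_lt_of_le ha hτa
  have hdiv : (N - 1)/τ ≤ (N - 1)/a := div_le_div_of_nonneg_left (by linarith) ha hτa
  have hdiv0 : (0:ℝ) ≤ (N - 1)/τ := div_nonneg (by linarith) hτ0.le
  rw [Prod.dist_eq, Prod.dist_eq, Real.dist_eq, Real.dist_eq, Real.dist_eq, Real.dist_eq]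
  set m : ℝ := max |p.1 - q.1| |p.2 - q.2| with hm
  have hm1 : |p.1 - q.1| ≤ m := le_max_left _ _
  have hm2 : |p.2 - q.2| ≤ m := le_max_right _ _
  have hm0 : 0 ≤ m := le_trans (abs_nonneg _) hm1
  have hC1 : (1:ℝ) ≤ (N - 1)/a + α + b + 1 := by
    have h1 : (0:ℝ) ≤ (N - 1)/a := div_nonneg (by linarith) ha.le
    linarith
  apply max_le
  · calc |(bbV N γ α a b t p).1 - (bbV N γ α a b t q).1| = |p.2 - q.2| := rfl
      _ ≤ m := hm2
      _ ≤ ((N - 1)/a + α + b + 1) * m := le_mul_of_one_le_left hm0 hC1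
  · set u : ℝ := α * p.1 + τ * p.2 with hu
    set u' : ℝ := α * q.1 + τ * q.2 with hu'
    have hkey : (bbV N γ α a b t p).2 - (bbV N γ α a b t q).2 =
        (-((N - 1)/τ) * (p.2 - q.2) - (1/2) * (u - u')) + (γ/2) * (|u| - |u'|) := by
      simp only [bbV, hu, hu']
      ring
    have habs1 : |(-((N - 1)/τ) * (p.2 - q.2) - (1/2) * (u - u')) + (γ/2) * (|u| - |u'|)|
        ≤ |(-((N - 1)/τ)) * (p.2 - q.2)| + |(1/2) * (u - u')| + |(γ/2) * (|u| - |u'|)| := by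
      calc _ ≤ |(-((N - 1)/τ) * (p.2 - q.2) - (1/2) * (u - u'))| + |(γ/2) * (|u| - |u'|)| :=
            abs_add_le _ _
        _ ≤ _ := by
            have := abs_sub (-((N - 1)/τ) * (p.2 - q.2)) ((1/2) * (u - u'))
            linarith
    have huu : |u - u'| ≤ α * |p.1 - q.1| + τ * |p.2 - q.2| := by
      have : u - u' = α * (p.1 - q.1) + τ * (p.2 - q.2) := by rw [hu, hu']; ring
      rw [this]
      calc |α * (p.1 - q.1) + τ * (p.2 - q.2)|
          ≤ |α * (p.1 - q.1)| + |τ * (p.2 - q.2)| := abs_add_le _ _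
        _ = α * |p.1 - q.1| + τ * |p.2 - q.2| := by
            rw [abs_mul, abs_mul, abs_of_nonneg hα, abs_of_nonneg hτ0.le]
    have habsabs : |(|u| - |u'|)| ≤ |u - u'| := abs_abs_sub_abs_le_abs_sub _ _
    have e1 : |(-((N - 1)/τ)) * (p.2 - q.2)| = ((N - 1)/τ) * |p.2 - q.2| := by
      rw [abs_mul, abs_neg, abs_of_nonneg hdiv0]
    have e2 : |(1/2 : ℝ) * (u - u')| = (1/2) * |u - u'| := by
      rw [abs_mul]; norm_num
    have e3 : |(γ/2) * (|u| - |u'|)| ≤ (1/2) * |(|u| - |u'|)| := by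
      rw [abs_mul]
      have : |γ/2| ≤ 1/2 := by rw [abs_div]; simp; linarith [hγ]
      exact mul_le_mul_of_nonneg_right this (abs_nonneg _) |>.trans_eq rfl
    rw [hkey]
    have hτm : τ * |p.2 - q.2| ≤ b * m := by
      have : τ * |p.2 - q.2| ≤ b * |p.2 - q.2| :=
        mul_le_mul_of_nonneg_right hτb (abs_nonneg _)
      exact this.trans (mul_le_mul_of_nonneg_left hm2 (le_trans ha.le hab))
    have hcm : ((N - 1)/τ) * |p.2 - q.2| ≤ ((N - 1)/a) * m := by
      calc ((N - 1)/τ) * |p.2 - q.2| ≤ ((N - 1)/a) * |p.2 - q.2| :=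
            mul_le_mul_of_nonneg_right hdiv (abs_nonneg _)
        _ ≤ ((N - 1)/a) * m := mul_le_mul_of_nonneg_left hm2 (div_nonneg (by linarith) ha.le)
    have hαm : α * |p.1 - q.1| ≤ α * m := mul_le_mul_of_nonneg_left hm1 hα
    calc |(-((N - 1)/τ) * (p.2 - q.2) - (1/2) * (u - u')) + (γ/2) * (|u| - |u'|)|
        ≤ |(-((N - 1)/τ)) * (p.2 - q.2)| + |(1/2) * (u - u')| + |(γ/2) * (|u| - |u'|)| := habs1
      _ ≤ ((N - 1)/τ) * |p.2 - q.2| + (1/2) * |u - u'| + (1/2) * |u - u'| := by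
          rw [e1, e2]
          have := e3.trans (by linarith [mul_le_mul_of_nonneg_left habsabs (by norm_num : (0:ℝ) ≤ 1/2)] : (1/2 : ℝ) * |(|u| - |u'|)| ≤ (1/2) * |u - u'|)
          linarith
      _ = ((N - 1)/τ) * |p.2 - q.2| + |u - u'| := by ring
      _ ≤ ((N - 1)/a) * m + (α * m + b * m) := by
          have := huu
          linarith
      _ ≤ ((N - 1)/a + α + b + 1) * m := by nlinarith
  
/-- At any positive root of `α f + η f' = 0`, the Barenblatt profile does not vanish. -/
theorem barenblatt_nonzero_at_root (N : ℕ) (hN : 1 ≤ N) (γ α : ℝ)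
    (hγ₁ : -1 < γ) (hγ₂ : γ < 1) (hα : 0 < α)
    (f f' f'' : ℝ → ℝ) (hf : IsBarenblattProfile N γ α f f' f'')
    (η₀ : ℝ) (hη₀ : 0 < η₀) (hroot : α * f η₀ + η₀ * f' η₀ = 0) :
    f η₀ ≠ 0 := by
  obtain ⟨hfd, hf'c, hf'd, hf0, hf'0, hode⟩ := hf
  intro hfη
  have hf'η : f' η₀ = 0 := by
    rw [hfη, mul_zero, zero_add] at hroot
    exact (mul_eq_zero.mp hroot).resolve_left hη₀.ne'
  have hfc : ContinuousOn f (Set.Ici 0) := fun x hx => (hfd x hx).continuousWithinAt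
  have hN1 : (1:ℝ) ≤ (N:ℝ) := by exact_mod_cast hN
  have hγabs : |γ| ≤ 1 := abs_le.mpr ⟨hγ₁.le, hγ₂.le⟩
  -- uniqueness on [a, η₀] for every 0 < a < η₀
  have key : ∀ a ∈ Set.Ioo (0:ℝ) η₀, f a = 0 := by
    intro a ha
    have hsub : Set.Icc a η₀ ⊆ Set.Ici (0:ℝ) := fun x hx => le_trans ha.1.le hx.1
    have hK : ∀ t : ℝ, LipschitzOnWith (((N:ℝ) - 1)/a + α + η₀ + 1).toNNReal
        (bbV (N:ℝ) γ α a η₀ t) Set.univ := fun t =>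
      (bbV_lipschitz (N:ℝ) γ α a η₀ hN1 ha.1 ha.2.le hα.le hγabs t).lipschitzOnWith
    have hFc : ContinuousOn (fun t => (f t, f' t)) (Set.Icc a η₀) :=
      (hfc.mono hsub).prodMk (hf'c.mono hsub)
    have hF' : ∀ t ∈ Set.Ioc a η₀,
        HasDerivWithinAt (fun t => (f t, f' t))
          (bbV (N:ℝ) γ α a η₀ t (f t, f' t)) (Set.Iic t) t := by
      intro t ht
      have ht0 : 0 < t := lt_trans ha.1 ht.1
      have h1 : HasDerivAt f (f' t) t :=
        (hfd t ht0.le).hasDerivAt (Ici_mem_nhds ht0)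
      have h2 : HasDerivAt f' (f'' t) t :=
        (hf'd t ht0).hasDerivAt (Ioi_mem_nhds ht0)
      have h3 : HasDerivAt (fun t => (f t, f' t)) (f' t, f'' t) t := h1.prodMk h2
      have hτ : max a (min t η₀) = t := by
        rw [min_eq_left ht.2, max_eq_right ht.1.le]
      have heqv : bbV (N:ℝ) γ α a η₀ t (f t, f' t) = (f' t, f'' t) := by
        have hode' := hode t ht0
        simp only [bbV, hτ]
        refine Prod.ext rfl ?_
        simp only
        linarith [hode']
      rw [heqv]
      exact h3.hasDerivWithinAt
    have hG' : ∀ t ∈ Set.Ioc a η₀,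
        HasDerivWithinAt (fun _ : ℝ => ((0:ℝ), (0:ℝ)))
          (bbV (N:ℝ) γ α a η₀ t ((0:ℝ), (0:ℝ))) (Set.Iic t) t := by
      intro t ht
      have : bbV (N:ℝ) γ α a η₀ t ((0:ℝ), (0:ℝ)) = (0, 0) := by
        simp [bbV]
      rw [this]
      exact hasDerivWithinAt_const _ _ _
    have heq : (fun t => (f t, f' t)) η₀ = (fun _ : ℝ => ((0:ℝ), (0:ℝ))) η₀ := by
      simp [hfη, hf'η]
    have := ODE_solution_unique_of_mem_Icc_left (fun t _ => hK t) hFc hF'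
      (fun t _ => Set.mem_univ _)
      (continuousOn_const) hG' (fun t _ => Set.mem_univ _) heq
      (Set.left_mem_Icc.mpr ha.2.le)
    exact congrArg Prod.fst this
  -- contradiction with f 0 = 1
  have hlim : Filter.Tendsto f (nhdsWithin 0 (Set.Ioi 0)) (nhds 1) := by
    have := (hfc 0 Set.self_mem_Ici).mono (Set.Ioi_subset_Ici le_rfl)
    rw [ContinuousWithinAt, hf0] at this
    exact this
  have hlim0 : Filter.Tendsto f (nhdsWithin 0 (Set.Ioi 0)) (nhds 0) := by
    have hev : f =ᶠ[nhdsWithin 0 (Set.Ioi 0)] (fun _ => (0:ℝ)) := by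
      filter_upwards [Ioo_mem_nhdsGT_of_mem (Set.mem_Ico.mpr ⟨le_rfl, hη₀⟩)] with x hx
      exact key x hx
    exact Filter.Tendsto.congr' hev.symm tendsto_const_nhds
  have : (1:ℝ) = 0 := tendsto_nhds_unique hlim hlim0
  exact one_ne_zero this
end

section
/- Let J ⊆ (0,∞) be an interval and let h : (0,∞) × J → ℝ be continuous, such that for each α ∈ J the function f_α = h(·, α) is (the restriction to (0,∞) of) a Barenblatt profile with exponent α. Let r : J → (0,∞) be continuous with α·f_α(r(α)) + r(α)·f_α'(r(α)) = 0 for every α ∈ J. Then the function α ↦ f_α(r(α)) never vanishes on J; in particular it has constant sign on J (the paper's Lemma: the values of the profile at the roots η_m(α) of α f + η f' = 0 do not change sign as α varies). -/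
set_option maxHeartbeats 1000000 in
lemma barenblatt_aux (N : ℕ) (hN : 1 ≤ N) (γ α : ℝ) (hγ₁ : -1 < γ) (hγ₂ : γ < 1)
    (f f1 f2 : ℝ → ℝ) (hp : IsBarenblattProfile N γ α f f1 f2)
    (R : ℝ) (hR : 0 < R) (hf0 : f R = 0) (hf1R : f1 R = 0) : False := by
  obtain ⟨hd1, hc1, hd2, hinit, -, hode⟩ := hp
  have hNn : (0:ℝ) ≤ (N:ℝ) - 1 := by
    have : (1:ℝ) ≤ (N:ℝ) := by exact_mod_cast hN
    linarith
  have hγ : |γ| ≤ 1 := abs_le.2 ⟨hγ₁.le, hγ₂.le⟩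
  have hfd : ∀ t : ℝ, 0 < t → HasDerivAt f (f1 t) t := fun t ht =>
    (hd1 t ht.le).hasDerivAt (Ici_mem_nhds ht)
  have hfd2 : ∀ t : ℝ, 0 < t → HasDerivAt f1 (f2 t) t := fun t ht =>
    (hd2 t ht).hasDerivAt (Ioi_mem_nhds ht)
  have hzero : ∀ ε ∈ Set.Ioo (0:ℝ) R, f ε = 0 := by
    intro ε hεm
    obtain ⟨hε0, hεR⟩ := hεm
    set Kr : ℝ := 1 + |α| + R + ((N:ℝ)-1)/ε with hKrdef
    have hdivnn : 0 ≤ ((N:ℝ)-1)/ε := div_nonneg hNn hε0.le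
    have hKr0 : 0 ≤ Kr := by
      have := abs_nonneg α; simp only [hKrdef]; linarith
    set v : ℝ → ℝ × ℝ → ℝ × ℝ := fun t p =>
      (p.2, -(((N:ℝ)-1)/(max ε (min t R))) * p.2
        - (1/2) * (α * p.1 + (max ε (min t R)) * p.2)
        + (γ/2) * |α * p.1 + (max ε (min t R)) * p.2|) with hvdef
    have hlip : ∀ t : ℝ, LipschitzOnWith Kr.toNNReal (v t) Set.univ := by
      intro t
      refine LipschitzWith.lipschitzOnWith (LipschitzWith.of_dist_le_mul fun p q => ?_)
      have hcoe : (Kr.toNNReal : ℝ) = Kr := Real.coe_toNNReal _ hKr0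
      set s : ℝ := max ε (min t R) with hsdef
      have hsε : ε ≤ s := le_max_left _ _
      have hsR : s ≤ R := max_le hεR.le (min_le_right _ _)
      have hs0 : 0 < s := lt_of_lt_of_le hε0 hsε
      rw [hcoe, Prod.dist_eq, Prod.dist_eq]
      simp only [Real.dist_eq, hvdef]
      set D1 : ℝ := |p.1 - q.1| with hD1
      set D2 : ℝ := |p.2 - q.2| with hD2
      set d : ℝ := max D1 D2 with hd
      have hD1d : D1 ≤ d := le_max_left _ _
      have hD2d : D2 ≤ d := le_max_right _ _
      have hd0 : 0 ≤ d := le_trans (abs_nonneg _) hD1d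
      have hKr1 : 1 ≤ Kr := by simp only [hKrdef]; linarith [abs_nonneg α]
      apply max_le
      · exact hD2d.trans (le_mul_of_one_le_left hd0 hKr1)
      · set X : ℝ := α * p.1 + s * p.2 with hX
        set Y : ℝ := α * q.1 + s * q.2 with hY
        have hexpr : (-(((N:ℝ)-1)/s) * p.2 - 1/2 * (α * p.1 + s * p.2) + γ/2 * |α*p.1 + s*p.2|)
            - (-(((N:ℝ)-1)/s) * q.2 - 1/2 * (α * q.1 + s * q.2) + γ/2 * |α*q.1 + s*q.2|)
            = (-(((N:ℝ)-1)/s) * (p.2 - q.2) + (-(1/2)) * (X - Y)) + (γ/2) * (|X| - |Y|) := by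
          simp only [hX, hY]; ring
        rw [hexpr]
        have habs1 : |(-(((N:ℝ)-1)/s) * (p.2 - q.2) + (-(1/2)) * (X - Y)) + (γ/2) * (|X| - |Y|)|
            ≤ |(-(((N:ℝ)-1)/s)) * (p.2 - q.2)| + |(-(1/2)) * (X - Y)| + |(γ/2) * (|X| - |Y|)| :=
          le_trans (abs_add_le _ _) (by gcongr; exact abs_add_le _ _)
        have h1 : |(-(((N:ℝ)-1)/s)) * (p.2 - q.2)| = (((N:ℝ)-1)/s) * D2 := by
          rw [abs_mul, abs_neg, abs_of_nonneg (div_nonneg hNn hs0.le)]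
        have h2 : |(-(1/2 : ℝ)) * (X - Y)| = (1/2) * |X - Y| := by
          rw [abs_mul]; norm_num
        have h3 : |(γ/2) * (|X| - |Y|)| = (|γ|/2) * (abs (|X| - |Y|)) := by
          rw [abs_mul, abs_div]; norm_num
        have hXY : |X - Y| ≤ |α| * D1 + s * D2 := by
          have : X - Y = α * (p.1 - q.1) + s * (p.2 - q.2) := by simp only [hX, hY]; ring
          rw [this]
          refine le_trans (abs_add_le _ _) ?_
          rw [abs_mul, abs_mul, abs_of_nonneg hs0.le]
        have habsabs : (abs (|X| - |Y|)) ≤ |X - Y| := abs_abs_sub_abs_le_abs_sub X Y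
        have hdivle : ((N:ℝ)-1)/s ≤ ((N:ℝ)-1)/ε := by
          apply div_le_div_of_nonneg_left hNn hε0 hsε
        -- combine
        have e1 : (((N:ℝ)-1)/s) * D2 ≤ (((N:ℝ)-1)/ε) * d :=
          mul_le_mul hdivle hD2d (abs_nonneg _) hdivnn
        have e2 : |α| * D1 ≤ |α| * d := mul_le_mul_of_nonneg_left hD1d (abs_nonneg _)
        have e3 : s * D2 ≤ R * d := mul_le_mul hsR hD2d (abs_nonneg _) hR.le
        clear_value X Y D1 D2 d s
        have hXYd : |X - Y| ≤ |α| * d + R * d := by linarith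
        have e4 : (|γ|/2) * (abs (|X| - |Y|)) ≤ (1/2) * (|α| * d + R * d) := by
          have hb : (abs (|X| - |Y|)) ≤ |α| * d + R * d := le_trans habsabs hXYd
          have : (|γ|/2) * (abs (|X| - |Y|)) ≤ (1/2) * (abs (|X| - |Y|)) := by
            apply mul_le_mul_of_nonneg_right _ (abs_nonneg _)
            linarith
          nlinarith [abs_nonneg (|X| - |Y|)]
        rw [h1, h2, h3] at habs1
        have e5 : (1/2 : ℝ) * |X - Y| ≤ (1/2) * (|α| * d + R * d) := by linarith
        have : Kr * d = (((N:ℝ)-1)/ε) * d + |α| * d + R * d + d := by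
          simp only [hKrdef]; ring
        linarith
    have hclamp : ∀ t ∈ Set.Ioc ε R, max ε (min t R) = t := by
      intro t ht
      rw [min_eq_left ht.2, max_eq_right ht.1.le]
    have hcont : ContinuousOn (fun t => (f t, f1 t)) (Set.Icc ε R) := by
      apply continuousOn_of_forall_continuousAt
      intro t ht
      have ht0 : 0 < t := lt_of_lt_of_le hε0 ht.1
      exact (hfd t ht0).continuousAt.prodMk (hfd2 t ht0).continuousAt
    have hderivf : ∀ t ∈ Set.Ioc ε R,
        HasDerivWithinAt (fun t => (f t, f1 t)) (v t (f t, f1 t)) (Set.Iic t) t := by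
      intro t ht
      have ht0 : 0 < t := lt_trans hε0 ht.1
      have hveq : v t (f t, f1 t) = (f1 t, f2 t) := by
        simp only [hvdef, hclamp t ht]
        refine Prod.ext rfl ?_
        have := hode t ht0
        simp only
        linarith
      rw [hveq]
      exact ((hfd t ht0).prodMk (hfd2 t ht0)).hasDerivWithinAt
    have hderivg : ∀ t ∈ Set.Ioc ε R,
        HasDerivWithinAt (fun _ : ℝ => ((0:ℝ), (0:ℝ))) (v t ((0:ℝ),(0:ℝ))) (Set.Iic t) t := by
      intro t ht
      have : v t ((0:ℝ),(0:ℝ)) = ((0:ℝ),(0:ℝ)) := by simp [hvdef]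
      rw [this]
      exact (hasDerivAt_const _ _).hasDerivWithinAt
    have hb : (fun t => (f t, f1 t)) R = (fun _ : ℝ => ((0:ℝ),(0:ℝ))) R := by
      simp [hf0, hf1R]
    have hsol := ODE_solution_unique_of_mem_Icc_left (s := fun _ => Set.univ)
      (fun t _ => hlip t) hcont hderivf (fun _ _ => trivial) continuousOn_const hderivg
      (fun _ _ => trivial) hb
    have := hsol (Set.mem_Icc.mpr ⟨le_refl ε, hεR.le⟩)
    exact (Prod.mk.injEq _ _ _ _).mp this |>.1
  -- contradiction at 0
  have hcont0 : ContinuousWithinAt f (Set.Ici 0) 0 := (hd1 0 Set.self_mem_Ici).continuousWithinAt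
  have ht1 : Filter.Tendsto f (nhdsWithin 0 (Set.Ioi 0)) (nhds 1) := by
    rw [← hinit]
    exact hcont0.tendsto.mono_left (nhdsWithin_mono 0 Set.Ioi_subset_Ici_self)
  have ht2 : Filter.Tendsto f (nhdsWithin 0 (Set.Ioi 0)) (nhds 0) := by
    apply Filter.Tendsto.congr' _ tendsto_const_nhds
    filter_upwards [Ioo_mem_nhdsGT_of_mem (Set.mem_Ico.mpr ⟨le_rfl, hR⟩)] with x hx
    exact (hzero x hx).symm
  exact one_ne_zero (tendsto_nhds_unique ht1 ht2)

/-- The value of the Barenblatt profile at a continuously varying root `r(α)` of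
`α f + η f' = 0` never vanishes as `α` ranges over an interval `J ⊆ (0,∞)`;
in particular it has constant sign on `J`. -/
theorem barenblatt_value_at_root_constant_sign (N : ℕ) (hN : 1 ≤ N) (γ : ℝ)
    (hγ₁ : -1 < γ) (hγ₂ : γ < 1)
    (J : Set ℝ) (hJ : J.OrdConnected) (hJpos : J ⊆ Set.Ioi 0)
    (h : ℝ × ℝ → ℝ) (hcont : ContinuousOn h (Set.Ioi 0 ×ˢ J))
    (F F' F'' : ℝ → ℝ → ℝ)
    (hprof : ∀ α ∈ J, IsBarenblattProfile N γ α (F α) (F' α) (F'' α))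
    (hrep : ∀ α ∈ J, ∀ η : ℝ, 0 < η → h (η, α) = F α η)
    (r : ℝ → ℝ) (hr : ContinuousOn r J)
    (hrpos : ∀ α ∈ J, 0 < r α)
    (hroot : ∀ α ∈ J, α * F α (r α) + r α * F' α (r α) = 0) :
    (∀ α ∈ J, F α (r α) ≠ 0) ∧
    (∀ α ∈ J, ∀ β ∈ J, 0 < F α (r α) * F β (r β)) := by
  have part1 : ∀ α ∈ J, F α (r α) ≠ 0 := by
    intro α hα hFz
    have hR := hrpos α hα
    have hroot' := hroot α hα
    rw [hFz, mul_zero, zero_add] at hroot'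
    have hf1 : F' α (r α) = 0 := (mul_eq_zero.mp hroot').resolve_left (ne_of_gt hR)
    exact barenblatt_aux N hN γ α hγ₁ hγ₂ _ _ _ (hprof α hα) _ hR hFz hf1
  refine ⟨part1, ?_⟩
  set φ : ℝ → ℝ := fun α => h (r α, α) with hφdef
  have hφeq : ∀ α ∈ J, φ α = F α (r α) := fun α hα => hrep α hα (r α) (hrpos α hα)
  have hφcont : ContinuousOn φ J := by
    apply hcont.comp (hr.prodMk continuousOn_id)
    exact fun α hα => Set.mk_mem_prod (hrpos α hα) hα
  have hne : ∀ c ∈ J, φ c ≠ 0 := fun c hc => (hφeq c hc) ▸ part1 c hc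
  intro α hα β hβ
  rw [← hφeq α hα, ← hφeq β hβ]
  by_contra hle
  push_neg at hle
  have h0 : (0:ℝ) ∈ Set.uIcc (φ α) (φ β) := by
    rcases mul_nonpos_iff.mp hle with ⟨ha, hb⟩ | ⟨ha, hb⟩
    · exact Set.mem_uIcc.mpr (Or.inr ⟨hb, ha⟩)
    · exact Set.mem_uIcc.mpr (Or.inl ⟨ha, hb⟩)
  have hsub : Set.uIcc α β ⊆ J := hJ.uIcc_subset hα hβ
  obtain ⟨c, hc, hc0⟩ := intermediate_value_uIcc (hφcont.mono hsub) h0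
  exact hne c (hsub hc) hc0
end

section
/- Let N ≥ 1 be an integer, κ > 0, α > N − 2 with α > 0, and 0 < a < b. Let f be twice differentiable on an open interval containing [a,b] and satisfy f''(η) + ((N−1)/η)·f'(η) = −κ·(α·f(η) + η·f'(η)) for all η ∈ (a,b). Set F(η) = α·f(η) + η·f'(η), and assume F(a) = 0, F(b) = 0, and f(a)·F(η) < 0 for every η ∈ (a,b). Then f changes sign exactly once in (a,b): there is exactly one η* ∈ (a,b) with f(η*) = 0, and moreover f(a)·f(b) < 0. -/
theorem aux_pos (N : ℕ) (κ α : ℝ)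
    (hαN : (N : ℝ) - 2 < α) (hα : 0 < α)
    (a b c d : ℝ) (ha : 0 < a) (hab : a < b) (hca : c < a) (hbd : b < d)
    (f f' f'' : ℝ → ℝ)
    (hf : ∀ η ∈ Set.Ioo c d, HasDerivAt f (f' η) η ∧ HasDerivAt f' (f'' η) η)
    (hode : ∀ η ∈ Set.Ioo a b,
      f'' η + (((N : ℝ) - 1) / η) * f' η = -κ * (α * f η + η * f' η))
    (hFa : α * f a + a * f' a = 0)
    (hFb : α * f b + b * f' b = 0)
    (hfa : 0 < f a)
    (hF : ∀ η ∈ Set.Ioo a b, α * f η + η * f' η < 0) :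
    (∃ η₀ ∈ Set.Ioo a b, f η₀ = 0 ∧ ∀ η ∈ Set.Ioo a b, f η = 0 → η = η₀) ∧
    f a * f b < 0 := by
  have hsub : Set.Icc a b ⊆ Set.Ioo c d := fun x hx =>
    ⟨lt_of_lt_of_le hca hx.1, lt_of_le_of_lt hx.2 hbd⟩
  have hposIcc : ∀ x ∈ Set.Icc a b, 0 < x := fun x hx => lt_of_lt_of_le ha hx.1
  set F : ℝ → ℝ := fun η => α * f η + η * f' η with hFdef
  have hdf : ∀ x ∈ Set.Icc a b, HasDerivAt f (f' x) x := fun x hx => (hf x (hsub hx)).1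
  have hdf' : ∀ x ∈ Set.Icc a b, HasDerivAt f' (f'' x) x := fun x hx => (hf x (hsub hx)).2
  have hdF : ∀ x ∈ Set.Icc a b,
      HasDerivAt F (α * f' x + (1 * f' x + x * f'' x)) x := by
    intro x hx
    exact ((hdf x hx).const_mul α).add ((hasDerivAt_id x).mul (hdf' x hx))
  set g : ℝ → ℝ := fun η => η ^ α * f η with hgdef
  have hdg : ∀ x ∈ Set.Icc a b, HasDerivAt g (x ^ (α - 1) * F x) x := by
    intro x hx
    have hx0 : 0 < x := hposIcc x hx
    have h1 : HasDerivAt (fun η : ℝ => η ^ α) (α * x ^ (α - 1)) x :=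
      Real.hasDerivAt_rpow_const (Or.inl hx0.ne')
    have h2 := h1.mul (hdf x hx)
    refine HasDerivAt.congr_deriv (f := g) h2 ?_
    have hxa : x ^ α = x ^ (α - 1) * x := by
      rw [← Real.rpow_add_one hx0.ne']; ring_nf
    rw [hxa]; simp only [hFdef]; ring
  have hgcont : ContinuousOn g (Set.Icc a b) := fun x hx =>
    (hdg x hx).continuousAt.continuousWithinAt
  have hganti : StrictAntiOn g (Set.Icc a b) := by
    apply strictAntiOn_of_deriv_neg (convex_Icc a b) hgcont
    intro x hx
    rw [interior_Icc] at hx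
    rw [(hdg x (Set.Ioo_subset_Icc_self hx)).deriv]
    exact mul_neg_of_pos_of_neg
      (Real.rpow_pos_of_pos (hposIcc x (Set.Ioo_subset_Icc_self hx)) _) (hF x hx)
  have hga : 0 < g a := mul_pos (Real.rpow_pos_of_pos ha α) hfa
  have hfzero : ∀ x ∈ Set.Icc a b, f x = 0 → g x = 0 := by
    intro x hx h0; simp [hgdef, h0]
  -- key step : f b < 0
  have hfb : f b < 0 := by
    by_contra hcon
    push_neg at hcon
    have hgb : 0 ≤ g b := mul_nonneg (Real.rpow_pos_of_pos (ha.trans hab) α).le hcon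
    have hfpos : ∀ x ∈ Set.Ioo a b, 0 < f x := by
      intro x hx
      have h1 : g b < g x :=
        hganti (Set.Ioo_subset_Icc_self hx) (Set.right_mem_Icc.mpr hab.le) hx.2
      have hgx : 0 < g x := lt_of_le_of_lt hgb h1
      by_contra hfx
      push_neg at hfx
      have : g x ≤ 0 := mul_nonpos_of_nonneg_of_nonpos
        (Real.rpow_pos_of_pos (hposIcc x (Set.Ioo_subset_Icc_self hx)) α).le hfx
      linarith
    have hf'neg : ∀ x ∈ Set.Ioo a b, f' x < 0 := by
      intro x hx
      have hFx := hF x hx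
      have hfx := hfpos x hx
      have hx0 : 0 < x := hposIcc x (Set.Ioo_subset_Icc_self hx)
      nlinarith
    -- u = exp(κ η²/2) F
    set u : ℝ → ℝ := fun η => Real.exp (κ * η ^ 2 / 2) * F η with hudef
    have hdu : ∀ x ∈ Set.Icc a b, HasDerivAt u
        (Real.exp (κ * x ^ 2 / 2) * (κ * x) * F x
          + Real.exp (κ * x ^ 2 / 2) * (α * f' x + (1 * f' x + x * f'' x))) x := by
      intro x hx
      have he : HasDerivAt (fun η : ℝ => Real.exp (κ * η ^ 2 / 2))
          (Real.exp (κ * x ^ 2 / 2) * (κ * x)) x := by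
        have hq : HasDerivAt (fun η : ℝ => κ * η ^ 2 / 2) (κ * x) x := by
          have := ((hasDerivAt_pow 2 x).const_mul κ).div_const 2
          exact this.congr_deriv (by ring)
        exact (Real.hasDerivAt_exp _).comp x hq
      exact he.mul (hdF x hx)
    have huanti : StrictAntiOn u (Set.Icc a b) := by
      apply strictAntiOn_of_deriv_neg (convex_Icc a b)
        (fun x hx => (hdu x hx).continuousAt.continuousWithinAt)
      intro x hx
      rw [interior_Icc] at hx
      rw [(hdu x (Set.Ioo_subset_Icc_self hx)).deriv]
      have hx0 : 0 < x := hposIcc x (Set.Ioo_subset_Icc_self hx)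
      have hODE := hode x hx
      have hODE' : x * f'' x + ((N : ℝ) - 1) * f' x = -κ * x * F x := by
        have h2 : x * (f'' x + (((N : ℝ) - 1) / x) * f' x) = x * (-κ * F x) := by
          rw [hODE]
        field_simp at h2
        linarith
      have hexp : 0 < Real.exp (κ * x ^ 2 / 2) := Real.exp_pos _
      have key : Real.exp (κ * x ^ 2 / 2) * (κ * x) * F x
          + Real.exp (κ * x ^ 2 / 2) * (α * f' x + (1 * f' x + x * f'' x))
          = Real.exp (κ * x ^ 2 / 2) * ((α + 2 - (N : ℝ)) * f' x) := by
        have : α * f' x + (1 * f' x + x * f'' x)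
            = (α + 2 - (N : ℝ)) * f' x + (-κ * x * F x) := by linarith
        rw [this]; ring
      rw [key]
      have : (α + 2 - (N : ℝ)) * f' x < 0 :=
        mul_neg_of_pos_of_neg (by linarith) (hf'neg x hx)
      exact mul_neg_of_pos_of_neg hexp this
    have hua : u a = 0 := by simp [hudef, hFdef] at hFa ⊢; simp [hFa]
    have hub : u b = 0 := by simp [hudef, hFdef] at hFb ⊢; simp [hFb]
    have : u b < u a :=
      huanti (Set.left_mem_Icc.mpr hab.le) (Set.right_mem_Icc.mpr hab.le) hab
    rw [hua, hub] at this
    exact lt_irrefl 0 this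
  have hgb : g b < 0 :=
    mul_neg_of_pos_of_neg (Real.rpow_pos_of_pos (ha.trans hab) α) hfb
  -- existence via IVT
  have hiv := intermediate_value_Ioo' hab.le hgcont
  have h0mem : (0 : ℝ) ∈ Set.Ioo (g b) (g a) := ⟨hgb, hga⟩
  obtain ⟨η₀, hη₀, hgη₀⟩ := hiv h0mem
  have hfη₀ : f η₀ = 0 := by
    have hp : (0:ℝ) < η₀ ^ α :=
      Real.rpow_pos_of_pos (hposIcc η₀ (Set.Ioo_subset_Icc_self hη₀)) α
    have : η₀ ^ α * f η₀ = 0 := hgη₀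
    exact (mul_eq_zero.mp this).resolve_left hp.ne'
  refine ⟨⟨η₀, hη₀, hfη₀, ?_⟩, mul_neg_of_pos_of_neg hfa hfb⟩
  intro η hη hfη
  have hgη : g η = 0 := hfzero η (Set.Ioo_subset_Icc_self hη) hfη
  exact hganti.injOn (Set.Ioo_subset_Icc_self hη) (Set.Ioo_subset_Icc_self hη₀)
    (by rw [hgη, hgη₀])

/-- Sign-change lemma for a linear piece of the Barenblatt profile equation:
between two consecutive roots `a < b` of `F = α f + η f'`, where `F` keeps a
constant sign opposite to `f(a)`, the solution `f` of the linear ODE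
`f'' + ((N-1)/η) f' = -κ F` changes sign exactly once. -/
theorem sign_change_once_between_roots (N : ℕ) (hN : 1 ≤ N) (κ α : ℝ) (hκ : 0 < κ)
    (hαN : (N : ℝ) - 2 < α) (hα : 0 < α)
    (a b c d : ℝ) (ha : 0 < a) (hab : a < b) (hca : c < a) (hbd : b < d)
    (f f' f'' : ℝ → ℝ)
    (hf : ∀ η ∈ Set.Ioo c d, HasDerivAt f (f' η) η ∧ HasDerivAt f' (f'' η) η)
    (hode : ∀ η ∈ Set.Ioo a b,
      f'' η + (((N : ℝ) - 1) / η) * f' η = -κ * (α * f η + η * f' η))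
    (hFa : α * f a + a * f' a = 0)
    (hFb : α * f b + b * f' b = 0)
    (hsign : ∀ η ∈ Set.Ioo a b, f a * (α * f η + η * f' η) < 0) :
    (∃ η₀ ∈ Set.Ioo a b, f η₀ = 0 ∧ ∀ η ∈ Set.Ioo a b, f η = 0 → η = η₀) ∧
    f a * f b < 0 := by
  have hmid : (a + b) / 2 ∈ Set.Ioo a b := ⟨by linarith, by linarith⟩
  have hfa0 : f a ≠ 0 := by
    intro h
    have := hsign _ hmid
    rw [h] at this
    simp at this
  rcases hfa0.lt_or_gt with hneg | hpos
  · -- f a < 0 : apply aux_pos to -f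
    have hF : ∀ η ∈ Set.Ioo a b, α * (-f η) + η * (-f' η) < 0 := by
      intro η hη
      have := hsign η hη
      nlinarith
    have := aux_pos N κ α hαN hα a b c d ha hab hca hbd
      (fun x => -f x) (fun x => -f' x) (fun x => -f'' x)
      (fun η hη => ⟨(hf η hη).1.neg, (hf η hη).2.neg⟩)
      (fun η hη => by have := hode η hη; ring_nf; ring_nf at this; linarith)
      (by show α * -f a + a * -f' a = 0; linarith)
      (by show α * -f b + b * -f' b = 0; linarith)
      (by show (0:ℝ) < -f a; linarith) hF
    obtain ⟨⟨η₀, hη₀, h0, huniq⟩, hprod⟩ := this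
    refine ⟨⟨η₀, hη₀, by simpa using h0, fun η hη hfη => huniq η hη (by simp [hfη])⟩, ?_⟩
    simpa using hprod
  · -- f a > 0
    have hF : ∀ η ∈ Set.Ioo a b, α * f η + η * f' η < 0 := by
      intro η hη
      have := hsign η hη
      nlinarith
    exact aux_pos N κ α hαN hα a b c d ha hab hca hbd f f' f'' hf hode hFa hFb hpos hF
end

section
/- Let N ≥ 1 be an integer, κ > 0, α > N − 2 with α > 0, and a > 0. Let f be twice differentiable on [a,∞) and satisfy f''(η) + ((N−1)/η)·f'(η) = −κ·(α·f(η) + η·f'(η)) for all η > a. Set F(η) = α·f(η) + η·f'(η), and assume F(a) = 0, f(a)·F(η) < 0 for every η > a, and f(η) → 0, f'(η) → 0, f''(η) → 0 as η → ∞. Then f does not change sign on [a,∞): f(η)·f(a) > 0 for every η ≥ a. -/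
open Set Filter Real Topology

private lemma pow_cast_aux (N : ℕ) (hN : 1 ≤ N) (η : ℝ) (hη : η ≠ 0) :
    ((N - 1 : ℕ) : ℝ) * η ^ (N - 1 - 1) = η ^ (N - 1) * (((N : ℝ) - 1) / η) := by
  obtain ⟨m, rfl⟩ : ∃ m, N = m + 1 := ⟨N - 1, (Nat.succ_pred_eq_of_pos hN).symm⟩
  simp only [Nat.add_sub_cancel]
  cases m with
  | zero => simp
  | succ k =>
    simp only [Nat.add_sub_cancel]
    push_cast
    rw [pow_succ]
    field_simp
    ring

set_option maxHeartbeats 1000000 in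
private lemma aux_pos_s13 (N : ℕ) (hN : 1 ≤ N) (κ α : ℝ) (hκ : 0 < κ)
    (hαN : (N : ℝ) - 2 < α) (hα : 0 < α) (a : ℝ) (ha : 0 < a)
    (f f' f'' : ℝ → ℝ)
    (hf : ∀ η ∈ Set.Ici a, HasDerivWithinAt f (f' η) (Set.Ici a) η ∧
      HasDerivWithinAt f' (f'' η) (Set.Ici a) η)
    (hode : ∀ η : ℝ, a < η →
      f'' η + (((N : ℝ) - 1) / η) * f' η = -κ * (α * f η + η * f' η))
    (hF : ∀ η : ℝ, a < η → α * f η + η * f' η < 0)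
    (hf0 : Filter.Tendsto f Filter.atTop (nhds 0))
    (hfa : 0 < f a) :
    ∀ η : ℝ, a ≤ η → 0 < f η := by
  have hβ : 0 < α + 2 - (N : ℝ) := by linarith
  set h : ℝ → ℝ := fun η => η ^ (N - 1) * f' η with hh
  have hd_h : ∀ η ∈ Ici a, HasDerivWithinAt h
      (((N - 1 : ℕ) : ℝ) * η ^ (N - 1 - 1) * f' η + η ^ (N - 1) * f'' η) (Ici a) η :=
    fun η hη => (hasDerivWithinAt_pow (N - 1) η).mul (hf η hη).2
  have hDpos : ∀ η : ℝ, a < η →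
      0 < ((N - 1 : ℕ) : ℝ) * η ^ (N - 1 - 1) * f' η + η ^ (N - 1) * f'' η := by
    intro η hη
    have hηpos : 0 < η := ha.trans hη
    have e1 : ((N - 1 : ℕ) : ℝ) * η ^ (N - 1 - 1) * f' η + η ^ (N - 1) * f'' η
        = η ^ (N - 1) * (f'' η + ((N : ℝ) - 1) / η * f' η) := by
      rw [pow_cast_aux N hN η hηpos.ne']; ring
    rw [e1, hode η hη]
    have : 0 < -κ * (α * f η + η * f' η) := by nlinarith [hF η hη]
    exact mul_pos (pow_pos hηpos _) this
  have hmono : StrictMonoOn h (Ici a) := by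
    apply strictMonoOn_of_hasDerivWithinAt_pos
      (f' := fun η => ((N - 1 : ℕ) : ℝ) * η ^ (N - 1 - 1) * f' η + η ^ (N - 1) * f'' η)
      (convex_Ici a) (fun x hx => (hd_h x hx).continuousWithinAt)
    · rw [interior_Ici]
      exact fun x hx => (hd_h x (mem_Ici.mpr (le_of_lt (mem_Ioi.mp hx)))).mono Ioi_subset_Ici_self
    · rw [interior_Ici]
      exact fun x hx => hDpos x hx
  -- key claim: f' < 0 on (a, ∞)
  have hf'neg : ∀ η : ℝ, a < η → f' η < 0 := by
    by_contra hcon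
    push_neg at hcon
    obtain ⟨η₁, hη₁a, hη₁⟩ := hcon
    set η₂ := η₁ + 1 with hη₂def
    have hη₂a : a < η₂ := by linarith
    have hc : 0 < h η₂ := by
      have h1 : h η₁ < h η₂ := hmono (le_of_lt hη₁a) (le_of_lt hη₂a) (by linarith)
      have h0 : 0 ≤ h η₁ := mul_nonneg (pow_nonneg (by linarith) _) hη₁
      linarith
    have hf'pos : ∀ s : ℝ, η₂ ≤ s → 0 < f' s := by
      intro s hs
      have hsa : a < s := lt_of_lt_of_le hη₂a hs
      have h1 : h η₂ ≤ h s := hmono.monotoneOn (le_of_lt hη₂a) (le_of_lt hsa) hs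
      have hspos : 0 < s := ha.trans hsa
      have h2 : 0 < s ^ (N - 1) * f' s := lt_of_lt_of_le hc h1
      nlinarith [pow_pos hspos (N - 1)]
    set G : ℝ → ℝ := fun s => (α * f s + s * f' s) * Real.exp (κ / 2 * s ^ 2) with hG
    have hd_G : ∀ s : ℝ, a < s → HasDerivWithinAt G
        ((α + 2 - (N : ℝ)) * f' s * Real.exp (κ / 2 * s ^ 2)) (Ici a) s := by
      intro s hs
      have hs' : s ∈ Ici a := le_of_lt hs
      have hsne : s ≠ 0 := (ha.trans hs).ne'
      have e1 : HasDerivWithinAt (fun y => α * f y + y * f' y)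
          (α * f' s + (1 * f' s + s * f'' s)) (Ici a) s :=
        ((hf s hs').1.const_mul α).add ((hasDerivWithinAt_id s (Ici a)).mul (hf s hs').2)
      have e2 : HasDerivWithinAt (fun y : ℝ => Real.exp (κ / 2 * y ^ 2))
          (Real.exp (κ / 2 * s ^ 2) * (κ / 2 * ((2 : ℕ) * s ^ (2 - 1)))) (Ici a) s :=
        HasDerivWithinAt.exp ((hasDerivWithinAt_pow 2 s).const_mul (κ / 2))
      have e3 := e1.mul e2
      refine HasDerivWithinAt.congr_deriv e3 ?_
      have hode' := hode s hs
      have hffs : f'' s = -(((N : ℝ) - 1) / s) * f' s - κ * (α * f s + s * f' s) := by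
        linarith
      rw [hffs]
      push_cast
      field_simp
      ring
    have hGmono : MonotoneOn G (Ici η₂) := by
      apply monotoneOn_of_hasDerivWithinAt_nonneg
        (f' := fun s => (α + 2 - (N : ℝ)) * f' s * Real.exp (κ / 2 * s ^ 2))
        (convex_Ici η₂)
      · intro s hs
        exact ((hd_G s (lt_of_lt_of_le hη₂a hs)).continuousWithinAt).mono
          (Ici_subset_Ici.mpr (le_of_lt hη₂a))
      · rw [interior_Ici]
        intro s hs
        exact (hd_G s (lt_trans hη₂a hs)).mono
          (fun x hx => le_of_lt (lt_of_le_of_lt (le_of_lt hη₂a) hx))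
      · rw [interior_Ici]
        intro s hs
        have hfs : 0 ≤ f' s := (hf'pos s (le_of_lt hs)).le
        positivity
    have hGη₂neg : G η₂ < 0 := mul_neg_of_neg_of_pos (hF η₂ hη₂a) (exp_pos _)
    set M : ℝ := -G η₂ / (α + 2 - (N : ℝ)) with hMdef
    have hM : 0 < M := div_pos (neg_pos.mpr hGη₂neg) hβ
    -- Gaussian bound on -f
    have hgauss : ∀ η : ℝ, η₂ ≤ η → -f η ≤ M * Real.exp (-(κ / 2 * η ^ 2)) := by
      intro η hη
      have hηa : a < η := lt_of_lt_of_le hη₂a hη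
      have hηpos : 0 < η := ha.trans hηa
      set E : ℝ := Real.exp (-(κ / 2 * η ^ 2)) with hEdef
      have hE : 0 < E := exp_pos _
      set Φ : ℝ → ℝ := fun s => G s * (E / (α + 2 - (N : ℝ))) - f s with hΦ
      have hΦmono : MonotoneOn Φ (Ici η) := by
        apply monotoneOn_of_hasDerivWithinAt_nonneg
          (f' := fun s => ((α + 2 - (N : ℝ)) * f' s * Real.exp (κ / 2 * s ^ 2))
            * (E / (α + 2 - (N : ℝ))) - f' s)
          (convex_Ici η)
        · intro s hs
          have hsa : s ∈ Ici a := le_trans (le_of_lt hηa) hs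
          exact ((((hd_G s (lt_of_lt_of_le hηa hs)).mul_const _).sub
            (hf s hsa).1).continuousWithinAt).mono (Ici_subset_Ici.mpr (le_of_lt hηa))
        · rw [interior_Ici]
          intro s hs
          have hsa : a < s := lt_trans hηa hs
          exact (((hd_G s hsa).mul_const _).sub (hf s (le_of_lt hsa)).1).mono
            (fun x hx => le_of_lt (lt_of_le_of_lt (le_of_lt hηa) hx))
        · rw [interior_Ici]
          intro s hs
          have hsη : η ≤ s := le_of_lt hs
          have hf's : 0 ≤ f' s := (hf'pos s (le_trans hη hsη)).le
          have h1 : 1 ≤ Real.exp (κ / 2 * s ^ 2) * E := by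
            rw [hEdef, ← Real.exp_add]
            apply Real.one_le_exp
            nlinarith [pow_le_pow_left₀ (le_of_lt hηpos) hsη 2, hκ]
          have h2 : (α + 2 - (N : ℝ)) * f' s * Real.exp (κ / 2 * s ^ 2)
              * (E / (α + 2 - (N : ℝ))) = f' s * (Real.exp (κ / 2 * s ^ 2) * E) := by
            field_simp
          rw [h2]
          nlinarith [mul_le_mul_of_nonneg_left h1 hf's]
      have hev : ∀ᶠ T in atTop, f T ≤ f η + M * E := by
        filter_upwards [eventually_ge_atTop η] with T hT
        have h1 : Φ η ≤ Φ T := hΦmono self_mem_Ici hT hT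
        have hGT : G T < 0 :=
          mul_neg_of_neg_of_pos (hF T (lt_of_lt_of_le hηa hT)) (exp_pos _)
        have hGη : G η₂ ≤ G η := hGmono self_mem_Ici hη hη
        have h1' : G η * (E / (α + 2 - (N : ℝ))) - f η
            ≤ G T * (E / (α + 2 - (N : ℝ))) - f T := h1
        have hq : 0 < E / (α + 2 - (N : ℝ)) := div_pos hE hβ
        have h3 : (G T - G η) * (E / (α + 2 - (N : ℝ)))
            ≤ -G η₂ * (E / (α + 2 - (N : ℝ))) :=
          mul_le_mul_of_nonneg_right (by linarith) (le_of_lt hq)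
        have h4 : -G η₂ * (E / (α + 2 - (N : ℝ))) = M * E := by
          rw [hMdef]; ring
        nlinarith [h1', h3, h4]
      have h0le : (0 : ℝ) ≤ f η + M * E := le_of_tendsto hf0 hev
      linarith
    -- the bound tends to zero, contradiction with monotonicity of h
    have htend0 : Tendsto (fun x : ℝ => x ^ (N - 1) * Real.exp (-(κ / 2 * x)))
        atTop (𝓝 0) := by
      have hb : (0 : ℝ) < κ / 2 := by linarith
      have hlin : Tendsto (fun x : ℝ => κ / 2 * x) atTop atTop :=
        Tendsto.const_mul_atTop hb tendsto_id
      have hcomp : Tendsto (fun x : ℝ => (κ / 2 * x) ^ (N - 1) * Real.exp (-(κ / 2 * x)))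
          atTop (𝓝 0) :=
        (tendsto_pow_mul_exp_neg_atTop_nhds_zero (N - 1)).comp hlin
      have h1 : (2 / κ) ^ (N - 1) * (κ / 2) ^ (N - 1) = 1 := by
        rw [← mul_pow, show (2 / κ) * (κ / 2) = 1 from by field_simp, one_pow]
      have := hcomp.const_mul ((2 / κ) ^ (N - 1))
      rw [mul_zero] at this
      apply this.congr
      intro x
      calc (2 / κ) ^ (N - 1) * ((κ / 2 * x) ^ (N - 1) * Real.exp (-(κ / 2 * x)))
          = ((2 / κ) ^ (N - 1) * (κ / 2) ^ (N - 1))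
            * (x ^ (N - 1) * Real.exp (-(κ / 2 * x))) := by rw [mul_pow]; ring
        _ = x ^ (N - 1) * Real.exp (-(κ / 2 * x)) := by rw [h1, one_mul]
    have htend : Tendsto (fun x : ℝ => x ^ (N - 1) * Real.exp (-(κ / 2 * x ^ 2)) * (α * M))
        atTop (𝓝 0) := by
      have hsq : Tendsto (fun x : ℝ => x ^ (N - 1) * Real.exp (-(κ / 2 * x ^ 2)))
          atTop (𝓝 0) := by
        apply tendsto_of_tendsto_of_tendsto_of_le_of_le' tendsto_const_nhds htend0
        · filter_upwards [eventually_ge_atTop (0 : ℝ)] with x hx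
          positivity
        · filter_upwards [eventually_ge_atTop (1 : ℝ)] with x hx
          have h1 : Real.exp (-(κ / 2 * x ^ 2)) ≤ Real.exp (-(κ / 2 * x)) := by
            apply Real.exp_le_exp.mpr
            nlinarith [mul_nonneg (by linarith : (0:ℝ) ≤ κ / 2)
              (by nlinarith : (0:ℝ) ≤ x ^ 2 - x)]
          exact mul_le_mul_of_nonneg_left h1 (pow_nonneg (by linarith) _)
      have := hsq.mul_const (α * M)
      rwa [zero_mul] at this
    have hev2 : ∀ᶠ x in atTop,
        x ^ (N - 1) * Real.exp (-(κ / 2 * x ^ 2)) * (α * M) < h η₂ :=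
      htend.eventually_lt_const hc
    obtain ⟨η, hη1, hηη₂, hηbd⟩ :=
      ((eventually_ge_atTop (1 : ℝ)).and ((eventually_ge_atTop η₂).and hev2)).exists
    have hηa : a < η := lt_of_lt_of_le hη₂a hηη₂
    have hηpos : 0 < η := ha.trans hηa
    have hcle : h η₂ ≤ h η := hmono.monotoneOn (le_of_lt hη₂a) (le_of_lt hηa) hηη₂
    have hFη := hF η hηa
    have hgb := hgauss η hηη₂
    have hf'η := hf'pos η hηη₂
    have h5 : η * f' η ≤ α * (M * Real.exp (-(κ / 2 * η ^ 2))) := by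
      nlinarith [mul_le_mul_of_nonneg_left hgb (le_of_lt hα)]
    have h6 : f' η ≤ α * M * Real.exp (-(κ / 2 * η ^ 2)) := by nlinarith
    have h7 : h η ≤ η ^ (N - 1) * Real.exp (-(κ / 2 * η ^ 2)) * (α * M) := by
      have h8 := mul_le_mul_of_nonneg_left h6 (pow_nonneg (le_of_lt hηpos) (N - 1))
      calc h η = η ^ (N - 1) * f' η := rfl
        _ ≤ η ^ (N - 1) * (α * M * Real.exp (-(κ / 2 * η ^ 2))) := h8
        _ = η ^ (N - 1) * Real.exp (-(κ / 2 * η ^ 2)) * (α * M) := by ring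
    linarith
  -- conclude: f strictly decreasing, tends to 0, hence positive
  have hanti : StrictAntiOn f (Ici a) := by
    apply strictAntiOn_of_hasDerivWithinAt_neg (f' := f') (convex_Ici a)
      (fun x hx => (hf x hx).1.continuousWithinAt)
    · rw [interior_Ici]
      exact fun x hx => ((hf x (mem_Ici.mpr (le_of_lt (mem_Ioi.mp hx)))).1).mono Ioi_subset_Ici_self
    · rw [interior_Ici]
      exact fun x hx => hf'neg x hx
  have hnn : ∀ t : ℝ, a < t → 0 ≤ f t := by
    intro t ht
    by_contra hneg
    push_neg at hneg
    have h1 : f (t + 1) < f t := hanti (le_of_lt ht) (by simp only [mem_Ici]; linarith)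
      (by linarith)
    have hev1 : ∀ᶠ T in atTop, f T ≤ f (t + 1) := by
      filter_upwards [eventually_ge_atTop (t + 1)] with T hT
      rcases eq_or_lt_of_le hT with rfl | hlt
      · exact le_rfl
      · exact (hanti (by simp only [mem_Ici]; linarith) (by simp only [mem_Ici]; linarith)
          hlt).le
    have hev2 : ∀ᶠ T in atTop, f (t + 1) < f T :=
      hf0.eventually (eventually_gt_nhds (by linarith : f (t + 1) < (0 : ℝ)))
    obtain ⟨T, hT1, hT2⟩ := (hev1.and hev2).exists
    linarith
  intro η hη
  exact lt_of_le_of_lt (hnn (η + 1) (by linarith))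
    (hanti hη (by simp only [mem_Ici]; linarith) (by linarith))

/-- No-sign-change lemma for the last linear piece of the Barenblatt profile
equation: beyond the largest root `a` of `F = α f + η f' = 0`, if `F` keeps a
constant sign opposite to `f(a)` and `f, f', f''` tend to `0` at infinity, then
the solution `f` of the linear ODE `f'' + ((N-1)/η) f' = -κ F` on `[a,∞)`
does not change sign. -/
theorem no_sign_change_on_last_piece (N : ℕ) (hN : 1 ≤ N) (κ α : ℝ) (hκ : 0 < κ)
    (hαN : (N : ℝ) - 2 < α) (hα : 0 < α) (a : ℝ) (ha : 0 < a)
    (f f' f'' : ℝ → ℝ)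
    (hf : ∀ η ∈ Set.Ici a, HasDerivWithinAt f (f' η) (Set.Ici a) η ∧
      HasDerivWithinAt f' (f'' η) (Set.Ici a) η)
    (hode : ∀ η : ℝ, a < η →
      f'' η + (((N : ℝ) - 1) / η) * f' η = -κ * (α * f η + η * f' η))
    (hFa : α * f a + a * f' a = 0)
    (hsign : ∀ η : ℝ, a < η → f a * (α * f η + η * f' η) < 0)
    (hf0 : Filter.Tendsto f Filter.atTop (nhds 0))
    (hf'0 : Filter.Tendsto f' Filter.atTop (nhds 0))
    (hf''0 : Filter.Tendsto f'' Filter.atTop (nhds 0)) :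
    ∀ η : ℝ, a ≤ η → 0 < f η * f a := by
  have hne : f a ≠ 0 := by
    intro h0
    have := hsign (a + 1) (by linarith)
    rw [h0] at this
    simp at this
  rcases hne.lt_or_gt with hneg | hpos
  · -- f a < 0 : apply the positive case to -f
    have key := aux_pos_s13 N hN κ α hκ hαN hα a ha
      (fun x => -f x) (fun x => -f' x) (fun x => -f'' x)
      (fun η hη => ⟨((hf η hη).1).neg, ((hf η hη).2).neg⟩)
      (fun η hη => by linear_combination (-1 : ℝ) * hode η hη)
      (fun η hη => by
        have h := hsign η hη
        show α * (-f η) + η * (-f' η) < 0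
        nlinarith)
      (by simpa using hf0.neg)
      (by simpa using hneg)
    intro η hη
    have h1 := key η hη
    simp only [neg_pos] at h1 ⊢
    nlinarith
  · have key := aux_pos_s13 N hN κ α hκ hαN hα a ha f f' f'' hf hode
      (fun η hη => by nlinarith [hsign η hη])
      hf0 hpos
    intro η hη
    exact mul_pos (key η hη) hpos
end

section
/- Let f be a Barenblatt profile with exponent α > N − 2. Suppose F(η) = α·f(η) + η·f'(η) has exactly n ≥ 1 zeros η_1 < η_2 < ⋯ < η_n in (0,∞), and that F alternates sign between consecutive roots: with η_0 = 0, the sign of F on (η_{m−1}, η_m) is (−1)^{m+1} for m = 1,…,n. Then (−1)^{m+1}·f(η_m) > 0 for every m = 1,…,n; in particular f(η_m)·f(η_{m+1}) < 0 for m = 1,…,n−1. -/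
lemma barenblatt_core (N : ℕ) (γ α : ℝ)
    (hγ₁ : -1 < γ) (hγ₂ : γ < 1) (hα : 0 < α) (hαN : (N : ℝ) - 2 < α)
    (f f' f'' : ℝ → ℝ) (hf : IsBarenblattProfile N γ α f f' f'')
    (a b s : ℝ) (ha : 0 ≤ a) (hab : a < b) (hs : s = 1 ∨ s = -1)
    (hFb : α * f b + b * f' b = 0)
    (hF : ∀ η ∈ Set.Ioo a b, 0 < s * (α * f η + η * f' η)) :
    0 < s * f b := by
  obtain ⟨hfderiv, hf'cont, hf'deriv, hf0, hf'0, hode⟩ := hf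
  have hb : 0 < b := lt_of_le_of_lt ha hab
  have hs2 : s * s = 1 := by rcases hs with rfl | rfl <;> norm_num
  have hfc : ContinuousOn f (Set.Ici 0) := fun x hx =>
    (hfderiv x hx).continuousWithinAt
  have hfd : ∀ x : ℝ, 0 < x → HasDerivAt f (f' x) x := fun x hx =>
    (hfderiv x hx.le).hasDerivAt (Ici_mem_nhds hx)
  have hf'd : ∀ x : ℝ, 0 < x → HasDerivAt f' (f'' x) x := fun x hx =>
    (hf'deriv x hx).hasDerivAt (Ioi_mem_nhds hx)
  have habs : ∀ t : ℝ, 0 < s * t → |t| = s * t := by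
    intro t ht
    rcases hs with rfl | rfl
    · rw [abs_of_pos (by linarith)]; ring
    · rw [abs_of_neg (by nlinarith)]; ring
  by_contra hcon
  push_neg at hcon
  have hsub : Set.Icc a b ⊆ Set.Ici (0:ℝ) := fun x hx => le_trans ha hx.1
  -- Step A : s * f < 0 on (a,b)
  set g : ℝ → ℝ := fun x => s * (x ^ α * f x) with hg_def
  have hgd : ∀ x ∈ Set.Ioo a b,
      HasDerivAt g (x ^ (α - 1) * (s * (α * f x + x * f' x))) x := by
    intro x hx
    have hx0 : 0 < x := lt_of_le_of_lt ha hx.1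
    have h1 := ((Real.hasDerivAt_rpow_const (p := α) (Or.inl hx0.ne')).mul
      (hfd x hx0)).const_mul s
    refine h1.congr_deriv ?_
    have hxa : x ^ α = x ^ (α - 1) * x := by
      rw [← Real.rpow_add_one hx0.ne']; ring_nf
    rw [hxa]; ring
  have hgmono : StrictMonoOn g (Set.Icc a b) := by
    apply strictMonoOn_of_deriv_pos (convex_Icc a b)
    · apply ContinuousOn.mul continuousOn_const
      exact ContinuousOn.mul
        (fun x hx => (Real.continuousAt_rpow_const x α (Or.inr hα.le)).continuousWithinAt)
        (hfc.mono hsub)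
    · intro x hx
      rw [interior_Icc] at hx
      rw [(hgd x hx).deriv]
      have hx0 : 0 < x := lt_of_le_of_lt ha hx.1
      exact mul_pos (Real.rpow_pos_of_pos hx0 _) (hF x hx)
  have hfneg : ∀ η ∈ Set.Ioo a b, s * f η < 0 := by
    intro η hη
    have hη0 : 0 < η := lt_of_le_of_lt ha hη.1
    have h1 : g η < g b :=
      hgmono ⟨hη.1.le, hη.2.le⟩ ⟨hab.le, le_refl b⟩ hη.2
    have h2 : g b ≤ 0 := by
      have hbpow : 0 < b ^ α := Real.rpow_pos_of_pos hb α
      have : g b = b ^ α * (s * f b) := by simp [hg_def]; ring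
      rw [this]
      exact mul_nonpos_of_nonneg_of_nonpos hbpow.le hcon
    have hpow : 0 < η ^ α := Real.rpow_pos_of_pos hη0 α
    have h3 : η ^ α * (s * f η) < 0 := by
      have : g η = η ^ α * (s * f η) := by simp [hg_def]; ring
      linarith [this ▸ (lt_of_lt_of_le h1 h2)]
    nlinarith
  have hf'pos : ∀ η ∈ Set.Ioo a b, 0 < s * f' η := by
    intro η hη
    have hη0 : 0 < η := lt_of_le_of_lt ha hη.1
    have h1 := hF η hη
    have h2 := hfneg η hη
    nlinarith
  -- Step B : monotone auxiliary function
  set κ : ℝ := (1 - γ * s) / 2 with hκ_def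
  have hκ : 0 < κ := by rcases hs with rfl | rfl <;> simp [hκ_def] <;> linarith
  set E : ℝ → ℝ := fun x => Real.exp (κ * x ^ 2 / 2) with hE_def
  set h : ℝ → ℝ := fun x => s * (α * f x + x * f' x) * E x with hh_def
  have hEd : ∀ x : ℝ, HasDerivAt E (κ * x * E x) x := by
    intro x
    have hu : HasDerivAt (fun x : ℝ => κ * x ^ 2 / 2) (κ * x) x := by
      have := ((hasDerivAt_pow 2 x).const_mul κ).div_const 2
      simpa using this.congr_deriv (by ring)
    simpa [hE_def, mul_comm] using hu.exp
  have hhd : ∀ x ∈ Set.Ioo a b,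
      HasDerivAt h ((α + 2 - N) * (s * f' x) * E x) x := by
    intro x hx
    have hx0 : 0 < x := lt_of_le_of_lt ha hx.1
    have hFd : HasDerivAt (fun y => s * (α * f y + y * f' y))
        (s * ((α + 1) * f' x + x * f'' x)) x := by
      have h0 := (((hfd x hx0).const_mul α).add
        ((hasDerivAt_id x).mul (hf'd x hx0))).const_mul s
      simp only [id_eq] at h0
      exact h0.congr_deriv (by ring)
    have h1 := hode x hx0
    rw [habs _ (hF x hx)] at h1
    have h2 : x * f'' x + ((N:ℝ) - 1) * f' x
        = x * (-(1/2) * (α * f x + x * f' x) + γ/2 * (s * (α * f x + x * f' x))) := by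
      have h3 := congrArg (fun t => x * t) h1
      field_simp at h3 ⊢
      linarith
    have := hFd.mul (hEd x)
    refine this.congr_deriv ?_
    have hEx : E x = Real.exp (κ * x ^ 2 / 2) := rfl
    simp only [hκ_def]
    linear_combination (s * E x) * h2
  have hhmono : StrictMonoOn h (Set.Icc a b) := by
    apply strictMonoOn_of_deriv_pos (convex_Icc a b)
    · apply ContinuousOn.mul
      · apply ContinuousOn.mul continuousOn_const
        exact ((continuousOn_const.mul (hfc.mono hsub)).add
          (continuousOn_id.mul (hf'cont.mono hsub)))
      · exact (Real.continuous_exp.comp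
          ((continuous_const.mul (continuous_pow 2)).div_const 2)).continuousOn
    · intro x hx
      rw [interior_Icc] at hx
      rw [(hhd x hx).deriv]
      have h1 : 0 < α + 2 - N := by linarith
      exact mul_pos (mul_pos h1 (hf'pos x hx)) (Real.exp_pos _)
  have hmid : (a + b) / 2 ∈ Set.Ioo a b := ⟨by linarith, by linarith⟩
  have h1 : h ((a+b)/2) < h b :=
    hhmono ⟨hmid.1.le, hmid.2.le⟩ ⟨hab.le, le_refl b⟩ hmid.2
  have h2 : h b = 0 := by simp [hh_def, hFb]
  have h3 : 0 < h ((a+b)/2) := mul_pos (hF _ hmid) (Real.exp_pos _)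
  linarith

/-- If `F = α f + η f'` has exactly `n` positive zeros `ηs 1 < ⋯ < ηs n`
(with `ηs 0 = 0`) and alternates sign, with sign `(-1)^(m+1)` on
`(ηs (m-1), ηs m)`, then the profile satisfies `(-1)^(m+1) f(ηs m) > 0` for
each `m = 1,…,n`; in particular `f(ηs m) f(ηs (m+1)) < 0`. -/
theorem barenblatt_sign_at_roots (N : ℕ) (hN : 1 ≤ N) (γ α : ℝ)
    (hγ₁ : -1 < γ) (hγ₂ : γ < 1) (hα : 0 < α) (hαN : (N : ℝ) - 2 < α)
    (f f' f'' : ℝ → ℝ) (hf : IsBarenblattProfile N γ α f f' f'')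
    (n : ℕ) (hn : 1 ≤ n) (ηs : ℕ → ℝ) (h0 : ηs 0 = 0)
    (hmono : ∀ m : ℕ, m < n → ηs m < ηs (m + 1))
    (hroots : ∀ η : ℝ, 0 < η →
      (α * f η + η * f' η = 0 ↔ ∃ m : ℕ, 1 ≤ m ∧ m ≤ n ∧ η = ηs m))
    (halt : ∀ m : ℕ, 1 ≤ m → m ≤ n → ∀ η ∈ Set.Ioo (ηs (m - 1)) (ηs m),
      0 < (-1 : ℝ) ^ (m + 1) * (α * f η + η * f' η)) :
    (∀ m : ℕ, 1 ≤ m → m ≤ n → 0 < (-1 : ℝ) ^ (m + 1) * f (ηs m)) ∧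
    (∀ m : ℕ, 1 ≤ m → m + 1 ≤ n → f (ηs m) * f (ηs (m + 1)) < 0) := by
  have hnn : ∀ m : ℕ, m ≤ n → 0 ≤ ηs m := by
    intro m
    induction m with
    | zero => intro _; rw [h0]
    | succ k ih =>
      intro hk
      have hk' : k < n := Nat.lt_of_succ_le hk
      exact le_of_lt (lt_of_le_of_lt (ih (le_of_lt hk')) (hmono k hk'))
  have main : ∀ m : ℕ, 1 ≤ m → m ≤ n → 0 < (-1:ℝ)^(m+1) * f (ηs m) := by
    intro m hm1 hm2
    have hmlt : m - 1 < n := by omega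
    have hab : ηs (m-1) < ηs m := by
      have := hmono (m-1) hmlt
      rwa [Nat.sub_add_cancel hm1] at this
    have ha : 0 ≤ ηs (m-1) := hnn _ (by omega)
    have hbpos : 0 < ηs m := lt_of_le_of_lt ha hab
    have hFb : α * f (ηs m) + ηs m * f' (ηs m) = 0 :=
      (hroots (ηs m) hbpos).mpr ⟨m, hm1, hm2, rfl⟩
    have hssign : ((-1:ℝ)^(m+1)) = 1 ∨ ((-1:ℝ)^(m+1)) = -1 := by
      rcases Nat.even_or_odd (m+1) with h | h
      · exact Or.inl h.neg_one_pow
      · exact Or.inr h.neg_one_pow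
    exact barenblatt_core N γ α hγ₁ hγ₂ hα hαN f f' f'' hf (ηs (m-1)) (ηs m) _
      ha hab hssign hFb (halt m hm1 hm2)
  refine ⟨main, ?_⟩
  intro m hm1 hm2
  have h1 := main m hm1 (by omega)
  have h2 := main (m+1) (by omega) hm2
  rcases Nat.even_or_odd m with hev | hod
  · have e1 : ((-1:ℝ))^(m+1) = -1 := (Even.add_one hev).neg_one_pow
    have e2 : ((-1:ℝ))^(m+1+1) = 1 := by
      rcases hev with ⟨k, hk⟩
      exact Even.neg_one_pow ⟨k+1, by omega⟩
    rw [e1] at h1; rw [e2] at h2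
    exact mul_neg_of_neg_of_pos (by linarith) (by linarith)
  · have e1 : ((-1:ℝ))^(m+1) = 1 := (Odd.add_one hod).neg_one_pow
    have e2 : ((-1:ℝ))^(m+1+1) = -1 := by
      rcases hod with ⟨k, hk⟩
      exact Odd.neg_one_pow ⟨k+1, by omega⟩
    rw [e1] at h1; rw [e2] at h2
    exact mul_neg_of_pos_of_neg (by linarith) (by linarith)
end
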